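/- arXiv:1601.03322 — 8 statements merged into one kernel-verified Lean document; each statement's English description precedes it below -/
import Mathlib

section
/- Let q be a prime power, n ≥ 1, and let S be an F_q-bilinear multiplication on F_{q^n}. Then the rank of the matrix M(S) equals the minimum natural number r for which there exist F_q-linear maps u_1, …, u_r, v_1, …, v_r : F_{q^n} → F_{q^n} with S(x,y) = Σ_{i=1}^{r} u_i(x)·v_i(y) for all x, y ∈ F_{q^n} (the product on the right being multiplication in F_{q^n}). -/
/-- `M` is the matrix of the multiplication `S`, i.e. `S x y = ∑_{i,j} M i j * x^{q^i} * y^{q^j}`. -/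
def IsMatrixOf (q n : ℕ) (K : Type) [Field K]
    (S : K → K → K) (M : Matrix (Fin n) (Fin n) K) : Prop :=
  ∀ x y : K, S x y = ∑ i : Fin n, ∑ j : Fin n, M i j * x ^ q ^ (i : ℕ) * y ^ q ^ (j : ℕ)

open Finset Polynomial

/-- The power maps `x ↦ x ^ q ^ i`, `i < n`, are pairwise distinct monoid
homomorphisms of a finite field `K` with `q ^ n` elements. -/
private lemma frob_inj {K : Type} [Field K] [Fintype K] {q n : ℕ} (hq : 2 ≤ q)
    (hcK : Fintype.card K = q ^ n) :
    Function.Injective (fun i : Fin n => (powMonoidHom (q ^ (i : ℕ)) : K →* K)) := by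
  intro i j hij
  by_contra hne
  have hne' : (i : ℕ) ≠ (j : ℕ) := fun h => hne (Fin.ext h)
  wlog hlt : (i : ℕ) < (j : ℕ) generalizing i j
  · exact this hij.symm (Ne.symm hne) (Ne.symm hne') (by omega)
  have hall : ∀ x : K, x ^ q ^ (i : ℕ) = x ^ q ^ (j : ℕ) := fun x => by
    simpa [powMonoidHom] using DFunLike.congr_fun hij x
  have hij' : q ^ (i : ℕ) < q ^ (j : ℕ) := Nat.pow_lt_pow_right hq hlt
  set P : K[X] := X ^ q ^ (j : ℕ) - X ^ q ^ (i : ℕ) with hP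
  have hdeg : P.natDegree = q ^ (j : ℕ) := by
    rw [hP, natDegree_sub_eq_left_of_natDegree_lt] <;> simp [natDegree_X_pow, hij']
  have hP0 : P ≠ 0 := by
    intro h
    rw [h, natDegree_zero] at hdeg
    have : 0 < q ^ (j : ℕ) := lt_of_le_of_lt (Nat.zero_le _) hij'
    omega
  have hsub : (Finset.univ : Finset K).val ⊆ P.roots := by
    intro x _
    exact mem_roots'.mpr ⟨hP0, by simp [IsRoot, hP, hall x]⟩
  have hcard := Polynomial.card_le_degree_of_subset_roots hsub
  rw [hdeg, Finset.card_univ, hcK] at hcard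
  exact absurd hcard (not_le.mpr (Nat.pow_lt_pow_right hq j.isLt))

/-- The functions `x ↦ x ^ q ^ i`, `i < n`, are linearly independent over `K`;
equivalently a vanishing linearized polynomial has vanishing coefficients. -/
private lemma coeffs_eq_zero {K : Type} [Field K] [Fintype K] {q n : ℕ} (hq : 2 ≤ q)
    (hcK : Fintype.card K = q ^ n) (c : Fin n → K)
    (h : ∀ x : K, ∑ i : Fin n, c i * x ^ q ^ (i : ℕ) = 0) : c = 0 := by
  have hli : LinearIndependent K
      (fun i : Fin n => ((powMonoidHom (q ^ (i : ℕ)) : K →* K) : K → K)) :=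
    (linearIndependent_monoidHom K K).comp _ (frob_inj hq hcK)
  funext i
  refine Fintype.linearIndependent_iff.mp hli c ?_ i
  funext x
  simpa [powMonoidHom] using h x

/-- Two-variable version: a vanishing bilinear linearized polynomial has vanishing
coefficient matrix. -/
private lemma matrix_coeffs_eq_zero {K : Type} [Field K] [Fintype K] {q n : ℕ} (hq : 2 ≤ q)
    (hcK : Fintype.card K = q ^ n) (C : Matrix (Fin n) (Fin n) K)
    (h : ∀ x y : K, ∑ i : Fin n, ∑ j : Fin n,
      C i j * x ^ q ^ (i : ℕ) * y ^ q ^ (j : ℕ) = 0) : C = 0 := by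
  have h1 : ∀ y : K, ∀ i, ∑ j : Fin n, C i j * y ^ q ^ (j : ℕ) = 0 := by
    intro y i
    have hc := coeffs_eq_zero hq hcK (fun i => ∑ j : Fin n, C i j * y ^ q ^ (j : ℕ)) ?_
    · exact congrFun hc i
    · intro x
      rw [← h x y]
      refine Finset.sum_congr rfl fun i _ => ?_
      rw [Finset.sum_mul]
      exact Finset.sum_congr rfl fun j _ => by ring
  ext i j
  have hc := coeffs_eq_zero hq hcK (fun j => C i j) (fun y => h1 y i)
  simpa using congrFun hc j

/-- Existence of the Frobenius-power linear maps `x ↦ x ^ q ^ m`. -/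
private lemma exists_frobLM (q : ℕ) (hq : IsPrimePow q) (F K : Type) [Field F] [Field K]
    [Algebra F K] [Fintype F] (hcF : Fintype.card F = q) (m : ℕ) :
    ∃ f : K →ₗ[F] K, ∀ x, f x = x ^ q ^ m := by
  obtain ⟨p, e, pp, he, rfl⟩ := hq
  have hpP : p.Prime := Nat.prime_iff.mpr pp
  haveI : Fact p.Prime := ⟨hpP⟩
  obtain ⟨n', hp', hcard⟩ := FiniteField.card F (ringChar F)
  have hpe : p = ringChar F := by
    have h1 : p ∣ ringChar F ^ (n' : ℕ) := by
      rw [← hcard, hcF]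
      exact dvd_pow_self p he.ne'
    exact (Nat.prime_dvd_prime_iff_eq hpP hp').mp (hpP.dvd_of_dvd_pow h1)
  haveI : CharP F p := hpe ▸ ringChar.charP F
  haveI : CharP K p := charP_of_injective_algebraMap (algebraMap F K).injective p
  have hqm : (p ^ e) ^ m = p ^ (e * m) := (pow_mul p e m).symm
  refine ⟨⟨⟨fun x => x ^ (p ^ e) ^ m, fun x y => ?_⟩, fun c x => ?_⟩, fun x => rfl⟩
  · show (x + y) ^ (p ^ e) ^ m = x ^ (p ^ e) ^ m + y ^ (p ^ e) ^ m
    rw [hqm]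
    exact add_pow_char_pow ..
  · show (c • x) ^ (p ^ e) ^ m = (RingHom.id F) c • x ^ (p ^ e) ^ m
    have hc : c ^ (p ^ e) ^ m = c := by
      have h := FiniteField.pow_card_pow (K := F) m c
      rwa [hcF] at h
    rw [RingHom.id_apply, Algebra.smul_def, Algebra.smul_def, mul_pow, ← map_pow, hc]

/-- Existence of a linear map given by a linearized polynomial with prescribed
coefficients. -/
private lemma exists_linPoly (q : ℕ) (hq : IsPrimePow q) (F K : Type) [Field F] [Field K]
    [Algebra F K] [Fintype F] (hcF : Fintype.card F = q) {n : ℕ} (a : Fin n → K) :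
    ∃ f : K →ₗ[F] K, ∀ x, f x = ∑ i : Fin n, a i * x ^ q ^ (i : ℕ) := by
  choose frob hfrob using fun i : Fin n => exists_frobLM q hq F K hcF (i : ℕ)
  refine ⟨∑ i, a i • frob i, fun x => ?_⟩
  simp [LinearMap.sum_apply, hfrob]

/-- Every `F`-linear map of `K` is a linearized polynomial. -/
private lemma exists_coeffs (q n : ℕ) (hq : IsPrimePow q) (F K : Type) [Field F] [Field K]
    [Algebra F K] [Fintype F] [Fintype K] (hcF : Fintype.card F = q)
    (hcK : Fintype.card K = q ^ n) (f : K →ₗ[F] K) :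
    ∃ a : Fin n → K, ∀ x, f x = ∑ i : Fin n, a i * x ^ q ^ (i : ℕ) := by
  choose frob hfrob using fun i : Fin n => exists_frobLM q hq F K hcF (i : ℕ)
  haveI : Module.Finite F K := Module.finite_iff_finite.mpr inferInstance
  have hfr : Module.finrank F K = n := by
    have h := Module.card_eq_pow_finrank (K := F) (V := K)
    rw [hcF, hcK] at h
    exact (Nat.pow_right_injective hq.two_le h.symm)
  obtain ⟨Φ, hΦ⟩ : ∃ Φ : (Fin n → K) →ₗ[F] (K →ₗ[F] K),
      ∀ a x, Φ a x = ∑ i : Fin n, a i * x ^ q ^ (i : ℕ) := by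
    refine ⟨⟨⟨fun a => ∑ i, a i • frob i, fun a b => ?_⟩, fun c a => ?_⟩, fun a x => ?_⟩
    · simp [add_smul, Finset.sum_add_distrib]
    · ext x
      simp [LinearMap.sum_apply, Finset.smul_sum, smul_assoc]
    · simp [LinearMap.sum_apply, hfrob]
  have hinj : Function.Injective Φ := by
    refine LinearMap.ker_eq_bot.mp (LinearMap.ker_eq_bot'.mpr fun a ha => ?_)
    refine coeffs_eq_zero hq.two_le hcK a fun x => ?_
    rw [← hΦ a x, ha, LinearMap.zero_apply]
  have hsurj : Function.Surjective Φ := by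
    have h1 : Module.finrank F (Fin n → K) = n * n := by
      rw [Module.finrank_pi_fintype, Finset.sum_congr rfl fun i _ => hfr]
      simp [Finset.sum_const, mul_comm]
    have h2 : Module.finrank F (K →ₗ[F] K) = n * n := by
      rw [Module.finrank_linearMap, hfr]
    rw [← LinearMap.range_eq_top]
    apply Submodule.eq_top_of_finrank_eq
    rw [LinearMap.finrank_range_of_inj hinj, h1, h2]
  obtain ⟨a, ha⟩ := hsurj f
  exact ⟨a, fun x => by rw [← ha, hΦ a x]⟩

/-- Rank-`r` decomposition of a matrix over a field. -/
private lemma rank_decomp {n : ℕ} {K : Type} [Field K] (M : Matrix (Fin n) (Fin n) K) :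
    ∃ a b : Fin M.rank → Fin n → K, ∀ i j, M i j = ∑ k, a k i * b k j := by
  have hfr : Module.finrank K (LinearMap.range M.mulVecLin) = M.rank := rfl
  let bW : Module.Basis (Fin M.rank) K (LinearMap.range M.mulVecLin) :=
    Module.finBasisOfFinrankEq K _ hfr
  have hmem : ∀ j, (fun i => M i j) ∈ LinearMap.range M.mulVecLin := by
    intro j
    exact ⟨Pi.single j 1, by ext i; simp [Matrix.mulVecLin_apply]⟩
  refine ⟨fun k i => (bW k : Fin n → K) i, fun k j => bW.repr ⟨_, hmem j⟩ k, fun i j => ?_⟩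
  have h1 := bW.sum_repr ⟨_, hmem j⟩
  have h2 := congrArg (fun w : LinearMap.range M.mulVecLin => (w : Fin n → K) i) h1
  simp only [AddSubmonoidClass.coe_finset_sum, SetLike.val_smul, Finset.sum_apply,
    Pi.smul_apply, smul_eq_mul] at h2
  rw [show M i j = ∑ k, bW.repr ⟨_, hmem j⟩ k * (bW k : Fin n → K) i from h2.symm]
  exact Finset.sum_congr rfl fun k _ => mul_comm _ _

/-- Rearranging a double sum of products. -/
private lemma sum_rearrange {K : Type} [CommRing K] {n r : ℕ} (a b : Fin r → Fin n → K)
    (X Y : Fin n → K) :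
    ∑ i, ∑ j, (∑ k, a k i * b k j) * X i * Y j
      = ∑ k, (∑ i, a k i * X i) * (∑ j, b k j * Y j) := by
  have step1 : ∑ i, ∑ j, (∑ k, a k i * b k j) * X i * Y j
      = ∑ i, ∑ k, ∑ j, (a k i * X i) * (b k j * Y j) := by
    refine Finset.sum_congr rfl fun i _ => ?_
    rw [Finset.sum_comm]
    refine Finset.sum_congr rfl fun j _ => ?_
    rw [Finset.sum_mul, Finset.sum_mul]
    exact Finset.sum_congr rfl fun k _ => by ring
  rw [step1, Finset.sum_comm]
  exact Finset.sum_congr rfl fun k _ => (Finset.sum_mul_sum _ _ _ _).symm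

/-- the rank of the matrix `M(S)` of a bilinear multiplication `S` equals the
minimum `r` such that `S(x,y) = ∑_{i=1}^r uᵢ(x)·vᵢ(y)` for `F_q`-linear maps `uᵢ, vᵢ`. -/
theorem stmt2 (q n : ℕ) (hq : IsPrimePow q) (hn : 1 ≤ n)
    (F K : Type) [Field F] [Field K] [Algebra F K] [Fintype F] [Fintype K]
    (hcF : Fintype.card F = q) (hcK : Fintype.card K = q ^ n)
    (S : K →ₗ[F] K →ₗ[F] K) (M : Matrix (Fin n) (Fin n) K)
    (hM : IsMatrixOf q n K (fun x y => S x y) M) :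
    M.rank = sInf {r : ℕ | ∃ u v : Fin r → (K →ₗ[F] K),
      ∀ x y : K, S x y = ∑ i : Fin r, u i x * v i y} := by
  have hq2 : 2 ≤ q := hq.two_le
  have hmemT : M.rank ∈ {r : ℕ | ∃ u v : Fin r → (K →ₗ[F] K),
      ∀ x y : K, S x y = ∑ i : Fin r, u i x * v i y} := by
    obtain ⟨a, b, hab⟩ := rank_decomp M
    choose u hu using fun k => exists_linPoly q hq F K hcF (fun i => a k i)
    choose v hv using fun k => exists_linPoly q hq F K hcF (fun j => b k j)
    refine ⟨u, v, fun x y => ?_⟩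
    have e1 : S x y = ∑ i : Fin n, ∑ j : Fin n,
        (∑ k, a k i * b k j) * x ^ q ^ (i : ℕ) * y ^ q ^ (j : ℕ) := by
      have e0 : S x y = ∑ i : Fin n, ∑ j : Fin n,
          M i j * x ^ q ^ (i : ℕ) * y ^ q ^ (j : ℕ) := hM x y
      rw [e0]
      exact Finset.sum_congr rfl fun i _ => Finset.sum_congr rfl fun j _ => by rw [hab]
    rw [e1, sum_rearrange a b (fun i => x ^ q ^ (i : ℕ)) (fun j => y ^ q ^ (j : ℕ))]
    exact Finset.sum_congr rfl fun k _ => by rw [hu k x, hv k y]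
  have hub : ∀ r ∈ {r : ℕ | ∃ u v : Fin r → (K →ₗ[F] K),
      ∀ x y : K, S x y = ∑ i : Fin r, u i x * v i y}, M.rank ≤ r := by
    rintro r ⟨u, v, huv⟩
    choose a ha using fun k => exists_coeffs q n hq F K hcF hcK (u k)
    choose b hb using fun k => exists_coeffs q n hq F K hcF hcK (v k)
    have hN : ∀ x y : K, S x y = ∑ i : Fin n, ∑ j : Fin n,
        (∑ k, a k i * b k j) * x ^ q ^ (i : ℕ) * y ^ q ^ (j : ℕ) := by
      intro x y
      rw [huv x y, sum_rearrange a b (fun i => x ^ q ^ (i : ℕ)) (fun j => y ^ q ^ (j : ℕ))]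
      exact Finset.sum_congr rfl fun k _ => by rw [ha k x, hb k y]
    have hMN : M = Matrix.of fun i j => ∑ k, a k i * b k j := by
      have h0 := matrix_coeffs_eq_zero hq2 hcK
        (M - Matrix.of fun i j => ∑ k, a k i * b k j) ?_
      · exact sub_eq_zero.mp h0
      · intro x y
        have e1 := (hM x y).symm.trans (hN x y)
        calc ∑ i : Fin n, ∑ j : Fin n,
              (M - Matrix.of fun i j => ∑ k, a k i * b k j) i j
                * x ^ q ^ (i : ℕ) * y ^ q ^ (j : ℕ)
            = (∑ i : Fin n, ∑ j : Fin n, M i j * x ^ q ^ (i : ℕ) * y ^ q ^ (j : ℕ))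
              - ∑ i : Fin n, ∑ j : Fin n,
                (∑ k, a k i * b k j) * x ^ q ^ (i : ℕ) * y ^ q ^ (j : ℕ) := by
              rw [← Finset.sum_sub_distrib]
              refine Finset.sum_congr rfl fun i _ => ?_
              rw [← Finset.sum_sub_distrib]
              refine Finset.sum_congr rfl fun j _ => ?_
              simp [Matrix.sub_apply, sub_mul]
          _ = 0 := by rw [← e1, sub_self]
    rw [hMN]
    obtain ⟨A, hA⟩ : ∃ A : Matrix (Fin n) (Fin r) K, A = Matrix.of fun i k => a k i := ⟨_, rfl⟩
    obtain ⟨B, hB⟩ : ∃ B : Matrix (Fin r) (Fin n) K, B = Matrix.of fun k j => b k j := ⟨_, rfl⟩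
    have h1 : (@HMul.hMul (Matrix (Fin n) (Fin r) K) (Matrix (Fin r) (Fin n) K)
        (Matrix (Fin n) (Fin n) K) _ A B).rank ≤ r :=
      le_trans (Matrix.rank_mul_le_right A B)
        (le_trans (Matrix.rank_le_card_height B) (le_of_eq (Fintype.card_fin r)))
    have hfact : (Matrix.of fun i j => ∑ k, a k i * b k j : Matrix (Fin n) (Fin n) K)
        = @HMul.hMul (Matrix (Fin n) (Fin r) K) (Matrix (Fin r) (Fin n) K)
          (Matrix (Fin n) (Fin n) K) _ A B := by
      ext i j
      simp [hA, hB, Matrix.mul_apply]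
    rw [hfact]
    exact h1
  exact le_antisymm (le_csInf ⟨_, hmemT⟩ hub) (Nat.sInf_le hmemT)
end

section
/- Let q be a prime power, n ≥ 1, and let S be a presemifield multiplication on F_{q^n} over F_q. Then mrk([S]), the minimum of rank M(S') over all F_q-bilinear multiplications S' isotopic to S, equals the minimum of rank M(H∘S) over all bijective F_q-linear maps H : F_{q^n} → F_{q^n} of the form H(x) = x + Σ_{j=1}^{n−1} h_j x^{q^j} (h_j ∈ F_{q^n}), where (H∘S)(x,y) := H(S(x,y)). -/
/-- `S` and `S'` are isotopic over `F`: there are bijective `F`-linear maps `Fm, Gm, Hm`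
with `S'(Fm x, Gm y) = Hm (S x y)` for all `x, y`. -/
def Isotopic (F K : Type) [Field F] [Field K] [Algebra F K]
    (S S' : K → K → K) : Prop :=
  ∃ Fm Gm Hm : K ≃ₗ[F] K, ∀ x y : K, S' (Fm x) (Gm y) = Hm (S x y)

/-- The set of ranks of matrices of multiplications isotopic to `S`;
`mrk([S])` is its infimum. -/
def mrkSet (q n : ℕ) (F K : Type) [Field F] [Field K] [Algebra F K]
    (S : K → K → K) : Set ℕ :=
  {r | ∃ (S' : K →ₗ[F] K →ₗ[F] K) (M' : Matrix (Fin n) (Fin n) K),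
    Isotopic F K S (fun x y => S' x y) ∧
    IsMatrixOf q n K (fun x y => S' x y) M' ∧ M'.rank = r}

/-- Dickson-type matrix of a q-polynomial. -/
def auxDickMat (q : ℕ) {n : ℕ} {K : Type} [Field K] (a : Fin n → K) :
    Matrix (Fin n) (Fin n) K :=
  Matrix.of fun i j => (a (j - i)) ^ q ^ (i : ℕ)

section Aux

open Module Matrix

variable {q n : ℕ} {F K : Type} [Field F] [Field K] [Algebra F K] [Fintype F] [Fintype K]

lemma aux_exists_frob (hq : IsPrimePow q) (hn : 1 ≤ n) (hcK : Fintype.card K = q ^ n) (t : ℕ) :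
    ∃ φ : K →+* K, ∀ x : K, φ x = x ^ q ^ t := by
  obtain ⟨p, k, hp, hk, rfl⟩ := hq
  haveI : Fact (Nat.Prime p) := ⟨hp.nat_prime⟩
  have hchar : CharP K p := by
    have h1 : CharP K (ringChar K) := ringChar.charP K
    obtain ⟨m, hm, hcard⟩ := FiniteField.card K (ringChar K)
    rw [hcK, ← pow_mul] at hcard
    have hd : p ∣ ringChar K ^ (m : ℕ) := by
      rw [← hcard]; exact dvd_pow_self p (by positivity)
    have : p = ringChar K :=
      (Nat.prime_dvd_prime_iff_eq hp.nat_prime hm).mp (hp.nat_prime.dvd_of_dvd_pow hd)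
    rwa [this]
  haveI := hchar
  refine ⟨iterateFrobenius K p (k * t), fun x => ?_⟩
  rw [iterateFrobenius_def, pow_mul]

lemma aux_qpow_card (hcK : Fintype.card K = q ^ n) (x : K) : x ^ q ^ n = x := by
  rw [← hcK]; exact FiniteField.pow_card x

lemma aux_qpow_npow (hcK : Fintype.card K = q ^ n) (t : ℕ) (x : K) : x ^ (q ^ n) ^ t = x := by
  induction t with
  | zero => simp
  | succ t ih => rw [pow_succ, pow_mul, ih, aux_qpow_card hcK]

lemma aux_qpow_mod (hcK : Fintype.card K = q ^ n) (x : K) (a : ℕ) :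
    x ^ q ^ a = x ^ q ^ (a % n) := by
  rw [show q ^ a = (q ^ n) ^ (a / n) * q ^ (a % n) by
      rw [← pow_mul, ← pow_add, Nat.div_add_mod], pow_mul, aux_qpow_npow hcK]

lemma aux_qpow_val_add (hcK : Fintype.card K = q ^ n) (x : K) (i j : Fin n) :
    x ^ q ^ (((i + j) : Fin n) : ℕ) = x ^ q ^ ((i : ℕ) + (j : ℕ)) := by
  rw [Fin.val_add, ← aux_qpow_mod hcK]

lemma aux_smul_qpow (hcF : Fintype.card F = q) (t : ℕ) (s : F) (x : K) :
    (s • x) ^ q ^ t = s • x ^ q ^ t := by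
  rw [Algebra.smul_def, Algebra.smul_def, mul_pow, ← map_pow]
  congr 2
  rw [← hcF]
  exact FiniteField.pow_card_pow t s

lemma aux_qpow_inj (hcK : Fintype.card K = q ^ n) {t : ℕ} (ht : t ≤ n) :
    Function.Injective (fun x : K => x ^ q ^ t) := by
  intro u v huv
  have key : ∀ w : K, (w ^ q ^ t) ^ q ^ (n - t) = w := by
    intro w
    rw [← pow_mul, ← pow_add, Nat.add_sub_cancel' ht]
    exact aux_qpow_card hcK w
  rw [← key u, ← key v]
  simp only at huv
  rw [huv]

lemma aux_shift1 (hq : IsPrimePow q) (hn : 1 ≤ n) (hcK : Fintype.card K = q ^ n)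
    (u : Fin n → K) (m : Fin n) (c x : K) :
    c * (∑ j : Fin n, u j * x ^ q ^ (j : ℕ)) ^ q ^ (m : ℕ)
      = ∑ j : Fin n, (c * (u (j - m)) ^ q ^ (m : ℕ)) * x ^ q ^ (j : ℕ) := by
  haveI : NeZero n := ⟨by omega⟩
  obtain ⟨φ, hφ⟩ := aux_exists_frob hq hn hcK (m : ℕ)
  have key : ∀ j : Fin n, c * φ (u j * x ^ q ^ (j : ℕ))
      = (c * (u j) ^ q ^ (m : ℕ)) * x ^ q ^ (((j + m) : Fin n) : ℕ) := by
    intro j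
    rw [_root_.map_mul, hφ, hφ, ← pow_mul, ← pow_add, aux_qpow_val_add hcK, mul_assoc]
  calc c * (∑ j : Fin n, u j * x ^ q ^ (j : ℕ)) ^ q ^ (m : ℕ)
      = ∑ j : Fin n, c * φ (u j * x ^ q ^ (j : ℕ)) := by
        rw [← hφ, map_sum, Finset.mul_sum]
    _ = ∑ j : Fin n, (c * (u j) ^ q ^ (m : ℕ)) * x ^ q ^ (((j + m) : Fin n) : ℕ) := by
        exact Finset.sum_congr rfl fun j _ => key j
    _ = ∑ j : Fin n, (c * (u (j - m)) ^ q ^ (m : ℕ)) * x ^ q ^ (j : ℕ) := by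
        exact Fintype.sum_equiv (Equiv.addRight m) _ _ (fun j => by
          simp [add_sub_cancel_right])

lemma aux_shift2 (hq : IsPrimePow q) (hn : 1 ≤ n) (hcK : Fintype.card K = q ^ n)
    (N : Matrix (Fin n) (Fin n) K) (m : Fin n) (c x y : K) :
    c * (∑ i : Fin n, ∑ j : Fin n, N i j * x ^ q ^ (i : ℕ) * y ^ q ^ (j : ℕ)) ^ q ^ (m : ℕ)
      = ∑ s : Fin n, ∑ t : Fin n,
          (c * (N (s - m) (t - m)) ^ q ^ (m : ℕ)) * x ^ q ^ (s : ℕ) * y ^ q ^ (t : ℕ) := by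
  haveI : NeZero n := ⟨by omega⟩
  obtain ⟨φ, hφ⟩ := aux_exists_frob hq hn hcK (m : ℕ)
  have key : ∀ i j : Fin n, c * φ (N i j * x ^ q ^ (i : ℕ) * y ^ q ^ (j : ℕ))
      = (c * (N i j) ^ q ^ (m : ℕ)) * x ^ q ^ (((i + m) : Fin n) : ℕ)
          * y ^ q ^ (((j + m) : Fin n) : ℕ) := by
    intro i j
    rw [_root_.map_mul, _root_.map_mul, hφ, hφ, hφ, ← pow_mul, ← pow_add, ← pow_mul, ← pow_add,
      aux_qpow_val_add hcK, aux_qpow_val_add hcK]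
    ring
  calc c * (∑ i : Fin n, ∑ j : Fin n, N i j * x ^ q ^ (i : ℕ) * y ^ q ^ (j : ℕ)) ^ q ^ (m : ℕ)
      = ∑ i : Fin n, ∑ j : Fin n, c * φ (N i j * x ^ q ^ (i : ℕ) * y ^ q ^ (j : ℕ)) := by
        rw [← hφ, map_sum, Finset.mul_sum]
        exact Finset.sum_congr rfl fun i _ => by rw [map_sum, Finset.mul_sum]
    _ = ∑ i : Fin n, ∑ j : Fin n, (c * (N i j) ^ q ^ (m : ℕ))
          * x ^ q ^ (((i + m) : Fin n) : ℕ) * y ^ q ^ (((j + m) : Fin n) : ℕ) := by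
        exact Finset.sum_congr rfl fun i _ => Finset.sum_congr rfl fun j _ => key i j
    _ = ∑ s : Fin n, ∑ t : Fin n,
          (c * (N (s - m) (t - m)) ^ q ^ (m : ℕ)) * x ^ q ^ (s : ℕ) * y ^ q ^ (t : ℕ) := by
        refine Fintype.sum_equiv (Equiv.addRight m) _ _ (fun i => ?_)
        refine Fintype.sum_equiv (Equiv.addRight m) _ _ (fun j => ?_)
        simp [add_sub_cancel_right]

lemma aux_dickson (hq : IsPrimePow q) (hn : 1 ≤ n) (hcK : Fintype.card K = q ^ n)
    (a : Fin n → K) (i : Fin n) (x : K) :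
    (∑ j : Fin n, a j * x ^ q ^ (j : ℕ)) ^ q ^ (i : ℕ)
      = ∑ j : Fin n, (a (j - i)) ^ q ^ (i : ℕ) * x ^ q ^ (j : ℕ) := by
  have := aux_shift1 hq hn hcK a i 1 x
  simpa [one_mul] using this

lemma aux_precomp (hq : IsPrimePow q) (hn : 1 ≤ n) (hcK : Fintype.card K = q ^ n)
    {T : K → K → K} {M : Matrix (Fin n) (Fin n) K}
    (hT : IsMatrixOf q n K T M) (a b : Fin n → K) {Fm Gm : K → K}
    (hF : ∀ x, Fm x = ∑ j : Fin n, a j * x ^ q ^ (j : ℕ))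
    (hG : ∀ y, Gm y = ∑ j : Fin n, b j * y ^ q ^ (j : ℕ)) :
    IsMatrixOf q n K (fun x y => T (Fm x) (Gm y))
      ((auxDickMat q a)ᵀ * M * (auxDickMat q b)) := by
  intro x y
  set D : Matrix (Fin n) (Fin n) K := auxDickMat q a with hD
  set E : Matrix (Fin n) (Fin n) K := auxDickMat q b with hE
  have hDx : ∀ i : Fin n, (Fm x) ^ q ^ (i : ℕ) = ∑ s : Fin n, D i s * x ^ q ^ (s : ℕ) := by
    intro i; rw [hF, aux_dickson hq hn hcK]; rfl
  have hEy : ∀ j : Fin n, (Gm y) ^ q ^ (j : ℕ) = ∑ t : Fin n, E j t * y ^ q ^ (t : ℕ) := by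
    intro j; rw [hG, aux_dickson hq hn hcK]; rfl
  have hentry : ∀ s t : Fin n, (Dᵀ * M * E) s t = ∑ i : Fin n, ∑ j : Fin n,
      (D i s * M i j * E j t) := by
    intro s t
    rw [Matrix.mul_apply]
    rw [Finset.sum_comm]
    refine Finset.sum_congr rfl fun j _ => ?_
    rw [Matrix.mul_apply, Finset.sum_mul]
    refine Finset.sum_congr rfl fun i _ => ?_
    rw [Matrix.transpose_apply]
  calc T (Fm x) (Gm y)
      = ∑ i : Fin n, ∑ j : Fin n, M i j * (Fm x) ^ q ^ (i : ℕ) * (Gm y) ^ q ^ (j : ℕ) := hT _ _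
    _ = ∑ i : Fin n, ∑ j : Fin n, ∑ s : Fin n, ∑ t : Fin n,
          (D i s * M i j * E j t) * x ^ q ^ (s : ℕ) * y ^ q ^ (t : ℕ) := by
        refine Finset.sum_congr rfl fun i _ => Finset.sum_congr rfl fun j _ => ?_
        rw [hDx, hEy, mul_assoc, Finset.sum_mul_sum, Finset.mul_sum]
        refine Finset.sum_congr rfl fun s _ => ?_
        rw [Finset.mul_sum]
        refine Finset.sum_congr rfl fun t _ => ?_
        ring
    _ = ∑ i : Fin n, ∑ s : Fin n, ∑ j : Fin n, ∑ t : Fin n,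
          (D i s * M i j * E j t) * x ^ q ^ (s : ℕ) * y ^ q ^ (t : ℕ) :=
        Finset.sum_congr rfl fun i _ => Finset.sum_comm
    _ = ∑ s : Fin n, ∑ i : Fin n, ∑ j : Fin n, ∑ t : Fin n,
          (D i s * M i j * E j t) * x ^ q ^ (s : ℕ) * y ^ q ^ (t : ℕ) :=
        Finset.sum_comm
    _ = ∑ s : Fin n, ∑ i : Fin n, ∑ t : Fin n, ∑ j : Fin n,
          (D i s * M i j * E j t) * x ^ q ^ (s : ℕ) * y ^ q ^ (t : ℕ) :=
        Finset.sum_congr rfl fun s _ => Finset.sum_congr rfl fun i _ => Finset.sum_comm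
    _ = ∑ s : Fin n, ∑ t : Fin n, ∑ i : Fin n, ∑ j : Fin n,
          (D i s * M i j * E j t) * x ^ q ^ (s : ℕ) * y ^ q ^ (t : ℕ) :=
        Finset.sum_congr rfl fun s _ => Finset.sum_comm
    _ = ∑ s : Fin n, ∑ t : Fin n, (Dᵀ * M * E) s t * x ^ q ^ (s : ℕ) * y ^ q ^ (t : ℕ) := by
        refine Finset.sum_congr rfl fun s _ => Finset.sum_congr rfl fun t _ => ?_
        rw [hentry, Finset.sum_mul, Finset.sum_mul]
        refine Finset.sum_congr rfl fun i _ => ?_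
        rw [Finset.sum_mul, Finset.sum_mul]

lemma aux_pow_ne (hq : IsPrimePow q) (hcK : Fintype.card K = q ^ n)
    {d : ℕ} (hd1 : 1 ≤ d) (hdn : d < n) : ¬ (∀ x : K, x ^ q ^ d = x) := by
  intro hall
  classical
  obtain ⟨g, hg⟩ := IsCyclic.exists_generator (α := Kˣ)
  have horder : orderOf g = q ^ n - 1 := by
    rw [orderOf_eq_card_of_forall_mem_zpowers hg, Nat.card_eq_fintype_card,
      Fintype.card_units, hcK]
  have hq2 : 2 ≤ q := hq.two_le
  have hgpow : g ^ (q ^ d) = g := by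
    ext
    rw [Units.val_pow_eq_pow_val]
    exact hall g
  have hpos : 1 ≤ q ^ d := Nat.one_le_pow _ _ (by omega)
  have h1 : g ^ (q ^ d - 1) = 1 := by
    have h2 : g ^ (q ^ d - 1) * g = 1 * g := by
      rw [one_mul, ← pow_succ, Nat.sub_add_cancel hpos]; exact hgpow
    exact mul_right_cancel h2
  have hdvd : q ^ n - 1 ∣ q ^ d - 1 := horder ▸ orderOf_dvd_of_pow_eq_one h1
  have hlt : q ^ d < q ^ n := Nat.pow_lt_pow_right (by omega) hdn
  have hq1 : 2 ≤ q ^ d := le_trans hq2 (Nat.le_self_pow (by omega) q)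
  have := Nat.le_of_dvd (by omega) hdvd
  omega

lemma aux_inj (hq : IsPrimePow q) (hn : 1 ≤ n) (hcK : Fintype.card K = q ^ n) :
    Function.Injective (fun j : Fin n => (powMonoidHom (q ^ (j : ℕ)) : K →* K)) := by
  have key : ∀ i j : Fin n, (i : ℕ) < (j : ℕ) →
      (∀ x : K, x ^ q ^ (i : ℕ) = x ^ q ^ (j : ℕ)) → False := by
    intro i j hij hx
    have hd : ∀ x : K, x ^ q ^ ((i : ℕ) + (n - (j : ℕ))) = x := by
      intro x
      have := congrArg (fun z => z ^ q ^ (n - (j : ℕ))) (hx x)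
      simp only [← pow_mul, ← pow_add] at this
      rw [Nat.add_sub_cancel' (le_of_lt j.isLt)] at this
      rw [this, aux_qpow_card hcK]
    have hj := j.isLt
    exact aux_pow_ne hq hcK (d := (i : ℕ) + (n - (j : ℕ))) (by omega) (by omega) hd
  intro i j hij
  have hfun : ∀ x : K, x ^ q ^ (i : ℕ) = x ^ q ^ (j : ℕ) := by
    intro x
    have := congrFun (congrArg (fun f : K →* K => (f : K → K)) hij) x
    simpa [powMonoidHom] using this
  rcases lt_trichotomy (i : ℕ) (j : ℕ) with h | h | h
  · exact absurd hfun (by intro hf; exact key i j h hf)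
  · exact Fin.ext h
  · exact absurd (fun x => (hfun x).symm) (by intro hf; exact key j i h hf)

lemma aux_finrank (hq : IsPrimePow q) (hcF : Fintype.card F = q)
    (hcK : Fintype.card K = q ^ n) : finrank F K = n := by
  have h := card_eq_pow_finrank (K := F) (V := K)
  rw [hcF, hcK] at h
  exact (Nat.pow_right_injective hq.two_le h).symm

lemma aux_exists_coeffs (hq : IsPrimePow q) (hn : 1 ≤ n) (hcF : Fintype.card F = q)
    (hcK : Fintype.card K = q ^ n) (L : K →ₗ[F] K) :
    ∃ a : Fin n → K, ∀ x : K, L x = ∑ j : Fin n, a j * x ^ q ^ (j : ℕ) := by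
  let fam : Fin n → (K →ₗ[F] K) := fun j =>
    { toFun := fun x => x ^ q ^ (j : ℕ)
      map_add' := fun x y => by
        obtain ⟨φ, hφ⟩ := aux_exists_frob hq hn hcK (j : ℕ)
        rw [← hφ, ← hφ, ← hφ, map_add]
      map_smul' := fun s x => aux_smul_qpow hcF _ s x }
  have hLI : LinearIndependent K fam := by
    have h1 : LinearIndependent K
        (fun j : Fin n => ((powMonoidHom (q ^ (j : ℕ)) : K →* K) : K → K)) :=
      (linearIndependent_monoidHom K K).comp _ (aux_inj hq hn hcK)
    let Φ : (K →ₗ[F] K) →ₗ[K] (K → K) :=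
      { toFun := fun L => ⇑L, map_add' := fun _ _ => rfl, map_smul' := fun _ _ => rfl }
    have heq : (⇑Φ ∘ fam) = fun j : Fin n =>
        ((powMonoidHom (q ^ (j : ℕ)) : K →* K) : K → K) := rfl
    exact LinearIndependent.of_comp Φ (heq ▸ h1)
  have hrank : finrank K (K →ₗ[F] K) = n := by
    rw [Module.finrank_linearMap_self]
    exact aux_finrank hq hcF hcK
  haveI : Nonempty (Fin n) := ⟨⟨0, hn⟩⟩
  let B := basisOfLinearIndependentOfCardEqFinrank hLI (by rw [Fintype.card_fin, hrank])
  have hB : ⇑B = fam := coe_basisOfLinearIndependentOfCardEqFinrank hLI _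
  refine ⟨fun j => B.repr L j, fun x => ?_⟩
  have hsum := B.sum_repr L
  calc L x = (∑ j : Fin n, B.repr L j • B j) x := by rw [hsum]
    _ = ∑ j : Fin n, B.repr L j • ((B j) x) := by
        rw [LinearMap.coe_sum]; simp [Finset.sum_apply]
    _ = ∑ j : Fin n, B.repr L j * x ^ q ^ (j : ℕ) := by
        refine Finset.sum_congr rfl fun j _ => ?_
        rw [hB, smul_eq_mul]; rfl

lemma aux_rank_map_le (f : K →+* K) (A : Matrix (Fin n) (Fin n) K) :
    (A.map f).rank ≤ A.rank := by
  classical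
  rw [Matrix.rank_eq_finrank_span_cols, Matrix.rank_eq_finrank_span_cols]
  obtain ⟨b, hbs, hspan, hli⟩ := exists_linearIndependent K (Set.range Aᵀ)
  haveI : Fintype b := ((Set.finite_range _).subset hbs).fintype
  have hcard : finrank K (Submodule.span K (Set.range Aᵀ)) = b.toFinset.card := by
    rw [← hspan, finrank_span_set_eq_card hli]
  set bf : Finset (Fin n → K) := b.toFinset.image (fun v => f ∘ v) with hbf
  have himg : Set.range (A.map f)ᵀ ⊆ (Submodule.span K (bf : Set (Fin n → K)) : Set _) := by
    rintro _ ⟨j, rfl⟩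
    have hj : Aᵀ j ∈ Submodule.span K ((b.toFinset : Set (Fin n → K))) := by
      rw [Set.coe_toFinset, hspan]
      exact Submodule.subset_span ⟨j, rfl⟩
    obtain ⟨cf, -, hcf⟩ := Submodule.mem_span_finset.mp hj
    have hcol : (A.map f)ᵀ j = ∑ v ∈ b.toFinset, f (cf v) • (f ∘ v) := by
      funext idx
      have := congrFun hcf idx
      simp only [Finset.sum_apply, Pi.smul_apply, smul_eq_mul] at this
      calc (A.map f)ᵀ j idx = f (Aᵀ j idx) := rfl
        _ = f (∑ v ∈ b.toFinset, cf v * v idx) := by rw [this]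
        _ = ∑ v ∈ b.toFinset, f (cf v) * f (v idx) := by rw [map_sum]; simp [_root_.map_mul]
        _ = (∑ v ∈ b.toFinset, f (cf v) • (f ∘ v)) idx := by
            simp [Finset.sum_apply]
    rw [hcol]
    exact Submodule.sum_mem _ fun v hv => Submodule.smul_mem _ _
      (Submodule.subset_span (Finset.mem_image_of_mem _ hv))
  have h1 : Submodule.span K (Set.range (A.map f)ᵀ) ≤ Submodule.span K (bf : Set _) :=
    Submodule.span_le.mpr himg
  have h2 := Submodule.finrank_mono h1
  have h3 : finrank K (Submodule.span K (bf : Set (Fin n → K))) ≤ bf.card :=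
    finrank_span_finset_le_card bf
  have h4 : bf.card ≤ b.toFinset.card := Finset.card_image_le
  change finrank K (Submodule.span K (Set.range (A.map f)ᵀ)) ≤ finrank K (Submodule.span K (Set.range Aᵀ))
  omega

end Aux

/-- `mrk([S])` equals the minimum of `rank M(H ∘ S)` over all bijective
`F_q`-linear `H` of the form `H(x) = x + ∑_{j=1}^{n-1} h_j x^{q^j}`. -/
theorem stmt5 (q n : ℕ) (hq : IsPrimePow q) (hn : 1 ≤ n)
    (F K : Type) [Field F] [Field K] [Algebra F K] [Fintype F] [Fintype K]
    (hcF : Fintype.card F = q) (hcK : Fintype.card K = q ^ n)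
    (S : K →ₗ[F] K →ₗ[F] K)
    (hpre : ∀ x y : K, S x y = 0 → x = 0 ∨ y = 0) :
    sInf (mrkSet q n F K (fun x y => S x y)) =
      sInf {r : ℕ | ∃ (H : K ≃ₗ[F] K) (h : Fin n → K) (M' : Matrix (Fin n) (Fin n) K),
        h ⟨0, hn⟩ = 1 ∧ (∀ x : K, H x = ∑ j : Fin n, h j * x ^ q ^ (j : ℕ)) ∧
        IsMatrixOf q n K (fun x y => H (S x y)) M' ∧ M'.rank = r} := by
  classical
  haveI : NeZero n := ⟨by omega⟩
  set A := mrkSet q n F K (fun x y => S x y) with hAdef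
  set B := {r : ℕ | ∃ (H : K ≃ₗ[F] K) (h : Fin n → K) (M' : Matrix (Fin n) (Fin n) K),
        h ⟨0, hn⟩ = 1 ∧ (∀ x : K, H x = ∑ j : Fin n, h j * x ^ q ^ (j : ℕ)) ∧
        IsMatrixOf q n K (fun x y => H (S x y)) M' ∧ M'.rank = r} with hBdef
  have hBA : B ⊆ A := by
    rintro r ⟨H, h, M', h0, hH, hM, rfl⟩
    refine ⟨S.compr₂ (H : K →ₗ[F] K), M',
      ⟨LinearEquiv.refl F K, LinearEquiv.refl F K, H, fun x y => ?_⟩, ?_, rfl⟩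
    · simp [LinearMap.compr₂_apply]
    · intro x y
      simpa [LinearMap.compr₂_apply] using hM x y
  have hkey : ∀ r ∈ A, ∃ b ∈ B, b ≤ r := by
    rintro r ⟨S', M', ⟨Fm, Gm, Hm, hiso⟩, hM', rfl⟩
    obtain ⟨a, ha⟩ := aux_exists_coeffs hq hn hcF hcK Fm.toLinearMap
    obtain ⟨bb, hbb⟩ := aux_exists_coeffs hq hn hcF hcK Gm.toLinearMap
    obtain ⟨h, hh⟩ := aux_exists_coeffs hq hn hcF hcK Hm.toLinearMap
    have haF : ∀ x : K, Fm x = ∑ j : Fin n, a j * x ^ q ^ (j : ℕ) := fun x => ha x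
    have haG : ∀ y : K, Gm y = ∑ j : Fin n, bb j * y ^ q ^ (j : ℕ) := fun y => hbb y
    have haH : ∀ x : K, Hm x = ∑ j : Fin n, h j * x ^ q ^ (j : ℕ) := fun x => hh x
    set N : Matrix (Fin n) (Fin n) K :=
      (auxDickMat q a).transpose * M' * (auxDickMat q bb) with hNdef
    have hiso' : ∀ x y : K, S' (Fm x) (Gm y) = Hm (S x y) := fun x y => hiso x y
    have hNmat : IsMatrixOf q n K (fun x y => Hm (S x y)) N := by
      intro x y
      show Hm (S x y) = _
      rw [← hiso' x y]
      exact aux_precomp hq hn hcK hM' a bb haF haG x y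
    have hrankN : N.rank ≤ M'.rank :=
      le_trans (Matrix.rank_mul_le_left _ _) (Matrix.rank_mul_le_right _ _)
    have hj0 : ∃ j0, h j0 ≠ 0 := by
      by_contra hall
      push_neg at hall
      have h1 : Hm (1 : K) = 0 := by
        rw [haH 1]; simp [hall]
      have := Hm.injective (by rw [h1, map_zero] : Hm 1 = Hm 0)
      exact one_ne_zero this
    obtain ⟨j0, hj0⟩ := hj0
    set m : Fin n := -j0 with hm
    obtain ⟨φ, hφ⟩ := aux_exists_frob hq hn hcK (m : ℕ)
    set c : K := (h j0 ^ q ^ (m : ℕ))⁻¹ with hc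
    have hcne : c ≠ 0 := inv_ne_zero (pow_ne_zero _ hj0)
    have hHLsmul : ∀ (s : F) (x : K),
        c * (Hm (s • x)) ^ q ^ (m : ℕ) = s • (c * (Hm x) ^ q ^ (m : ℕ)) := by
      intro s x
      rw [map_smul, aux_smul_qpow hcF, Algebra.mul_smul_comm]
    let HL : K →ₗ[F] K :=
      { toFun := fun x => c * (Hm x) ^ q ^ (m : ℕ)
        map_add' := fun x y => by
          rw [map_add, ← hφ, ← hφ, ← hφ, map_add, mul_add]
        map_smul' := fun s x => hHLsmul s x }
    have hHLinj : Function.Injective HL := by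
      intro x y hxy
      have h1 : c * (Hm x) ^ q ^ (m : ℕ) = c * (Hm y) ^ q ^ (m : ℕ) := hxy
      have h2 : (Hm x) ^ q ^ (m : ℕ) = (Hm y) ^ q ^ (m : ℕ) := mul_left_cancel₀ hcne h1
      exact Hm.injective (aux_qpow_inj hcK (le_of_lt m.isLt) h2)
    have hHLbij : Function.Bijective HL := Finite.injective_iff_bijective.mp hHLinj
    let H' : K ≃ₗ[F] K := LinearEquiv.ofBijective HL hHLbij
    have hH'app : ∀ x : K, H' x = c * (Hm x) ^ q ^ (m : ℕ) := fun _ => rfl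
    set h' : Fin n → K := fun j => c * (h (j - m)) ^ q ^ (m : ℕ) with hh'def
    have hH'coeff : ∀ x : K, H' x = ∑ j : Fin n, h' j * x ^ q ^ (j : ℕ) := by
      intro x
      rw [hH'app, haH x, aux_shift1 hq hn hcK h m c x]
    have hh'0 : h' ⟨0, hn⟩ = 1 := by
      have h0 : (⟨0, hn⟩ : Fin n) = 0 := by
        apply Fin.ext
        simp
      rw [h0, hh'def]
      simp only []
      rw [zero_sub, hm, neg_neg, hc]
      exact inv_mul_cancel₀ (pow_ne_zero _ hj0)
    set N'' : Matrix (Fin n) (Fin n) K :=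
      Matrix.of (fun s t => c * (N (s - m) (t - m)) ^ q ^ (m : ℕ)) with hN''def
    have hNmat' : ∀ x y : K, Hm (S x y) = ∑ i : Fin n, ∑ j : Fin n,
        N i j * x ^ q ^ (i : ℕ) * y ^ q ^ (j : ℕ) := fun x y => hNmat x y
    have hN''mat : IsMatrixOf q n K (fun x y => H' (S x y)) N'' := by
      intro x y
      show H' (S x y) = _
      rw [hH'app, hNmat' x y, aux_shift2 hq hn hcK N m c x y]
      rfl
    have hsub : N'' = c • ((N.map ⇑φ).submatrix
        (fun s => s - m) (fun t => t - m)) := by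
      ext s t
      simp [hN''def, Matrix.map_apply, Matrix.submatrix_apply, hφ]
    have e1 : N''.rank ≤ ((N.map ⇑φ).submatrix
        (fun s : Fin n => s - m) (fun t : Fin n => t - m)).rank := by
      rw [hsub, Matrix.smul_eq_diagonal_mul]
      exact Matrix.rank_mul_le_right _ _
    have e2 : ((N.map ⇑φ).submatrix
        (fun s : Fin n => s - m) (fun t : Fin n => t - m)).rank = (N.map ⇑φ).rank := by
      have := Matrix.rank_submatrix (N.map ⇑φ) (Equiv.subRight m) (Equiv.subRight m)
      simpa [Equiv.subRight] using this
    have e3 : (N.map ⇑φ).rank ≤ N.rank := aux_rank_map_le φ N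
    refine ⟨N''.rank, ⟨H', h', N'', hh'0, hH'coeff, hN''mat, rfl⟩, ?_⟩
    calc N''.rank ≤ (N.map ⇑φ).rank := e2 ▸ e1
      _ ≤ N.rank := e3
      _ ≤ M'.rank := hrankN
  by_cases hAne : A.Nonempty
  · obtain haMem := Nat.sInf_mem hAne
    obtain ⟨b, hbB, hble⟩ := hkey _ haMem
    have h1 : sInf B ≤ sInf A := le_trans (Nat.sInf_le hbB) hble
    have h2 : sInf A ≤ sInf B := Nat.sInf_le (hBA (Nat.sInf_mem ⟨b, hbB⟩))
    exact le_antisymm h2 h1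
  · have hAempty : A = ∅ := Set.not_nonempty_iff_eq_empty.mp hAne
    have hBempty : B = ∅ := Set.eq_empty_of_subset_empty (hAempty ▸ hBA)
    rw [hAempty, hBempty]
end

section
/- Let q be a prime power, n ≥ 1, and let S be a presemifield multiplication on F_{q^n} over F_q. Then mrk([S]) = 1 if and only if S is isotopic to the field multiplication (x,y) ↦ x·y on F_{q^n}. -/
open Module

lemma rank_zero_eq {n : ℕ} {K : Type} [Field K] (M : Matrix (Fin n) (Fin n) K)
    (h : M.rank = 0) : M = 0 := by
  rw [Matrix.rank] at h
  have h2 : LinearMap.range M.mulVecLin = ⊥ := Submodule.finrank_eq_zero.mp h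
  rw [LinearMap.range_eq_bot] at h2
  ext i j
  have := congrFun (LinearMap.congr_fun h2 (Pi.single j 1)) i
  simpa [Matrix.mulVecLin_apply, Matrix.mulVec_single] using this

lemma rank_one_decomp {n : ℕ} {K : Type} [Field K] (M : Matrix (Fin n) (Fin n) K)
    (h : M.rank = 1) : ∃ a b : Fin n → K, ∀ i j, M i j = a i * b j := by
  rw [Matrix.rank] at h
  obtain ⟨v, hv0, hv⟩ := finrank_eq_one_iff'.mp h
  choose c hc using hv
  refine ⟨fun i => (v : Fin n → K) i, fun j =>
    c ⟨M.mulVecLin (Pi.single j 1), LinearMap.mem_range_self _ _⟩, fun i j => ?_⟩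
  have := congrFun (congrArg (Subtype.val) (hc ⟨M.mulVecLin (Pi.single j 1),
    LinearMap.mem_range_self _ _⟩)) i
  simp only [Submodule.coe_smul, Pi.smul_apply, smul_eq_mul] at this
  rw [mul_comm, this]
  simp [Matrix.mulVecLin, Matrix.mulVec_single]

lemma rank_std {n : ℕ} (K : Type) [Field K] (i0 : Fin n) :
    (Matrix.single i0 i0 (1 : K)).rank = 1 := by
  classical
  rw [Matrix.rank]
  have hmv : ∀ x : Fin n → K,
      (Matrix.single i0 i0 (1 : K)).mulVecLin x = Pi.single i0 (x i0) := by
    intro x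
    ext i
    simp [Matrix.mulVecLin_apply, Matrix.mulVec, dotProduct, Matrix.single,
      ite_and, Pi.single_apply, eq_comm]
  apply finrank_eq_one (⟨Pi.single i0 1, ⟨Pi.single i0 1, by rw [hmv]; simp⟩⟩ :
    LinearMap.range (Matrix.single i0 i0 (1 : K)).mulVecLin)
  · intro h
    apply one_ne_zero (α := K)
    have := congrFun (congrArg Subtype.val h) i0
    simp at this
  · rintro ⟨w, x, rfl⟩
    refine ⟨x i0, ?_⟩
    apply Subtype.ext
    show x i0 • (Pi.single i0 1 : Fin n → K) = (Matrix.single i0 i0 (1 : K)).mulVecLin x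
    rw [hmv x]
    ext i
    simp [Pi.single_apply]

lemma qpoly_linear (q p e n : ℕ) (F K : Type) [Field F] [Field K] [Algebra F K]
    [Fintype F] [Fact p.Prime] [CharP K p] (hq : p ^ e = q) (hcF : Fintype.card F = q)
    (a : Fin n → K) :
    ∃ L : K →ₗ[F] K, ∀ x, L x = ∑ i : Fin n, a i * x ^ q ^ (i : ℕ) := by
  have hpow : ∀ (i : ℕ) (x y : K), (x + y) ^ q ^ i = x ^ q ^ i + y ^ q ^ i := by
    intro i x y
    rw [← hq, ← pow_mul]
    exact add_pow_char_pow x y p (e * i)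
  have hcfix : ∀ (c : F) (i : ℕ), c ^ q ^ i = c := by
    intro c i
    rw [← hcF]
    exact FiniteField.pow_card_pow i c
  refine ⟨{ toFun := fun x => ∑ i : Fin n, a i * x ^ q ^ (i : ℕ),
            map_add' := ?_, map_smul' := ?_ }, fun _ => rfl⟩
  · intro x y
    simp only [hpow, mul_add]
    exact Finset.sum_add_distrib
  · intro c x
    simp only [Algebra.smul_def, mul_pow, RingHom.id_apply]
    rw [Finset.mul_sum]
    refine Finset.sum_congr rfl fun i _ => ?_
    rw [← map_pow, hcfix]
    ring

/-- a presemifield has `mrk([S]) = 1` iff it is isotopic to the field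
multiplication `(x,y) ↦ x·y` on `F_{q^n}`. -/
theorem stmt6 (q n : ℕ) (hq : IsPrimePow q) (hn : 1 ≤ n)
    (F K : Type) [Field F] [Field K] [Algebra F K] [Fintype F] [Fintype K]
    (hcF : Fintype.card F = q) (hcK : Fintype.card K = q ^ n)
    (S : K →ₗ[F] K →ₗ[F] K)
    (hpre : ∀ x y : K, S x y = 0 → x = 0 ∨ y = 0) :
    sInf (mrkSet q n F K (fun x y => S x y)) = 1 ↔
      Isotopic F K (fun x y => S x y) (fun x y => x * y) := by
  classical
  have hK1 : (1 : K) ≠ 0 := one_ne_zero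
  have hS11 : S 1 1 ≠ 0 := fun h => by rcases hpre 1 1 h with h | h <;> exact hK1 h
  obtain ⟨p, e, hp, he, hpe⟩ := hq
  have hp' : Nat.Prime p := Nat.prime_iff.mpr hp
  haveI : Fact (Nat.Prime p) := ⟨hp'⟩
  constructor
  · intro hinf
    have hne : (mrkSet q n F K (fun x y => S x y)).Nonempty := by
      by_contra h
      rw [Set.not_nonempty_iff_eq_empty] at h
      rw [h, Nat.sInf_empty] at hinf
      exact one_ne_zero hinf.symm
    have hmem : 1 ∈ mrkSet q n F K (fun x y => S x y) := hinf ▸ Nat.sInf_mem hne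
    obtain ⟨S', M', hiso, hmat0, hrank⟩ := hmem
    have hmat : ∀ x y : K, S' x y =
        ∑ i : Fin n, ∑ j : Fin n, M' i j * x ^ q ^ (i : ℕ) * y ^ q ^ (j : ℕ) := hmat0
    -- characteristic of K is p
    obtain ⟨m, hrp, hKcard⟩ := FiniteField.card K (ringChar K)
    have hpm : ringChar K = p := by
      have h1 : p ∣ ringChar K ^ (m : ℕ) := by
        rw [← hKcard, hcK, ← hpe, ← pow_mul]
        exact dvd_pow_self p (by positivity)
      have h2 : p ∣ ringChar K := hp'.dvd_of_dvd_pow h1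
      exact ((Nat.prime_dvd_prime_iff_eq hp' hrp).mp h2).symm
    haveI : CharP K p := hpm ▸ ringChar.charP K
    obtain ⟨a, b, hab⟩ := rank_one_decomp M' hrank
    obtain ⟨LA, hLA⟩ := qpoly_linear q p e n F K hpe hcF a
    obtain ⟨LB, hLB⟩ := qpoly_linear q p e n F K hpe hcF b
    have hS' : ∀ x y : K, S' x y = LA x * LB y := by
      intro x y
      rw [hmat x y, hLA, hLB, Finset.sum_mul_sum]
      exact Finset.sum_congr rfl fun i _ => Finset.sum_congr rfl fun j _ => by
        rw [hab]; ring
    obtain ⟨F1, G1, H1, hiso10⟩ := hiso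
    have hiso1 : ∀ x y : K, S' (F1 x) (G1 y) = H1 (S x y) := hiso10
    have hpre' : ∀ u v : K, S' u v = 0 → u = 0 ∨ v = 0 := by
      intro u v h
      have h3 := hiso1 (F1.symm u) (G1.symm v)
      rw [F1.apply_symm_apply, G1.apply_symm_apply, h] at h3
      have h0 : S (F1.symm u) (G1.symm v) = 0 := by
        apply H1.injective
        rw [map_zero, ← h3]
      rcases hpre _ _ h0 with h4 | h4
      · left
        have := congrArg F1 h4
        rwa [F1.apply_symm_apply, map_zero] at this
      · right
        have := congrArg G1 h4
        rwa [G1.apply_symm_apply, map_zero] at this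
    have hLAinj : Function.Injective LA := by
      apply (injective_iff_map_eq_zero LA).mpr
      intro x hx
      have hz : S' x 1 = 0 := by rw [hS', hx, zero_mul]
      rcases hpre' _ _ hz with h4 | h4
      · exact h4
      · exact absurd h4 hK1
    have hLBinj : Function.Injective LB := by
      apply (injective_iff_map_eq_zero LB).mpr
      intro y hy
      have hz : S' 1 y = 0 := by rw [hS', hy, mul_zero]
      rcases hpre' _ _ hz with h4 | h4
      · exact absurd h4 hK1
      · exact h4
    let EA := LinearEquiv.ofBijective LA (Finite.injective_iff_bijective.mp hLAinj)
    let EB := LinearEquiv.ofBijective LB (Finite.injective_iff_bijective.mp hLBinj)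
    exact ⟨F1.trans EA, G1.trans EB, H1, fun x y => by
      simp only [LinearEquiv.trans_apply]
      show (LA (F1 x)) * (LB (G1 y)) = H1 (S x y)
      rw [← hS', hiso1]⟩
  · intro hiso
    have hmem : 1 ∈ mrkSet q n F K (fun x y => S x y) := by
      refine ⟨LinearMap.mul F K, Matrix.single ⟨0, hn⟩ ⟨0, hn⟩ 1, hiso, ?_,
        rank_std K ⟨0, hn⟩⟩
      intro x y
      show x * y = _
      simp [Matrix.single, ite_and, Finset.sum_ite_eq, mul_comm]
    have h0 : 0 ∉ mrkSet q n F K (fun x y => S x y) := by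
      rintro ⟨S', M', hiso', hmat'0, hr0⟩
      have hM0 : M' = 0 := rank_zero_eq M' hr0
      obtain ⟨F1, G1, H1, h10⟩ := hiso'
      have h1 : ∀ x y : K, S' (F1 x) (G1 y) = H1 (S x y) := h10
      have hmat' : ∀ x y : K, S' x y =
          ∑ i : Fin n, ∑ j : Fin n, M' i j * x ^ q ^ (i : ℕ) * y ^ q ^ (j : ℕ) := hmat'0
      have hz : S' (F1 1) (G1 1) = 0 := by
        rw [hmat', hM0]
        simp
      rw [h1] at hz
      apply hS11
      apply H1.injective
      rw [map_zero, hz]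
    apply le_antisymm (Nat.sInf_le hmem)
    rcases Nat.eq_zero_or_pos (sInf (mrkSet q n F K (fun x y => S x y))) with h | h
    · exfalso
      rcases Nat.sInf_eq_zero.mp h with h2 | h2
      · exact h0 h2
      · rw [h2] at hmem
        exact hmem
    · exact h
end

section
/- Let q be a prime power, n ≥ 1, let 1 ≤ k, m ≤ n−1, and let c ∈ F_{q^n} be such that c ≠ x^{q^k − 1} · y^{q^m − 1} for all nonzero x, y ∈ F_{q^n}. Then the generalized twisted field multiplication x∘y := x·y − c·x^{q^k}·y^{q^m} on F_{q^n} has no zero divisors: x∘y = 0 implies x = 0 or y = 0 (i.e., it is a presemifield multiplication over F_q). -/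
/-- the generalized twisted field multiplication
`x ∘ y = x·y − c·x^{q^k}·y^{q^m}` has no zero divisors provided
`c ≠ x^{q^k−1}·y^{q^m−1}` for all nonzero `x, y`. -/
theorem stmt7 (q n : ℕ) (hq : IsPrimePow q) (hn : 1 ≤ n)
    (F K : Type) [Field F] [Field K] [Algebra F K] [Fintype F] [Fintype K]
    (hcF : Fintype.card F = q) (hcK : Fintype.card K = q ^ n)
    (k m : ℕ) (hk1 : 1 ≤ k) (hk2 : k ≤ n - 1) (hm1 : 1 ≤ m) (hm2 : m ≤ n - 1)
    (c : K)
    (hc : ∀ x y : K, x ≠ 0 → y ≠ 0 → c ≠ x ^ (q ^ k - 1) * y ^ (q ^ m - 1)) :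
    ∀ x y : K, x * y - c * x ^ q ^ k * y ^ q ^ m = 0 → x = 0 ∨ y = 0 := by
  intro x y h
  by_contra hne
  push_neg at hne
  obtain ⟨hx, hy⟩ := hne
  have hq0 : 0 < q := hq.pos
  have hk0 : 1 ≤ q ^ k := Nat.one_le_pow _ _ hq0
  have hm0 : 1 ≤ q ^ m := Nat.one_le_pow _ _ hq0
  have ex : x ^ q ^ k = x ^ (q ^ k - 1) * x := by
    rw [← pow_succ, Nat.sub_add_cancel hk0]
  have ey : y ^ q ^ m = y ^ (q ^ m - 1) * y := by
    rw [← pow_succ, Nat.sub_add_cancel hm0]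
  rw [ex, ey] at h
  have hxy : x * y ≠ 0 := mul_ne_zero hx hy
  have key : c * (x ^ (q ^ k - 1) * y ^ (q ^ m - 1)) = 1 := by
    have h2 : (x * y) * (c * (x ^ (q ^ k - 1) * y ^ (q ^ m - 1))) = (x * y) * 1 := by
      linear_combination -h
    exact mul_left_cancel₀ hxy h2
  have hc' := hc x⁻¹ y⁻¹ (inv_ne_zero hx) (inv_ne_zero hy)
  apply hc'
  rw [inv_pow, inv_pow, ← mul_inv]
  exact eq_inv_of_mul_eq_one_left (by linear_combination key)
end

section
/- Let q be a prime power, n ≥ 1, let 1 ≤ k, m ≤ n−1 with k ≠ m, and let c ∈ F_{q^n} be nonzero and such that c ≠ x^{q^k − 1} · y^{q^m − 1} for all nonzero x, y ∈ F_{q^n}. Then the generalized twisted field GTF_{c,k,m} with multiplication x∘y := x·y − c·x^{q^k}·y^{q^m} satisfies mrk([GTF_{c,k,m}]) = 2; that is, the minimum of rank M(S') over all F_q-bilinear multiplications S' isotopic to (x,y) ↦ x∘y equals 2. -/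
open Finset Module Submodule Matrix


section Aux

variable {q n : ℕ} {F K : Type} [Field F] [Field K] [Algebra F K] [Fintype F] [Fintype K]

lemma pow_qpow_mul (hcK : Fintype.card K = q ^ n) (x : K) (t : ℕ) :
    x ^ q ^ (n * t) = x := by
  induction t with
  | zero => simp
  | succ t ih =>
      have h : q ^ (n * (t + 1)) = q ^ (n * t) * q ^ n := by
        rw [← pow_add, Nat.mul_add_one]
      rw [h, pow_mul, ih, ← hcK, FiniteField.pow_card]

lemma pow_qpow_mod (hn : 1 ≤ n) (hcK : Fintype.card K = q ^ n) (x : K) (a : ℕ) :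
    x ^ q ^ a = x ^ q ^ (a % n) := by
  have h : q ^ a = q ^ (n * (a / n)) * q ^ (a % n) := by
    rw [← pow_add]; congr 1; exact (Nat.div_add_mod a n).symm
  rw [h, pow_mul, pow_qpow_mul hcK]

lemma qpow_add (hq : IsPrimePow q) (hn : 1 ≤ n) (hcK : Fintype.card K = q ^ n)
    (t : ℕ) (x y : K) : (x + y) ^ q ^ t = x ^ q ^ t + y ^ q ^ t := by
  obtain ⟨p, e, hp, he, rfl⟩ := hq
  have hp' : p.Prime := hp.nat_prime
  haveI : Fact p.Prime := ⟨hp'⟩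
  haveI hcp : CharP K p := by
    haveI := ringChar.charP K
    have hr : (ringChar K).Prime := CharP.char_is_prime K (ringChar K)
    obtain ⟨s, -, hcard⟩ := FiniteField.card K (ringChar K)
    have hdvd : p ∣ ringChar K ^ (s : ℕ) := by
      rw [← hcard, hcK, ← pow_mul]
      exact dvd_pow_self p (by positivity)
    have : p = ringChar K :=
      (Nat.prime_dvd_prime_iff_eq hp' hr).mp (hp'.dvd_of_dvd_pow hdvd)
    rw [this]; exact ringChar.charP K
  have : (p ^ e) ^ t = p ^ (e * t) := by rw [← pow_mul]
  rw [this]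
  exact add_pow_char_pow x y p (e * t)

end Aux

section Aux2

variable {q n : ℕ} {F K : Type} [Field F] [Field K] [Algebra F K] [Fintype F] [Fintype K]

lemma qpow_sub (hq : IsPrimePow q) (hn : 1 ≤ n) (hcK : Fintype.card K = q ^ n)
    (t : ℕ) (x y : K) : (x - y) ^ q ^ t = x ^ q ^ t - y ^ q ^ t := by
  have h := qpow_add hq hn hcK t (x - y) y
  rw [sub_add_cancel] at h
  rw [eq_sub_iff_add_eq]; exact h.symm

lemma qpow_smul (hq : IsPrimePow q) (hcF : Fintype.card F = q)
    (t : ℕ) (a : F) (x : K) : (a • x) ^ q ^ t = a • x ^ q ^ t := by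
  rw [Algebra.smul_def, Algebra.smul_def, mul_pow, ← map_pow]
  congr 2
  rw [← hcF]
  exact FiniteField.pow_card_pow t a

/-- Univariate uniqueness of `q`-polynomial representations. -/
lemma quniq (hq : IsPrimePow q) (hn : 1 ≤ n) (hcK : Fintype.card K = q ^ n)
    (d : Fin n → K) (h : ∀ x : K, ∑ i : Fin n, d i * x ^ q ^ (i : ℕ) = 0) :
    ∀ i, d i = 0 := by
  have hq2 : 2 ≤ q := hq.two_le
  set P : Polynomial K := ∑ i : Fin n, Polynomial.C (d i) * Polynomial.X ^ (q ^ (i : ℕ)) with hP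
  have heval : ∀ x : K, P.eval x = 0 := by
    intro x
    rw [hP, Polynomial.eval_finset_sum]
    simpa using h x
  have hdeg : P.natDegree < Fintype.card K := by
    have : P.natDegree ≤ q ^ (n - 1) := by
      refine Polynomial.natDegree_sum_le_of_forall_le _ _ fun i _ => ?_
      refine le_trans (Polynomial.natDegree_C_mul_le _ _) ?_
      rw [Polynomial.natDegree_X_pow]
      exact Nat.pow_le_pow_right (by omega) (by omega)
    refine lt_of_le_of_lt this ?_
    rw [hcK]
    exact Nat.pow_lt_pow_right (by omega) (by omega)
  have hP0 : P = 0 :=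
    Polynomial.eq_zero_of_natDegree_lt_card_of_eval_eq_zero P Function.injective_id
      (fun x => heval x) hdeg
  intro i
  have hcoeff : P.coeff (q ^ (i : ℕ)) = d i := by
    rw [hP, Polynomial.finset_sum_coeff]
    rw [Finset.sum_eq_single i]
    · simp
    · intro j _ hji
      rw [Polynomial.coeff_C_mul, Polynomial.coeff_X_pow, if_neg, mul_zero]
      intro hcon
      exact hji (Fin.ext (Nat.pow_right_injective hq2 hcon.symm))
    · intro hi; exact absurd (Finset.mem_univ i) hi
  rw [← hcoeff, hP0, Polynomial.coeff_zero]

/-- Bivariate uniqueness. -/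
lemma biuniq (hq : IsPrimePow q) (hn : 1 ≤ n) (hcK : Fintype.card K = q ^ n)
    (cm : Fin n → Fin n → K)
    (h : ∀ x y : K, ∑ i : Fin n, ∑ j : Fin n, cm i j * x ^ q ^ (i : ℕ) * y ^ q ^ (j : ℕ) = 0) :
    ∀ i j, cm i j = 0 := by
  have step : ∀ (j : Fin n) (x : K), ∑ i : Fin n, cm i j * x ^ q ^ (i : ℕ) = 0 := by
    intro j x
    have h' : ∀ y : K, ∑ jj : Fin n, (∑ i : Fin n, cm i jj * x ^ q ^ (i : ℕ)) * y ^ q ^ (jj : ℕ) = 0 := by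
      intro y
      rw [← h x y, Finset.sum_comm]
      refine Finset.sum_congr rfl fun jj _ => ?_
      rw [Finset.sum_mul]
    exact quniq hq hn hcK _ h' j
  intro i j
  exact quniq hq hn hcK (fun i => cm i j) (step j) i

end Aux2

section Aux3

variable {q n : ℕ} {F K : Type} [Field F] [Field K] [Algebra F K] [Fintype F] [Fintype K]

/-- Every `F`-linear map on `K` is a `q`-polynomial map. -/
lemma linearMap_qpoly (hq : IsPrimePow q) (hn : 1 ≤ n)
    (hcF : Fintype.card F = q) (hcK : Fintype.card K = q ^ n) (L : K →ₗ[F] K) :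
    ∃ h : Fin n → K, ∀ x : K, L x = ∑ t : Fin n, h t * x ^ q ^ (t : ℕ) := by
  have hq2 : 2 ≤ q := hq.two_le
  haveI : FiniteDimensional F K := Module.Finite.of_finite
  have hfr : finrank F K = n := by
    have hcard := card_eq_pow_finrank (K := F) (V := K)
    rw [hcK, hcF] at hcard
    exact (Nat.pow_right_injective hq2 hcard).symm
  let Φ : (Fin n → K) →ₗ[F] (K →ₗ[F] K) :=
    { toFun := fun d =>
        { toFun := fun x => ∑ t : Fin n, d t * x ^ q ^ (t : ℕ)
          map_add' := fun x y => by
            simp only [qpow_add hq hn hcK, mul_add]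
            rw [Finset.sum_add_distrib]
          map_smul' := fun a x => by
            simp only [qpow_smul hq hcF, RingHom.id_apply]
            rw [Finset.smul_sum]
            exact Finset.sum_congr rfl fun t _ => mul_smul_comm a (d t) _ }
      map_add' := fun d e => by
        ext x
        simp only [LinearMap.coe_mk, AddHom.coe_mk, Pi.add_apply, LinearMap.add_apply, add_mul]
        rw [Finset.sum_add_distrib]
      map_smul' := fun a d => by
        ext x
        simp only [LinearMap.coe_mk, AddHom.coe_mk, Pi.smul_apply, RingHom.id_apply,
          LinearMap.smul_apply]
        rw [Finset.smul_sum]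
        exact Finset.sum_congr rfl fun t _ => by rw [smul_mul_assoc] }
  have hinj : Function.Injective Φ := by
    intro d e hde
    have hz : ∀ x : K, ∑ t : Fin n, (d t - e t) * x ^ q ^ (t : ℕ) = 0 := by
      intro x
      have := congrArg (fun (L : K →ₗ[F] K) => L x) hde
      simp only [Φ, LinearMap.coe_mk, AddHom.coe_mk] at this
      simp only [sub_mul]
      rw [Finset.sum_sub_distrib, this, sub_self]
    funext i
    have := quniq hq hn hcK _ hz i
    exact sub_eq_zero.mp this
  have hdim : finrank F (Fin n → K) = finrank F (K →ₗ[F] K) := by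
    rw [Module.finrank_linearMap, Module.finrank_pi_fintype, hfr]
    simp [Finset.sum_const, Finset.card_univ]
  have hsurj : Function.Surjective Φ :=
    (LinearMap.injective_iff_surjective_of_finrank_eq_finrank hdim).mp hinj
  obtain ⟨d, hd⟩ := hsurj L
  exact ⟨d, fun x => by rw [← hd]; rfl⟩

end Aux3

section Aux4

variable {q n : ℕ} {F K : Type} [Field F] [Field K] [Algebra F K] [Fintype F] [Fintype K]

/-- collapse of a double sum against a "single entry". -/
lemma sum_pair_collapse (a b : Fin n) (v : K) (g : Fin n → Fin n → K) :
    ∑ i : Fin n, ∑ j : Fin n, (if i = a ∧ j = b then v else 0) * g i j = v * g a b := by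
  simp [ite_and, ite_mul, Finset.sum_ite_eq]

end Aux4

section Aux5

variable {n : ℕ} [NeZero n] {K : Type} [Field K]

lemma rank_two_matrix (κ μ : Fin n) (hκ : κ ≠ 0) (hμ : μ ≠ 0) (c : K) (hc0 : c ≠ 0) :
    (Matrix.of fun i j : Fin n =>
      (if i = 0 ∧ j = 0 then (1 : K) else 0) + (if i = κ ∧ j = μ then -c else 0)).rank = 2 := by
  classical
  set M : Matrix (Fin n) (Fin n) K := Matrix.of fun i j : Fin n =>
      (if i = 0 ∧ j = 0 then (1 : K) else 0) + (if i = κ ∧ j = μ then -c else 0) with hM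
  set P0 : Fin n → K := Pi.single (0 : Fin n) (1 : K) with hP0
  set P1 : Fin n → K := Pi.single κ (1 : K) with hP1
  have hcol0 : Mᵀ 0 = P0 := by
    funext i
    simp only [Matrix.transpose_apply, hM, Matrix.of_apply, hP0, Pi.single_apply]
    rw [if_neg (fun hcon : i = κ ∧ (0 : Fin n) = μ => hμ hcon.2.symm)]
    by_cases hi : i = 0 <;> simp [hi]
  have hcolμ : Mᵀ μ = (-c) • P1 := by
    funext i
    simp only [Matrix.transpose_apply, hM, Matrix.of_apply, hP1, Pi.smul_apply, Pi.single_apply,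
      smul_eq_mul]
    rw [if_neg (fun hcon : i = 0 ∧ μ = (0:Fin n) => hμ hcon.2)]
    by_cases hi : i = κ <;> simp [hi]
  have hcolz : ∀ j : Fin n, j ≠ 0 → j ≠ μ → Mᵀ j = 0 := by
    intro j hj0 hjμ
    funext i
    simp only [Matrix.transpose_apply, hM, Matrix.of_apply, Pi.zero_apply]
    rw [if_neg (fun hcon : i = 0 ∧ j = 0 => hj0 hcon.2),
      if_neg (fun hcon : i = κ ∧ j = μ => hjμ hcon.2), add_zero]
  have hspan : span K (Set.range Mᵀ) = span K (Set.range ![P0, P1]) := by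
    apply le_antisymm
    · rw [span_le]
      rintro _ ⟨j, rfl⟩
      by_cases hj0 : j = 0
      · subst hj0; rw [hcol0]
        apply subset_span
        exact ⟨0, rfl⟩
      by_cases hjμ : j = μ
      · subst hjμ; rw [hcolμ]
        apply Submodule.smul_mem
        apply subset_span
        exact ⟨1, rfl⟩
      · rw [hcolz j hj0 hjμ]
        exact Submodule.zero_mem _
    · rw [span_le]
      rintro _ ⟨i, rfl⟩
      fin_cases i
      · apply subset_span
        exact ⟨0, hcol0⟩
      · show P1 ∈ _
        have : P1 = (-c)⁻¹ • Mᵀ μ := by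
          rw [hcolμ, smul_smul, inv_mul_cancel₀ (neg_ne_zero.mpr hc0), one_smul]
        rw [this]
        exact Submodule.smul_mem _ _ (subset_span ⟨μ, rfl⟩)
  have hli : LinearIndependent K ![P0, P1] := by
    have hbasis := (Pi.basisFun K (Fin n)).linearIndependent
    have hcomp : ![P0, P1] = ⇑(Pi.basisFun K (Fin n)) ∘ ![0, κ] := by
      funext i
      fin_cases i <;> simp [hP0, hP1, Pi.basisFun_apply]
    rw [hcomp]
    apply hbasis.comp
    intro a b hab
    fin_cases a <;> fin_cases b <;> simp_all <;>
      first
        | rfl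
        | exact absurd hab.symm hκ
        | exact absurd hab hκ
  rw [Matrix.rank_eq_finrank_span_cols, show M.col = Mᵀ from rfl, hspan, finrank_span_eq_card hli]
  simp

end Aux5

section Aux6

variable {n : ℕ} {K : Type} [Field K]

lemma minors_of_rank_le_one (M : Matrix (Fin n) (Fin n) K) (h : M.rank ≤ 1) :
    ∀ i j i' j', M i j * M i' j' = M i j' * M i' j := by
  classical
  have hfr : finrank K ↥(span K (Set.range Mᵀ)) ≤ 1 := by
    rw [Matrix.rank_eq_finrank_span_cols] at h; exact h
  have hrank1 : Module.rank K ↥(span K (Set.range Mᵀ)) ≤ 1 := by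
    haveI : FiniteDimensional K ↥(span K (Set.range Mᵀ)) := by
      apply FiniteDimensional.span_of_finite
      exact Set.finite_range _
    rw [← Module.finrank_eq_rank]
    exact_mod_cast hfr
  obtain ⟨v0, hv0⟩ := rank_le_one_iff.mp hrank1
  have hcol : ∀ j : Fin n, ∃ r : K, ∀ i, M i j = r * (v0 : Fin n → K) i := by
    intro j
    have hmem : Mᵀ j ∈ span K (Set.range Mᵀ) := subset_span ⟨j, rfl⟩
    obtain ⟨r, hr⟩ := hv0 ⟨Mᵀ j, hmem⟩
    refine ⟨r, fun i => ?_⟩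
    have := congrArg (fun v : ↥(span K (Set.range Mᵀ)) => (v : Fin n → K) i) hr
    simpa using this.symm
  choose ρ hρ using hcol
  intro i j i' j'
  rw [hρ j i, hρ j' i', hρ j' i, hρ j i']
  ring

end Aux6

section Aux7

variable {n : ℕ} {K : Type} [Field K]

lemma foursum_swap (f : Fin n → Fin n → Fin n → Fin n → K) :
    ∑ i : Fin n, ∑ j : Fin n, ∑ i' : Fin n, ∑ j' : Fin n, f i j i' j'
      = ∑ i : Fin n, ∑ j : Fin n, ∑ i' : Fin n, ∑ j' : Fin n, f i j' i' j := by
  refine Finset.sum_congr rfl fun i _ => ?_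
  calc ∑ j : Fin n, ∑ i' : Fin n, ∑ j' : Fin n, f i j i' j'
      = ∑ i' : Fin n, ∑ j : Fin n, ∑ j' : Fin n, f i j i' j' := Finset.sum_comm
    _ = ∑ i' : Fin n, ∑ j' : Fin n, ∑ j : Fin n, f i j i' j' := by
        exact Finset.sum_congr rfl fun i' _ => Finset.sum_comm
    _ = ∑ j : Fin n, ∑ i' : Fin n, ∑ j' : Fin n, f i j' i' j := Finset.sum_comm

lemma expand_mul_sum (f g : Fin n → Fin n → K) :
    (∑ i : Fin n, ∑ j : Fin n, f i j) * (∑ i : Fin n, ∑ j : Fin n, g i j)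
      = ∑ i : Fin n, ∑ j : Fin n, ∑ i' : Fin n, ∑ j' : Fin n, f i j * g i' j' := by
  simp only [Finset.sum_mul]
  simp only [Finset.mul_sum]

/-- the "vanishing 2×2 minors" identity for a multiplication with a matrix of rank ≤ 1. -/
lemma star_identity {q : ℕ} (M : Matrix (Fin n) (Fin n) K) (h1 : M.rank ≤ 1)
    (S' : K → K → K)
    (hmat : ∀ x y : K, S' x y = ∑ i : Fin n, ∑ j : Fin n, M i j * x ^ q ^ (i : ℕ) * y ^ q ^ (j : ℕ))
    (a b a' b' : K) :
    S' a b * S' a' b' = S' a b' * S' a' b := by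
  have hmin := minors_of_rank_le_one M h1
  rw [hmat a b, hmat a' b', hmat a b', hmat a' b]
  rw [expand_mul_sum, expand_mul_sum]
  rw [foursum_swap (fun i j i' j' =>
    (M i j * a ^ q ^ (i : ℕ) * b' ^ q ^ (j : ℕ)) * (M i' j' * a' ^ q ^ (i' : ℕ) * b ^ q ^ (j' : ℕ)))]
  refine Finset.sum_congr rfl fun i _ => Finset.sum_congr rfl fun j _ =>
    Finset.sum_congr rfl fun i' _ => Finset.sum_congr rfl fun j' _ => ?_
  have := hmin i j i' j'
  linear_combination (a ^ q ^ (i : ℕ) * b ^ q ^ (j : ℕ) * a' ^ q ^ (i' : ℕ) * b' ^ q ^ (j' : ℕ)) * this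

end Aux7

section Aux8

variable {q n : ℕ} {F K : Type} [Field F] [Field K] [Algebra F K] [Fintype F] [Fintype K]

lemma qexp_single [NeZero n] (hq : IsPrimePow q) (hn : 1 ≤ n) (hcK : Fintype.card K = q ^ n)
    (c : K) (h : Fin n → K) (k : ℕ) (hkn : k < n) (x : K) :
    ∑ t : Fin n, h t * (x - c * x ^ q ^ k) ^ q ^ (t : ℕ)
      = ∑ i : Fin n,
          (h i - c ^ q ^ ((i - ⟨k, hkn⟩ : Fin n) : ℕ) * h (i - ⟨k, hkn⟩)) * x ^ q ^ (i : ℕ) := by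
  set κ : Fin n := ⟨k, hkn⟩ with hκ
  have e : ∀ t : Fin n, h t * (x - c * x ^ q ^ k) ^ q ^ (t : ℕ)
      = h t * x ^ q ^ (t : ℕ) - (c ^ q ^ (t : ℕ) * h t) * x ^ q ^ ((t + κ : Fin n) : ℕ) := by
    intro t
    rw [qpow_sub hq hn hcK, mul_pow, ← pow_mul, ← pow_add,
      pow_qpow_mod hn hcK x (k + (t : ℕ))]
    have hval : ((t + κ : Fin n) : ℕ) = (k + (t : ℕ)) % n := by
      rw [Fin.val_add]
      congr 1
      simp [hκ, Nat.add_comm]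
    rw [hval]
    ring
  rw [Finset.sum_congr rfl fun t _ => e t, Finset.sum_sub_distrib]
  have reidx : ∑ t : Fin n, (c ^ q ^ (t : ℕ) * h t) * x ^ q ^ ((t + κ : Fin n) : ℕ)
      = ∑ i : Fin n, (c ^ q ^ ((i - κ : Fin n) : ℕ) * h (i - κ)) * x ^ q ^ (i : ℕ) := by
    apply Fintype.sum_equiv (Equiv.addRight κ)
    intro t
    simp only [Equiv.coe_addRight, add_sub_cancel_right]
  rw [reidx, ← Finset.sum_sub_distrib]
  exact Finset.sum_congr rfl fun i _ => by ring

lemma qexp_double [NeZero n] (hq : IsPrimePow q) (hn : 1 ≤ n) (hcK : Fintype.card K = q ^ n)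
    (c : K) (h : Fin n → K) (k m : ℕ) (hkn : k < n) (hmn : m < n) (x y : K) :
    ∑ t : Fin n, h t * (x * y - c * x ^ q ^ k * y ^ q ^ m) ^ q ^ (t : ℕ)
      = ∑ i : Fin n, ∑ j : Fin n,
          ((if j = i then h i else 0)
            - (if j = i + ⟨m, hmn⟩ - ⟨k, hkn⟩ then
                c ^ q ^ ((i - ⟨k, hkn⟩ : Fin n) : ℕ) * h (i - ⟨k, hkn⟩) else 0))
          * x ^ q ^ (i : ℕ) * y ^ q ^ (j : ℕ) := by
  set κ : Fin n := ⟨k, hkn⟩ with hκ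
  set μ : Fin n := ⟨m, hmn⟩ with hμ
  have e : ∀ t : Fin n, h t * (x * y - c * x ^ q ^ k * y ^ q ^ m) ^ q ^ (t : ℕ)
      = h t * (x ^ q ^ (t : ℕ) * y ^ q ^ (t : ℕ))
        - (c ^ q ^ (t : ℕ) * h t) * (x ^ q ^ ((t + κ : Fin n) : ℕ) * y ^ q ^ ((t + μ : Fin n) : ℕ)) := by
    intro t
    rw [qpow_sub hq hn hcK, mul_pow, mul_pow, mul_pow, ← pow_mul, ← pow_add,
      pow_qpow_mod hn hcK x (k + (t : ℕ)), ← pow_mul, ← pow_add,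
      pow_qpow_mod hn hcK y (m + (t : ℕ))]
    have hvalx : ((t + κ : Fin n) : ℕ) = (k + (t : ℕ)) % n := by
      rw [Fin.val_add]; congr 1; simp [hκ, Nat.add_comm]
    have hvaly : ((t + μ : Fin n) : ℕ) = (m + (t : ℕ)) % n := by
      rw [Fin.val_add]; congr 1; simp [hμ, Nat.add_comm]
    rw [hvalx, hvaly]
    ring
  rw [Finset.sum_congr rfl fun t _ => e t, Finset.sum_sub_distrib]
  have collapse : ∀ i : Fin n,
      ∑ j : Fin n, ((if j = i then h i else 0)
          - (if j = i + μ - κ then c ^ q ^ ((i - κ : Fin n) : ℕ) * h (i - κ) else 0))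
        * x ^ q ^ (i : ℕ) * y ^ q ^ (j : ℕ)
      = h i * (x ^ q ^ (i : ℕ) * y ^ q ^ (i : ℕ))
        - (c ^ q ^ ((i - κ : Fin n) : ℕ) * h (i - κ))
            * (x ^ q ^ (i : ℕ) * y ^ q ^ ((i + μ - κ : Fin n) : ℕ)) := by
    intro i
    have e2 : ∀ j : Fin n, ((if j = i then h i else 0)
          - (if j = i + μ - κ then c ^ q ^ ((i - κ : Fin n) : ℕ) * h (i - κ) else 0))
        * x ^ q ^ (i : ℕ) * y ^ q ^ (j : ℕ)
        = (if j = i then h i * (x ^ q ^ (i : ℕ) * y ^ q ^ (j : ℕ)) else 0)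
          - (if j = i + μ - κ then (c ^ q ^ ((i - κ : Fin n) : ℕ) * h (i - κ))
              * (x ^ q ^ (i : ℕ) * y ^ q ^ (j : ℕ)) else 0) := by
      intro j
      split_ifs <;> ring
    rw [Finset.sum_congr rfl fun j _ => e2 j, Finset.sum_sub_distrib,
      Finset.sum_ite_eq' Finset.univ i, Finset.sum_ite_eq' Finset.univ (i + μ - κ)]
    simp
  rw [Finset.sum_congr rfl fun i _ => collapse i, Finset.sum_sub_distrib]
  have reidx2 : ∑ t : Fin n, (c ^ q ^ (t : ℕ) * h t)
        * (x ^ q ^ ((t + κ : Fin n) : ℕ) * y ^ q ^ ((t + μ : Fin n) : ℕ))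
      = ∑ i : Fin n, (c ^ q ^ ((i - κ : Fin n) : ℕ) * h (i - κ))
        * (x ^ q ^ (i : ℕ) * y ^ q ^ ((i + μ - κ : Fin n) : ℕ)) := by
    apply Fintype.sum_equiv (Equiv.addRight κ)
    intro t
    have h1 : (t + κ - κ : Fin n) = t := add_sub_cancel_right t κ
    have h2 : (t + κ + μ - κ : Fin n) = t + μ := by abel
    simp only [Equiv.coe_addRight, h1, h2]
  rw [reidx2]

end Aux8

section Aux9
variable {q n : ℕ} {F K : Type} [Field F] [Field K] [Algebra F K] [Fintype F]

lemma qpow_algebraMap (hcF : Fintype.card F = q) (t : ℕ) (a : F) :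
    (algebraMap F K) a ^ q ^ t = (algebraMap F K) a := by
  rw [← map_pow]
  congr 1
  rw [← hcF]
  exact FiniteField.pow_card_pow t a

end Aux9

/-- a generalized twisted field `GTF_{c,k,m}` has `mrk([GTF_{c,k,m}]) = 2`. -/
theorem stmt8 (q n : ℕ) (hq : IsPrimePow q) (hn : 1 ≤ n)
    (F K : Type) [Field F] [Field K] [Algebra F K] [Fintype F] [Fintype K]
    (hcF : Fintype.card F = q) (hcK : Fintype.card K = q ^ n)
    (k m : ℕ) (hk1 : 1 ≤ k) (hk2 : k ≤ n - 1) (hm1 : 1 ≤ m) (hm2 : m ≤ n - 1)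
    (hkm : k ≠ m) (c : K) (hc0 : c ≠ 0)
    (hc : ∀ x y : K, x ≠ 0 → y ≠ 0 → c ≠ x ^ (q ^ k - 1) * y ^ (q ^ m - 1)) :
    sInf (mrkSet q n F K (fun x y => x * y - c * x ^ q ^ k * y ^ q ^ m)) = 2 := by
  classical
  have hq2 : 2 ≤ q := hq.two_le
  have hn2 : 2 ≤ n := by omega
  haveI : NeZero n := ⟨by omega⟩
  have hkn : k < n := by omega
  have hmn : m < n := by omega
  set κ : Fin n := ⟨k, hkn⟩ with hκdef
  set μ : Fin n := ⟨m, hmn⟩ with hμdef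
  have hκ0 : κ ≠ 0 := by
    intro hcon; have := congrArg Fin.val hcon; simp [hκdef] at this; omega
  have hμ0 : μ ≠ 0 := by
    intro hcon; have := congrArg Fin.val hcon; simp [hμdef] at this; omega
  have hκμ : κ ≠ μ := by
    intro hcon; have := congrArg Fin.val hcon; simp [hκdef, hμdef] at this; omega
  set S : K → K → K := fun x y => x * y - c * x ^ q ^ k * y ^ q ^ m with hSdef
  -- the standard multiplication is bilinear
  let mulS : K →ₗ[F] K →ₗ[F] K := LinearMap.mk₂ F S
    (fun x₁ x₂ y => by simp only [hSdef, qpow_add hq hn hcK]; ring)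
    (fun a x y => by
      simp only [hSdef, Algebra.smul_def, mul_pow, qpow_algebraMap hcF]; ring)
    (fun x y₁ y₂ => by simp only [hSdef, qpow_add hq hn hcK]; ring)
    (fun a x y => by
      simp only [hSdef, Algebra.smul_def, mul_pow, qpow_algebraMap hcF]; ring)
  -- membership of 2
  have hmem : 2 ∈ mrkSet q n F K S := by
    refine ⟨mulS, Matrix.of fun i j : Fin n =>
      (if i = 0 ∧ j = 0 then (1 : K) else 0) + (if i = κ ∧ j = μ then -c else 0),
      ⟨LinearEquiv.refl F K, LinearEquiv.refl F K, LinearEquiv.refl F K, fun x y => rfl⟩,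
      ?_, rank_two_matrix κ μ hκ0 hμ0 c hc0⟩
    intro x y
    have e1 : ∀ i j : Fin n,
        (Matrix.of fun i j : Fin n =>
          (if i = 0 ∧ j = 0 then (1 : K) else 0) + (if i = κ ∧ j = μ then -c else 0)) i j
            * x ^ q ^ (i : ℕ) * y ^ q ^ (j : ℕ)
        = (if i = 0 ∧ j = 0 then (1 : K) else 0) * (x ^ q ^ (i : ℕ) * y ^ q ^ (j : ℕ))
          + (if i = κ ∧ j = μ then -c else 0) * (x ^ q ^ (i : ℕ) * y ^ q ^ (j : ℕ)) := by
      intro i j; simp only [Matrix.of_apply]; ring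
    simp only [e1]
    rw [Finset.sum_congr rfl fun i _ => Finset.sum_add_distrib, Finset.sum_add_distrib,
      sum_pair_collapse, sum_pair_collapse]
    show S x y = _
    simp only [hSdef, Fin.val_zero, pow_zero, pow_one]
    ring
  -- lower bound
  have hlow : ∀ r ∈ mrkSet q n F K S, 2 ≤ r := by
    rintro r ⟨S', M', ⟨Fm, Gm, Hm, hiso⟩, hmat, hrank⟩
    by_contra hcon
    have hr1 : M'.rank ≤ 1 := by rw [hrank]; omega
    -- the "star" identity transfers through the isotopy
    have hstar : ∀ x y x' y' : K,
        Hm (S x y) * Hm (S x' y') = Hm (S x y') * Hm (S x' y) := by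
      intro x y x' y'
      rw [← hiso x y, ← hiso x' y', ← hiso x y', ← hiso x' y]
      exact star_identity M' hr1 _ hmat (Fm x) (Gm y) (Fm x') (Gm y')
    -- basic consequences
    have hc1 : c ≠ 1 := by
      have := hc 1 1 one_ne_zero one_ne_zero
      simpa using this
    set w : K := Hm (S 1 1) with hwdef
    have hS11 : S 1 1 = 1 - c := by simp [hSdef]
    have hw : w ≠ 0 := by
      rw [hwdef, hS11]
      intro hcon'
      have := (LinearEquiv.map_eq_zero_iff Hm).mp hcon'
      rw [sub_eq_zero] at this
      exact hc1 this.symm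
    have hdag : ∀ x y : K, w * Hm (S x y) = Hm (S x 1) * Hm (S 1 y) := by
      intro x y
      rw [hwdef, mul_comm]
      exact hstar x y 1 1
    -- expand Hm as a q-polynomial
    obtain ⟨h, hh⟩ := linearMap_qpoly hq hn hcF hcK (Hm : K →ₗ[F] K)
    have hh' : ∀ z : K, Hm z = ∑ t : Fin n, h t * z ^ q ^ (t : ℕ) := fun z => hh z
    set α : Fin n → K := fun i =>
      h i - c ^ q ^ ((i - κ : Fin n) : ℕ) * h (i - κ) with hαdef
    set β : Fin n → K := fun j =>
      h j - c ^ q ^ ((j - μ : Fin n) : ℕ) * h (j - μ) with hβdef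
    set A : Fin n → Fin n → K := fun i j =>
      (if j = i then h i else 0)
        - (if j = i + μ - κ then c ^ q ^ ((i - κ : Fin n) : ℕ) * h (i - κ) else 0) with hAdef
    have hC1 : ∀ x : K, Hm (S x 1) = ∑ i : Fin n, α i * x ^ q ^ (i : ℕ) := by
      intro x
      have hx1 : S x 1 = x - c * x ^ q ^ k := by simp [hSdef]
      rw [hx1, hh']
      exact qexp_single hq hn hcK c h k hkn x
    have hC2 : ∀ y : K, Hm (S 1 y) = ∑ j : Fin n, β j * y ^ q ^ (j : ℕ) := by
      intro y
      have hy1 : S 1 y = y - c * y ^ q ^ m := by simp [hSdef]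
      rw [hy1, hh']
      exact qexp_single hq hn hcK c h m hmn y
    have hC3 : ∀ x y : K, Hm (S x y)
        = ∑ i : Fin n, ∑ j : Fin n, A i j * x ^ q ^ (i : ℕ) * y ^ q ^ (j : ℕ) := by
      intro x y
      rw [hh']
      exact qexp_double hq hn hcK c h k m hkn hmn x y
    -- coefficient comparison
    have heq : ∀ i j : Fin n, w * A i j = α i * β j := by
      have hz : ∀ x y : K,
          ∑ i : Fin n, ∑ j : Fin n,
            (w * A i j - α i * β j) * x ^ q ^ (i : ℕ) * y ^ q ^ (j : ℕ) = 0 := by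
        intro x y
        have split : ∀ i j : Fin n,
            (w * A i j - α i * β j) * x ^ q ^ (i : ℕ) * y ^ q ^ (j : ℕ)
            = w * (A i j * x ^ q ^ (i : ℕ) * y ^ q ^ (j : ℕ))
              - (α i * x ^ q ^ (i : ℕ)) * (β j * y ^ q ^ (j : ℕ)) := by
          intro i j; ring
        simp only [split]
        rw [Finset.sum_congr rfl fun i _ => Finset.sum_sub_distrib _ _, Finset.sum_sub_distrib]
        rw [Finset.sum_congr rfl fun i (_ : i ∈ Finset.univ) =>
          (Finset.mul_sum Finset.univ (fun j => A i j * x ^ q ^ (i : ℕ) * y ^ q ^ (j : ℕ)) w).symm,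
          ← Finset.mul_sum, ← hC3 x y]
        rw [← Finset.sum_mul_sum, ← hC1 x, ← hC2 y, hdag, sub_self]
      intro i j
      have := biuniq hq hn hcK _ hz i j
      have h2 := sub_eq_zero.mp this
      exact h2
    -- final contradiction
    obtain ⟨t1, ht1⟩ : ∃ t : Fin n, h t ≠ 0 := by
      by_contra hno; push_neg at hno
      have h1 : Hm (1 : K) = 0 := by rw [hh']; simp [hno]
      exact one_ne_zero ((LinearEquiv.map_eq_zero_iff Hm).mp h1)
    have hne_diag : ∀ i : Fin n, ¬ (i = i + μ - κ) := by
      intro i hcon'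
      apply hκμ
      have h1 : i + κ = i + μ := by
        conv_lhs => rw [hcon']
        abel
      exact add_left_cancel h1
    -- diagonal at t1
    have hAdiag : A t1 t1 = h t1 := by
      have h1 : (if t1 = t1 then h t1 else 0) = h t1 := if_pos rfl
      have h2 : (if t1 = t1 + μ - κ then
          c ^ q ^ ((t1 - κ : Fin n) : ℕ) * h (t1 - κ) else 0) = 0 := if_neg (hne_diag t1)
      show (if t1 = t1 then h t1 else 0) - (if t1 = t1 + μ - κ then
          c ^ q ^ ((t1 - κ : Fin n) : ℕ) * h (t1 - κ) else 0) = h t1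
      rw [h1, h2, sub_zero]
    have hprod1 : α t1 * β t1 ≠ 0 := by
      rw [← heq t1 t1, hAdiag]
      exact mul_ne_zero hw ht1
    have hβt1 : β t1 ≠ 0 := right_ne_zero_of_mul hprod1
    -- off-diagonal at (t1 + κ, t1 + μ)
    have hA2 : A (t1 + κ) (t1 + μ) = -(c ^ q ^ ((t1 : Fin n) : ℕ) * h t1) := by
      have h1 : (if t1 + μ = t1 + κ then h (t1 + κ) else 0) = 0 :=
        if_neg (fun hcon' => hκμ (add_left_cancel hcon').symm)
      have h2 : (if t1 + μ = t1 + κ + μ - κ then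
          c ^ q ^ ((t1 + κ - κ : Fin n) : ℕ) * h (t1 + κ - κ) else 0)
          = c ^ q ^ ((t1 : Fin n) : ℕ) * h t1 := by
        rw [if_pos (show t1 + μ = t1 + κ + μ - κ by abel), add_sub_cancel_right]
      show (if t1 + μ = t1 + κ then h (t1 + κ) else 0) - (if t1 + μ = t1 + κ + μ - κ then
          c ^ q ^ ((t1 + κ - κ : Fin n) : ℕ) * h (t1 + κ - κ) else 0)
        = -(c ^ q ^ ((t1 : Fin n) : ℕ) * h t1)
      rw [h1, h2, zero_sub]
    have hprod2 : α (t1 + κ) * β (t1 + μ) ≠ 0 := by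
      rw [← heq _ _, hA2]
      apply mul_ne_zero hw
      exact neg_ne_zero.mpr (mul_ne_zero (pow_ne_zero _ hc0) ht1)
    have hαt2 : α (t1 + κ) ≠ 0 := left_ne_zero_of_mul hprod2
    -- zero position (t1 + κ, t1)
    have hA3 : A (t1 + κ) t1 = 0 := by
      have h1 : (if t1 = t1 + κ then h (t1 + κ) else 0) = 0 :=
        if_neg (fun hcon' => hκ0 (left_eq_add.mp hcon'))
      have h2 : (if t1 = t1 + κ + μ - κ then
          c ^ q ^ ((t1 + κ - κ : Fin n) : ℕ) * h (t1 + κ - κ) else 0) = 0 := by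
        apply if_neg
        intro hcon'
        have e : t1 + κ + μ - κ = t1 + μ := by abel
        rw [e] at hcon'
        exact hμ0 (left_eq_add.mp hcon')
      show (if t1 = t1 + κ then h (t1 + κ) else 0) - (if t1 = t1 + κ + μ - κ then
          c ^ q ^ ((t1 + κ - κ : Fin n) : ℕ) * h (t1 + κ - κ) else 0) = 0
      rw [h1, h2, sub_zero]
    have hzero : α (t1 + κ) * β t1 = 0 := by
      rw [← heq, hA3, mul_zero]
    exact (mul_ne_zero hαt2 hβt1) hzero
  exact le_antisymm (Nat.sInf_le hmem) (le_csInf ⟨2, hmem⟩ hlow)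
end

section
/- Let q be a prime power, n ≥ 1, and let S be a presemifield multiplication on F_{q^n} over F_q. Then brk(S) = mrk([S^{dtd}]); that is, the minimum r such that some presemifield isotopic to S has multiplication of the form (x,y) ↦ Σ_{i=1}^{r} g_i(f_i(x)·y) with F_q-linear f_i, g_i equals the minimum of rank M(S'') over all F_q-bilinear multiplications S'' isotopic to S^{dtd}. -/
/-- The set of `r` such that some multiplication isotopic to `S` over `F` has the form
`(x,y) ↦ ∑_{i=1}^r gᵢ(fᵢ(x)·y)` with `F`-linear `fᵢ, gᵢ`; the BEL-rank `brk(S)` is its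
infimum. -/
def brkSet (F K : Type) [Field F] [Field K] [Algebra F K]
    (S : K → K → K) : Set ℕ :=
  {r | ∃ (S' : K → K → K) (f g : Fin r → (K →ₗ[F] K)),
    Isotopic F K S S' ∧ ∀ x y : K, S' x y = ∑ i : Fin r, g i (f i x * y)}



open Module Polynomial

set_option linter.unusedSectionVars false

namespace Stmt10

variable {q n : ℕ} {F K : Type} [Field F] [Field K] [Algebra F K] [Fintype F] [Fintype K]

lemma qpow_add (hcF : Fintype.card F = q) (i : ℕ) (x y : K) :
    (x + y) ^ q ^ i = x ^ q ^ i + y ^ q ^ i := by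
  obtain ⟨m, hp, hc⟩ := FiniteField.card F (ringChar F)
  haveI : CharP K (ringChar F) := charP_of_injective_algebraMap (algebraMap F K).injective _
  haveI : Fact (Nat.Prime (ringChar F)) := ⟨hp⟩
  haveI : ExpChar K (ringChar F) := .prime hp
  have hq : q = ringChar F ^ (m : ℕ) := by rw [← hcF, hc]
  rw [hq, ← pow_mul, add_pow_char_pow]

lemma qpow_algebraMap (hcF : Fintype.card F = q) (i : ℕ) (c : F) :
    (algebraMap F K c) ^ q ^ i = algebraMap F K c := by
  rw [← map_pow]
  congr 1
  calc c ^ q ^ i = c ^ (Fintype.card F) ^ i := by rw [hcF]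
  _ = c := FiniteField.pow_card_pow _ _

/-- The `q^i`-power map as an `F`-linear map on `K`. -/
noncomputable def phiq (hcF : Fintype.card F = q) (i : ℕ) : K →ₗ[F] K where
  toFun x := x ^ q ^ i
  map_add' x y := qpow_add hcF i x y
  map_smul' c x := by
    simp only [Algebra.smul_def, mul_pow, RingHom.id_apply, qpow_algebraMap hcF i c]

@[simp] lemma phiq_apply (hcF : Fintype.card F = q) (i : ℕ) (x : K) :
    phiq hcF i x = x ^ q ^ i := rfl

end Stmt10

namespace Stmt10

variable {q n : ℕ} {F K : Type} [Field F] [Field K] [Algebra F K] [Fintype F] [Fintype K]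

lemma finrank_eq (hq : IsPrimePow q) (hcF : Fintype.card F = q) (hcK : Fintype.card K = q ^ n) :
    Module.finrank F K = n := by
  have h : Fintype.card K = Fintype.card F ^ Module.finrank F K := card_eq_pow_finrank
  rw [hcF, hcK] at h
  exact (Nat.pow_right_injective hq.two_le h.symm)

/-- The map sending coefficient vectors to `q`-polynomial maps. -/
noncomputable def Psi (hcF : Fintype.card F = q) : (Fin n → K) →ₗ[K] (K →ₗ[F] K) where
  toFun a := ∑ i : Fin n, a i • phiq hcF (i : ℕ)
  map_add' a b := by simp [add_smul, Finset.sum_add_distrib]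
  map_smul' c a := by simp [Finset.smul_sum, smul_smul]

@[simp] lemma Psi_apply (hcF : Fintype.card F = q) (a : Fin n → K) (x : K) :
    Psi (n := n) hcF a x = ∑ i : Fin n, a i * x ^ q ^ (i : ℕ) := by
  simp [Psi, LinearMap.sum_apply, smul_eq_mul]

lemma Psi_injective (hq : IsPrimePow q) (hn : 1 ≤ n)
    (hcF : Fintype.card F = q) (hcK : Fintype.card K = q ^ n) :
    Function.Injective (Psi (n := n) (F := F) (K := K) hcF) := by
  rw [injective_iff_map_eq_zero]
  intro a ha
  by_contra hne
  set P : K[X] := ∑ i : Fin n, Polynomial.C (a i) * Polynomial.X ^ q ^ (i : ℕ) with hP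
  have hq2 : 2 ≤ q := hq.two_le
  have hdeg : P.natDegree < Fintype.card K := by
    rw [hcK]
    refine lt_of_le_of_lt (Polynomial.natDegree_sum_le_of_forall_le _ _ fun i _ => ?_)
      (Nat.pow_lt_pow_right (by omega) (by omega) : q ^ (n-1) < q ^ n)
    refine le_trans (Polynomial.natDegree_C_mul_le _ _) ?_
    simpa using Nat.pow_le_pow_right (by omega) (by omega : (i : ℕ) ≤ n - 1)
  have heval : ∀ x : K, P.eval x = 0 := by
    intro x
    have hx := congrArg (fun f => f x) (congrArg (fun f => f.toFun) ha)
    simp only [Psi, LinearMap.coe_sum] at hx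
    simp only [hP, Polynomial.eval_finset_sum, Polynomial.eval_mul, Polynomial.eval_C,
      Polynomial.eval_pow, Polynomial.eval_X]
    simpa [LinearMap.sum_apply, smul_eq_mul] using hx
  have hP0 : P = 0 := Polynomial.eq_zero_of_natDegree_lt_card_of_eval_eq_zero P
    Function.injective_id (fun x => heval x) (by simpa using hdeg)
  apply hne
  funext i
  have := congrArg (fun Q => Polynomial.coeff Q (q ^ (i : ℕ))) hP0
  simp only [hP, Polynomial.finset_sum_coeff, Polynomial.coeff_C_mul, Polynomial.coeff_X_pow,
    Polynomial.coeff_zero] at this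
  rw [Finset.sum_eq_single i] at this
  · simpa using this
  · intro j _ hji
    have hne2 : q ^ (j : ℕ) ≠ q ^ (i : ℕ) := fun h =>
      hji (Fin.ext (Nat.pow_right_injective hq.two_le h))
    rw [if_neg (fun h => hne2 h.symm), mul_zero]
  · simp

end Stmt10

namespace Stmt10

variable {q n : ℕ} {F K : Type} [Field F] [Field K] [Algebra F K] [Fintype F] [Fintype K]

lemma Psi_bijective (hq : IsPrimePow q) (hn : 1 ≤ n)
    (hcF : Fintype.card F = q) (hcK : Fintype.card K = q ^ n) :
    Function.Bijective (Psi (n := n) (F := F) (K := K) hcF) := by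
  have hinj := Psi_injective hq hn hcF hcK
  refine ⟨hinj, ?_⟩
  have hrk : Module.finrank K (Fin n → K) = Module.finrank K (K →ₗ[F] K) := by
    rw [Module.finrank_linearMap_self, Module.finrank_pi, finrank_eq hq hcF hcK, Fintype.card_fin]
  exact (LinearMap.injective_iff_surjective_of_finrank_eq_finrank hrk).mp hinj

/-- `Psi` as a linear equivalence. -/
noncomputable def PsiE (hq : IsPrimePow q) (hn : 1 ≤ n)
    (hcF : Fintype.card F = q) (hcK : Fintype.card K = q ^ n) :
    (Fin n → K) ≃ₗ[K] (K →ₗ[F] K) :=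
  LinearEquiv.ofBijective _ (Psi_bijective hq hn hcF hcK)

@[simp] lemma PsiE_apply (hq : IsPrimePow q) (hn : 1 ≤ n)
    (hcF : Fintype.card F = q) (hcK : Fintype.card K = q ^ n) (a : Fin n → K) (x : K) :
    PsiE hq hn hcF hcK a x = ∑ i : Fin n, a i * x ^ q ^ (i : ℕ) := Psi_apply hcF a x

/-- Every `F`-linear map on `K` is a `q`-polynomial. -/
lemma exists_qpoly (hq : IsPrimePow q) (hn : 1 ≤ n)
    (hcF : Fintype.card F = q) (hcK : Fintype.card K = q ^ n) (f : K →ₗ[F] K) :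
    ∃ a : Fin n → K, ∀ x : K, f x = ∑ i : Fin n, a i * x ^ q ^ (i : ℕ) := by
  obtain ⟨a, ha⟩ := (Psi_bijective (n := n) hq hn hcF hcK).2 f
  exact ⟨a, fun x => by rw [← ha]; exact Psi_apply hcF a x⟩

end Stmt10

namespace Stmt10

variable {q n : ℕ} {F K : Type} [Field F] [Field K] [Algebra F K] [Fintype F] [Fintype K]

open Algebra

lemma tr_ext {w w' : K} (h : ∀ z : K, trace F K (z * w) = trace F K (z * w')) : w = w' := by
  have hnd := traceForm_nondegenerate F K
  have : ∀ z : K, traceForm F K (w - w') z = 0 := by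
    intro z
    simp only [traceForm_apply]
    rw [sub_mul, map_sub, mul_comm w z, mul_comm w' z, h z, sub_self]
  exact sub_eq_zero.mp (hnd.1 _ this)

end Stmt10

namespace Stmt10

variable {q n : ℕ} {F K : Type} [Field F] [Field K] [Algebra F K] [Fintype F] [Fintype K]

open Algebra

/-- The trace-form adjoint of an `F`-linear map on `K`. -/
noncomputable def adj (g : K →ₗ[F] K) : K →ₗ[F] K :=
  (((traceForm F K).toDual (traceForm_nondegenerate F K)).symm.toLinearMap.comp
    g.dualMap).comp ((traceForm F K).toDual (traceForm_nondegenerate F K)).toLinearMap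

lemma trace_adj (g : K →ₗ[F] K) (x y : K) :
    trace F K (x * adj g y) = trace F K (g x * y) := by
  set φ := (traceForm F K).toDual (traceForm_nondegenerate F K) with hφ
  have h1 : φ (adj g y) = g.dualMap (φ y) := by
    simp only [adj, LinearMap.comp_apply, LinearEquiv.coe_toLinearMap]
    exact φ.apply_symm_apply _
  have h2 : (φ (adj g y)) x = (φ y) (g x) := by rw [h1]; rfl
  have h3 : ∀ a b : K, (φ a) b = trace F K (a * b) := fun a b => rfl
  rw [h3, h3] at h2
  rw [mul_comm x (adj g y), h2, mul_comm y (g x)]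

lemma adj_unique {g g' : K →ₗ[F] K}
    (h : ∀ x y : K, trace F K (x * g' y) = trace F K (g x * y)) : g' = adj g := by
  ext y
  exact tr_ext (fun z => by rw [h z y, ← trace_adj g z y])

lemma adj_adj (g : K →ₗ[F] K) : adj (adj g) = g := by
  symm
  apply adj_unique
  intro x y
  rw [mul_comm x (g y), ← trace_adj g y x, mul_comm y (adj g x)]

end Stmt10

namespace Stmt10

variable {q n : ℕ} {F K : Type} [Field F] [Field K] [Algebra F K] [Fintype F] [Fintype K]

open Algebra

lemma adj_comp (g h : K →ₗ[F] K) : adj (g ∘ₗ h) = adj h ∘ₗ adj g := by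
  symm
  apply adj_unique
  intro x y
  rw [LinearMap.comp_apply, LinearMap.comp_apply, trace_adj h, trace_adj g]

lemma adj_id : adj (LinearMap.id : K →ₗ[F] K) = LinearMap.id := by
  symm; apply adj_unique; intro x y; rfl

lemma adj_add (g h : K →ₗ[F] K) : adj (g + h) = adj g + adj h := by
  symm; apply adj_unique; intro x y
  simp only [LinearMap.add_apply, mul_add, add_mul, map_add, trace_adj]

lemma adj_smul (c : F) (g : K →ₗ[F] K) : adj (c • g) = c • adj g := by
  symm; apply adj_unique; intro x y
  simp only [LinearMap.smul_apply, mul_smul_comm, smul_mul_assoc, map_smul, trace_adj]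

/-- The adjoint of a bijective linear map, as a linear equivalence. -/
noncomputable def adjE (e : K ≃ₗ[F] K) : K ≃ₗ[F] K :=
  LinearEquiv.ofLinear (adj e.toLinearMap) (adj e.symm.toLinearMap)
    (by rw [← adj_comp, LinearEquiv.comp_coe]; simp [adj_id])
    (by rw [← adj_comp, LinearEquiv.comp_coe]; simp [adj_id])

@[simp] lemma adjE_apply (e : K ≃ₗ[F] K) (x : K) : adjE e x = adj e.toLinearMap x := rfl

@[simp] lemma adjE_symm_apply (e : K ≃ₗ[F] K) (x : K) :
    (adjE e).symm x = adj e.symm.toLinearMap x := rfl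

/-- The `dtd` operation on bilinear multiplications. -/
noncomputable def Dmap (T : K →ₗ[F] K →ₗ[F] K) : K →ₗ[F] K →ₗ[F] K where
  toFun x := adj (T x)
  map_add' x y := by simp only [map_add, adj_add]
  map_smul' c x := by simp only [map_smul, adj_smul, RingHom.id_apply]

lemma Dmap_apply (T : K →ₗ[F] K →ₗ[F] K) (x : K) : Dmap T x = adj (T x) := rfl

lemma trace_Dmap (T : K →ₗ[F] K →ₗ[F] K) (x y z : K) :
    trace F K (z * Dmap T x y) = trace F K (T x z * y) := by
  rw [Dmap_apply, trace_adj]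

lemma Dmap_Dmap (T : K →ₗ[F] K →ₗ[F] K) : Dmap (Dmap T) = T := by
  ext x y : 2
  rw [Dmap_apply, Dmap_apply, adj_adj]

end Stmt10

namespace Stmt10

variable {q n : ℕ} {F K : Type} [Field F] [Field K] [Algebra F K] [Fintype F] [Fintype K]

open Algebra

/-- Isotopy transfers along `Dmap`. -/
lemma isotopic_Dmap {T₁ T₂ : K →ₗ[F] K →ₗ[F] K}
    (h : ∃ Fm Gm Hm : K ≃ₗ[F] K, ∀ x y : K, T₂ (Fm x) (Gm y) = Hm (T₁ x y)) :
    ∃ Fm Gm Hm : K ≃ₗ[F] K, ∀ x y : K, Dmap T₂ (Fm x) (Gm y) = Hm (Dmap T₁ x y) := by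
  obtain ⟨Fm, Gm, Hm, hI⟩ := h
  refine ⟨Fm, (adjE Hm).symm, (adjE Gm).symm, fun x y => ?_⟩
  have key : adjE Gm (Dmap T₂ (Fm x) ((adjE Hm).symm y)) = Dmap T₁ x y := by
    apply tr_ext (F := F)
    intro z
    rw [adjE_apply, trace_adj (Gm.toLinearMap)]
    rw [trace_Dmap]
    show trace F K (T₂ (Fm x) (Gm z) * (adjE Hm).symm y) = _
    rw [hI, adjE_symm_apply, trace_adj (Hm.symm.toLinearMap)]
    show trace F K (Hm.symm (Hm (T₁ x z)) * y) = _
    rw [Hm.symm_apply_apply, ← trace_Dmap]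
  calc Dmap T₂ (Fm x) ((adjE Hm).symm y)
      = (adjE Gm).symm (adjE Gm (Dmap T₂ (Fm x) ((adjE Hm).symm y))) :=
        ((adjE Gm).symm_apply_apply _).symm
    _ = (adjE Gm).symm (Dmap T₁ x y) := by rw [key]

/-- The bilinear map `(x, y) ↦ g (f x * y)`. -/
noncomputable def belTerm (f g : K →ₗ[F] K) : K →ₗ[F] K →ₗ[F] K :=
  LinearMap.mk₂ F (fun x y => g (f x * y))
    (fun x x' y => by simp only [map_add, add_mul])
    (fun c x y => by simp only [map_smul, smul_mul_assoc])
    (fun x y y' => by simp only [mul_add, map_add])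
    (fun c x y => by simp only [mul_smul_comm, map_smul])

@[simp] lemma belTerm_apply (f g : K →ₗ[F] K) (x y : K) :
    belTerm f g x y = g (f x * y) := rfl

/-- The bilinear map `(x, y) ↦ f x * h y`. -/
noncomputable def prodTerm (f h : K →ₗ[F] K) : K →ₗ[F] K →ₗ[F] K :=
  LinearMap.mk₂ F (fun x y => f x * h y)
    (fun x x' y => by simp only [map_add, add_mul])
    (fun c x y => by simp only [map_smul, smul_mul_assoc])
    (fun x y y' => by simp only [map_add, mul_add])
    (fun c x y => by simp only [map_smul, mul_smul_comm])

@[simp] lemma prodTerm_apply (f h : K →ₗ[F] K) (x y : K) :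
    prodTerm f h x y = f x * h y := rfl

lemma Dmap_belTerm (r : ℕ) (f g : Fin r → (K →ₗ[F] K)) :
    Dmap (∑ u : Fin r, belTerm (f u) (g u)) = ∑ u : Fin r, prodTerm (f u) (adj (g u)) := by
  rw [← Dmap_Dmap (∑ u : Fin r, prodTerm (f u) (adj (g u)))]
  congr 1
  ext x y : 2
  apply tr_ext (F := F)
  intro z
  rw [trace_Dmap]
  simp only [LinearMap.sum_apply, prodTerm_apply, belTerm_apply, Finset.sum_mul, map_sum,
    Finset.mul_sum]
  refine Finset.sum_congr rfl fun u _ => ?_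
  rw [mul_comm z ((g u) ((f u) x * y)), ← trace_adj (g u) ((f u) x * y) z]
  congr 1
  ring

end Stmt10

namespace Stmt10

variable {q n : ℕ} {F K : Type} [Field F] [Field K] [Algebra F K] [Fintype F] [Fintype K]

open Algebra

/-- Every bilinear multiplication has a matrix. -/
lemma exists_isMatrixOf (hq : IsPrimePow q) (hn : 1 ≤ n)
    (hcF : Fintype.card F = q) (hcK : Fintype.card K = q ^ n) (T : K →ₗ[F] K →ₗ[F] K) :
    ∃ M : Matrix (Fin n) (Fin n) K, IsMatrixOf q n K (fun x y => T x y) M := by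
  -- coefficients in y for fixed x
  set Ψ := PsiE (F := F) (K := K) hq hn hcF hcK with hΨ
  -- for each j, the map x ↦ (Ψ.symm (T x)) j is F-linear
  have hcL : ∀ j : Fin n, ∃ cj : K →ₗ[F] K, ∀ x : K, cj x = (Ψ.symm (T x)) j := by
    intro j
    refine ⟨{ toFun := fun x => (Ψ.symm (T x)) j,
              map_add' := fun x y => by simp only [map_add]; rfl,
              map_smul' := fun c x => by
                simp only [map_smul, RingHom.id_apply]
                rw [← algebraMap_smul K c (T x), map_smul]
                simp [Algebra.smul_def] }, fun x => rfl⟩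
  choose cL hcLspec using hcL
  have hsurj : ∀ j : Fin n, ∃ a : Fin n → K, Psi hcF a = cL j :=
    fun j => (Psi_bijective (n := n) hq hn hcF hcK).2 (cL j)
  choose a ha using hsurj
  refine ⟨fun i j => a j i, fun x y => ?_⟩
  have h1 : T x y = Ψ (Ψ.symm (T x)) y := by rw [Ψ.apply_symm_apply]
  show (T x) y = ∑ i : Fin n, ∑ j : Fin n, a j i * x ^ q ^ (i : ℕ) * y ^ q ^ (j : ℕ)
  rw [h1, hΨ, PsiE_apply]
  have h2 : ∀ j : Fin n, (Ψ.symm (T x)) j = ∑ i : Fin n, a j i * x ^ q ^ (i : ℕ) := by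
    intro j
    rw [← hcLspec j x, ← ha j]
    exact Psi_apply hcF (a j) x
  rw [Finset.sum_comm (γ := Fin n)]
  refine Finset.sum_congr rfl fun j _ => ?_
  rw [h2 j, Finset.sum_mul]

end Stmt10

namespace Stmt10

variable {q n : ℕ} {F K : Type} [Field F] [Field K] [Algebra F K] [Fintype F] [Fintype K]

open Algebra

lemma sum_prodTerm_isMatrixOf (hcF : Fintype.card F = q) (r : ℕ) (a b : Fin r → Fin n → K) :
    IsMatrixOf q n K
      (fun x y => (∑ u : Fin r, prodTerm (Psi hcF (a u)) (Psi hcF (b u))) x y)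
      (fun i j => ∑ u : Fin r, a u i * b u j) := by
  intro x y
  show (∑ u : Fin r, prodTerm (Psi hcF (a u)) (Psi hcF (b u))) x y
      = ∑ i : Fin n, ∑ j : Fin n, (∑ u : Fin r, a u i * b u j) * x ^ q ^ (i : ℕ) * y ^ q ^ (j : ℕ)
  have lhs : (∑ u : Fin r, prodTerm (Psi hcF (a u)) (Psi hcF (b u))) x y
      = ∑ u : Fin r, ∑ i : Fin n, ∑ j : Fin n,
          a u i * b u j * x ^ q ^ (i : ℕ) * y ^ q ^ (j : ℕ) := by
    simp only [LinearMap.sum_apply, prodTerm_apply, Psi_apply]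
    refine Finset.sum_congr rfl fun u _ => ?_
    rw [Finset.sum_mul_sum]
    refine Finset.sum_congr rfl fun i _ => Finset.sum_congr rfl fun j _ => by ring
  rw [lhs, Finset.sum_comm]
  refine Finset.sum_congr rfl fun i _ => ?_
  rw [Finset.sum_comm]
  refine Finset.sum_congr rfl fun j _ => ?_
  rw [Finset.sum_mul, Finset.sum_mul]

lemma rank_sum_prod_le (r : ℕ) (a b : Fin r → Fin n → K) :
    (Matrix.of fun i j => ∑ u : Fin r, a u i * b u j : Matrix (Fin n) (Fin n) K).rank ≤ r := by
  have : (Matrix.of fun i j => ∑ u : Fin r, a u i * b u j : Matrix (Fin n) (Fin n) K)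
      = (Matrix.of fun i u => a u i : Matrix (Fin n) (Fin r) K)
        * (Matrix.of fun u j => b u j : Matrix (Fin r) (Fin n) K) := by
    ext i j
    simp [Matrix.mul_apply]
  rw [this]
  exact le_trans (Matrix.rank_mul_le_left _ _) (Matrix.rank_le_width _)

lemma matrix_factorization (M : Matrix (Fin n) (Fin n) K) :
    ∃ a b : Fin M.rank → Fin n → K, ∀ i j, M i j = ∑ u : Fin M.rank, a u i * b u j := by
  set V : Submodule K (Fin n → K) := Submodule.span K (Set.range M.transpose) with hV
  have hrk : M.rank = Module.finrank K V := Matrix.rank_eq_finrank_span_cols M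
  have bas : Basis (Fin M.rank) K V :=
    (Module.finBasis K V).reindex (finCongr hrk.symm)
  have hmem : ∀ j : Fin n, M.transpose j ∈ V := fun j => Submodule.subset_span ⟨j, rfl⟩
  refine ⟨fun u i => (bas u : Fin n → K) i, fun u j => bas.repr ⟨M.transpose j, hmem j⟩ u, fun i j => ?_⟩
  have hsum := bas.sum_repr ⟨M.transpose j, hmem j⟩
  have hval := congrArg (fun v : V => (v : Fin n → K) i) hsum
  simp only [Submodule.coe_sum, SetLike.val_smul, Finset.sum_apply, Pi.smul_apply,
    smul_eq_mul] at hval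
  have : M i j = M.transpose j i := rfl
  rw [this, ← hval]
  exact Finset.sum_congr rfl fun u _ => mul_comm _ _

end Stmt10

namespace Stmt10

variable {q n : ℕ} {F K : Type} [Field F] [Field K] [Algebra F K] [Fintype F] [Fintype K]

lemma Psi_PsiE_symm (hq : IsPrimePow q) (hn : 1 ≤ n)
    (hcF : Fintype.card F = q) (hcK : Fintype.card K = q ^ n) (g : K →ₗ[F] K) :
    Psi (n := n) hcF ((PsiE hq hn hcF hcK).symm g) = g :=
  (PsiE hq hn hcF hcK).apply_symm_apply g

end Stmt10

/-- `brk(S) = mrk([S^{dtd}])`, where `S^{dtd}` is characterized by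
`Tr(S(x,z)·y) = Tr(z·S^{dtd}(x,y))` for all `x, y, z`. -/
theorem stmt10 (q n : ℕ) (hq : IsPrimePow q) (hn : 1 ≤ n)
    (F K : Type) [Field F] [Field K] [Algebra F K] [Fintype F] [Fintype K]
    (hcF : Fintype.card F = q) (hcK : Fintype.card K = q ^ n)
    (S : K →ₗ[F] K →ₗ[F] K)
    (hpre : ∀ x y : K, S x y = 0 → x = 0 ∨ y = 0)
    (Sdtd : K →ₗ[F] K →ₗ[F] K)
    (hdtd : ∀ x y z : K,
      Algebra.trace F K (S x z * y) = Algebra.trace F K (z * Sdtd x y)) :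
    sInf (brkSet F K (fun x y => S x y)) =
      sInf (mrkSet q n F K (fun x y => Sdtd x y)) := by
  classical
  open Stmt10 in
  -- `Sdtd` is `Dmap S`
  have hSd : Sdtd = Stmt10.Dmap S := by
    ext x y : 2
    exact Stmt10.tr_ext (F := F) fun z =>
      ((hdtd x y z).symm).trans (Stmt10.trace_Dmap S x y z).symm
  -- Step 1: every element of `brkSet` dominates an element of `mrkSet`
  have h1 : ∀ r ∈ brkSet F K (fun x y => S x y),
      ∃ m ∈ mrkSet q n F K (fun x y => Sdtd x y), m ≤ r := by
    rintro r ⟨S', f, g, hiso, hform⟩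
    set T : K →ₗ[F] K →ₗ[F] K := ∑ u : Fin r, Stmt10.belTerm (f u) (g u) with hT
    have hS'T : S' = fun x y => T x y := by
      funext x y
      rw [hform x y, hT]
      simp [LinearMap.sum_apply]
    rw [hS'T] at hiso
    have htr := Stmt10.isotopic_Dmap (T₁ := S) (T₂ := T) hiso
    set a : Fin r → Fin n → K :=
      fun u => (Stmt10.PsiE hq hn hcF hcK).symm (f u) with ha
    set b : Fin r → Fin n → K :=
      fun u => (Stmt10.PsiE hq hn hcF hcK).symm (Stmt10.adj (g u)) with hb
    have hDT : Stmt10.Dmap T = ∑ u : Fin r,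
        Stmt10.prodTerm (Stmt10.Psi hcF (a u)) (Stmt10.Psi hcF (b u)) := by
      rw [hT, Stmt10.Dmap_belTerm]
      refine Finset.sum_congr rfl fun u _ => ?_
      rw [ha, hb]
      rw [Stmt10.Psi_PsiE_symm hq hn hcF hcK (f u),
        Stmt10.Psi_PsiE_symm hq hn hcF hcK (Stmt10.adj (g u))]
    set M : Matrix (Fin n) (Fin n) K :=
      Matrix.of (fun i j => ∑ u : Fin r, a u i * b u j) with hM
    refine ⟨M.rank, ⟨Stmt10.Dmap T, M, ?_, ?_, rfl⟩, Stmt10.rank_sum_prod_le r a b⟩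
    · rw [hSd]
      exact htr
    · have := Stmt10.sum_prodTerm_isMatrixOf (n := n) hcF r a b
      rw [← hDT] at this
      exact this
  -- Step 2: every element of `mrkSet` is in `brkSet`
  have h2 : ∀ m ∈ mrkSet q n F K (fun x y => Sdtd x y), m ∈ brkSet F K (fun x y => S x y) := by
    rintro m ⟨S'', M'', hiso, hMat, hrank⟩
    subst hrank
    obtain ⟨a, b, hab⟩ := Stmt10.matrix_factorization M''
    -- S'' equals the sum of product terms
    have hS'' : S'' = ∑ u : Fin M''.rank,
        Stmt10.prodTerm (Stmt10.Psi hcF (a u)) (Stmt10.Psi hcF (b u)) := by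
      ext x y : 2
      have h1' := hMat x y
      have h2' := Stmt10.sum_prodTerm_isMatrixOf (n := n) hcF M''.rank a b x y
      simp only at h1' h2' ⊢
      rw [h1', h2']
      refine Finset.sum_congr rfl fun i _ => Finset.sum_congr rfl fun j _ => ?_
      rw [hab i j]
    -- the BEL-decomposed preimage
    set TT : K →ₗ[F] K →ₗ[F] K := ∑ u : Fin M''.rank,
        Stmt10.belTerm (Stmt10.Psi hcF (a u)) (Stmt10.adj (Stmt10.Psi hcF (b u))) with hTT
    have hDTT : Stmt10.Dmap TT = S'' := by
      rw [hTT, Stmt10.Dmap_belTerm, hS'']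
      refine Finset.sum_congr rfl fun u _ => ?_
      rw [Stmt10.adj_adj]
    have hTTD : TT = Stmt10.Dmap S'' := by
      rw [← hDTT, Stmt10.Dmap_Dmap]
    -- isotopy transfer back
    rw [hSd] at hiso
    have htr := Stmt10.isotopic_Dmap (T₁ := Stmt10.Dmap S) (T₂ := S'') hiso
    rw [Stmt10.Dmap_Dmap] at htr
    refine ⟨fun x y => Stmt10.Dmap S'' x y,
      fun u => Stmt10.Psi hcF (a u),
      fun u => Stmt10.adj (Stmt10.Psi hcF (b u)), htr, fun x y => ?_⟩
    rw [← hTTD, hTT]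
    simp [LinearMap.sum_apply]
  -- nonemptiness of `mrkSet`
  have hmne : (mrkSet q n F K (fun x y => Sdtd x y)).Nonempty := by
    obtain ⟨M0, hM0⟩ := Stmt10.exists_isMatrixOf hq hn hcF hcK Sdtd
    exact ⟨M0.rank, Sdtd, M0,
      ⟨LinearEquiv.refl F K, LinearEquiv.refl F K, LinearEquiv.refl F K, fun x y => rfl⟩,
      hM0, rfl⟩
  have hbne : (brkSet F K (fun x y => S x y)).Nonempty :=
    ⟨sInf (mrkSet q n F K (fun x y => Sdtd x y)), h2 _ (Nat.sInf_mem hmne)⟩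
  apply le_antisymm
  · exact Nat.sInf_le (h2 _ (Nat.sInf_mem hmne))
  · obtain ⟨m, hm, hle⟩ := h1 _ (Nat.sInf_mem hbne)
    exact le_trans (Nat.sInf_le hm) hle
end

section
/- Let q be a prime power, n ≥ 1, and let S be a presemifield multiplication on F_{q^n} over F_q. Then its transpose S^t is again a presemifield multiplication and brk(S^t) = brk(S). -/
section aux
variable (F K : Type) [Field F] [Field K] [Algebra F K]
  [FiniteDimensional F K] [Algebra.IsSeparable F K]

/-- The trace-form duality isomorphism. -/
noncomputable def trDual : K ≃ₗ[F] Module.Dual F K :=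
  (Algebra.traceForm F K).toDual (traceForm_nondegenerate F K)

lemma trDual_apply (a b : K) : trDual F K a b = Algebra.trace F K (a * b) := rfl

lemma trace_inj {a b : K}
    (h : ∀ z : K, Algebra.trace F K (z * a) = Algebra.trace F K (z * b)) : a = b := by
  apply sub_eq_zero.mp
  apply (traceForm_nondegenerate F K).1 (a - b)
  intro n
  rw [Algebra.traceForm_apply, sub_mul, map_sub, mul_comm a n, mul_comm b n, h n, sub_self]

/-- The adjoint of a linear map with respect to the trace form. -/
noncomputable def adj (g : K →ₗ[F] K) : K →ₗ[F] K :=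
  (trDual F K).symm.toLinearMap ∘ₗ g.dualMap ∘ₗ (trDual F K).toLinearMap

lemma adj_spec (g : K →ₗ[F] K) (x y : K) :
    Algebra.trace F K (g x * y) = Algebra.trace F K (x * adj F K g y) := by
  have h1 : trDual F K (adj F K g y) = g.dualMap (trDual F K y) := by
    simp [adj]
  have h2 : Algebra.trace F K (adj F K g y * x) = Algebra.trace F K (y * g x) := by
    simpa [trDual_apply, LinearMap.dualMap_apply]
      using congrArg (fun φ : Module.Dual F K => φ x) h1
  rw [mul_comm x (adj F K g y), h2, mul_comm y (g x)]

/-- The adjoint of a linear equivalence, as an equivalence. -/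
noncomputable def adjE (e : K ≃ₗ[F] K) : K ≃ₗ[F] K :=
  (trDual F K).trans (e.dualMap.trans (trDual F K).symm)

lemma adjE_spec (e : K ≃ₗ[F] K) (x y : K) :
    Algebra.trace F K (e x * y) = Algebra.trace F K (x * adjE F K e y) := by
  have h1 : trDual F K (adjE F K e y) = e.dualMap (trDual F K y) := by
    simp [adjE]
  have h2 : Algebra.trace F K (adjE F K e y * x) = Algebra.trace F K (y * e x) := by
    simpa [trDual_apply, LinearEquiv.dualMap_apply]
      using congrArg (fun φ : Module.Dual F K => φ x) h1
  rw [mul_comm x (adjE F K e y), h2, mul_comm y (e x)]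

/-- Key lemma: the brk-set of the transpose contains that of the original. -/
lemma key (S St : K →ₗ[F] K →ₗ[F] K)
    (hSt : ∀ x y z : K,
      Algebra.trace F K (S z y * x) = Algebra.trace F K (z * St x y)) :
    brkSet F K (fun x y => S x y) ⊆ brkSet F K (fun x y => St x y) := by
  rintro r ⟨S', f, g, ⟨Fm, Gm, Hm, hIso⟩, hform⟩
  refine ⟨fun u v => ∑ i : Fin r, adj F K (f i) (adj F K (g i) u * v),
    fun i => adj F K (g i), fun i => adj F K (f i), ?_, fun x y => rfl⟩
  -- trace identity for the candidate transpose of S'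
  have hT : ∀ u v z : K,
      Algebra.trace F K (S' z v * u)
        = Algebra.trace F K (z * ∑ i : Fin r, adj F K (f i) (adj F K (g i) u * v)) := by
    intro u v z
    rw [Finset.mul_sum, map_sum, hform, Finset.sum_mul, map_sum]
    refine Finset.sum_congr rfl fun i _ => ?_
    rw [← adj_spec F K (f i) z (adj F K (g i) u * v)]
    rw [show f i z * (adj F K (g i) u * v) = (f i z * v) * adj F K (g i) u by ring]
    rw [← adj_spec F K (g i) (f i z * v) u]
  refine ⟨(adjE F K Hm).symm, Gm, adjE F K Fm.symm, ?_⟩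
  intro x y
  apply trace_inj F K
  intro z
  rw [← hT ((adjE F K Hm).symm x) (Gm y) z]
  have hz : S' z (Gm y) = Hm (S (Fm.symm z) y) := by
    have := hIso (Fm.symm z) y
    rwa [Fm.apply_symm_apply] at this
  rw [hz, adjE_spec F K Hm _ ((adjE F K Hm).symm x), (adjE F K Hm).apply_symm_apply,
    hSt x y (Fm.symm z)]
  exact adjE_spec F K Fm.symm z (St x y)

end aux

/-- the transpose `S^t` of a presemifield multiplication `S`, characterized
by `Tr(S(z,y)·x) = Tr(z·S^t(x,y))`, is again a presemifield multiplication, and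
`brk(S^t) = brk(S)`. -/
theorem stmt11 (q n : ℕ) (hq : IsPrimePow q) (hn : 1 ≤ n)
    (F K : Type) [Field F] [Field K] [Algebra F K] [Fintype F] [Fintype K]
    (hcF : Fintype.card F = q) (hcK : Fintype.card K = q ^ n)
    (S : K →ₗ[F] K →ₗ[F] K)
    (hpre : ∀ x y : K, S x y = 0 → x = 0 ∨ y = 0)
    (St : K →ₗ[F] K →ₗ[F] K)
    (hSt : ∀ x y z : K,
      Algebra.trace F K (S z y * x) = Algebra.trace F K (z * St x y)) :
    (∀ x y : K, St x y = 0 → x = 0 ∨ y = 0) ∧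
    sInf (brkSet F K (fun x y => St x y)) = sInf (brkSet F K (fun x y => S x y)) := by
  haveI : FiniteDimensional F K := inferInstance
  haveI : Algebra.IsSeparable F K := inferInstance
  have hSt' : ∀ x y z : K,
      Algebra.trace F K (St z y * x) = Algebra.trace F K (z * S x y) := by
    intro x y z
    rw [mul_comm (St z y) x, ← hSt z y x, mul_comm (S x y) z]
  constructor
  · intro x y h
    by_cases hy : y = 0
    · exact Or.inr hy
    left
    have hinj : Function.Injective (S.flip y) := by
      intro a b hab
      have hab' : S (a - b) y = 0 := by
        simp only [map_sub, LinearMap.sub_apply]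
        simpa [LinearMap.flip_apply, sub_eq_zero] using hab
      rcases hpre _ _ hab' with h' | h'
      · exact sub_eq_zero.mp h'
      · exact absurd h' hy
    have hsurj := LinearMap.injective_iff_surjective.mp hinj
    apply (traceForm_nondegenerate F K).1 x
    intro w
    obtain ⟨z, hzw⟩ := hsurj w
    have hzw' : S z y = w := hzw
    rw [Algebra.traceForm_apply, mul_comm, ← hzw', hSt x y z, h, mul_zero, map_zero]
  · congr 1
    exact Set.Subset.antisymm (key F K St S hSt') (key F K S St hSt)
end

section
/- Let q' be a prime power, t ≥ 1, q = q'^t, n ≥ 1, and let S be a presemifield multiplication on F_{q^n} over F_q (so S is in particular F_{q'}-bilinear on F_{q^n} = F_{q'^{nt}}). Then the minimum r such that some multiplication isotopic to S via bijective F_q-linear maps has the form (x,y) ↦ Σ_{i=1}^{r} g_i(f_i(x)·y) with F_q-linear f_i, g_i equals the minimum r such that some multiplication isotopic to S via bijective F_{q'}-linear maps has the form (x,y) ↦ Σ_{i=1}^{r} g_i(f_i(x)·y) with F_{q'}-linear f_i, g_i. In other words, the BEL-rank of S computed over F_q equals the BEL-rank of S computed over F_{q'}. -/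
set_option linter.unusedSectionVars false

open Module

namespace BRK

variable (F' K : Type) [Field F'] [Field K] [Algebra F' K] [Fintype F'] [Fintype K]

/-- Left multiplication as an `F'`-linear map. -/
noncomputable def mulL (c : K) : K →ₗ[F'] K := LinearMap.mulLeft F' c

@[simp] lemma mulL_apply (c y : K) : mulL F' K c y = c * y := rfl

/-- Type synonym for `K →ₗ[F'] K` regarded as a `K`-module via precomposition
with multiplication. -/
def Ew : Type := K →ₗ[F'] K

def ofL : (K →ₗ[F'] K) → Ew F' K := fun T => T
def toL : Ew F' K → (K →ₗ[F'] K) := fun T => T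

instance : AddCommGroup (Ew F' K) := inferInstanceAs (AddCommGroup (K →ₗ[F'] K))

noncomputable instance : SMul K (Ew F' K) := ⟨fun c T => ofL F' K ((toL F' K T) ∘ₗ mulL F' K c)⟩

lemma ewExt {T T' : Ew F' K} (h : ∀ y, toL F' K T y = toL F' K T' y) : T = T' :=
  LinearMap.ext h

@[simp] lemma toL_ofL (T : K →ₗ[F'] K) : toL F' K (ofL F' K T) = T := rfl

@[simp] lemma toL_smul (c : K) (T : Ew F' K) (y : K) :
    toL F' K (c • T) y = toL F' K T (c * y) := rfl

@[simp] lemma toL_add (T T' : Ew F' K) (y : K) :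
    toL F' K (T + T') y = toL F' K T y + toL F' K T' y := rfl

@[simp] lemma toL_neg (T : Ew F' K) (y : K) : toL F' K (-T) y = -(toL F' K T y) := rfl

@[simp] lemma toL_zero (y : K) : toL F' K (0 : Ew F' K) y = 0 := rfl

noncomputable instance : Module K (Ew F' K) where
  one_smul T := ewExt _ _ fun y => by
    show toL F' K T (1 * y) = toL F' K T y
    rw [one_mul]
  mul_smul c d T := ewExt _ _ fun y => by
    show toL F' K T ((c * d) * y) = toL F' K T (d * (c * y))
    ring_nf
  smul_zero c := ewExt _ _ fun y => rfl
  smul_add c T T' := ewExt _ _ fun y => rfl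
  add_smul c d T := ewExt _ _ fun y => by
    show toL F' K T ((c + d) * y) = toL F' K T (c * y) + toL F' K T (d * y)
    rw [add_mul, map_add]
  zero_smul T := ewExt _ _ fun y => by
    show toL F' K T (0 * y) = 0
    rw [zero_mul, map_zero]

/-- Evaluation at a point, as an additive map. -/
noncomputable def evalAdd (y : K) : Ew F' K →+ K where
  toFun T := toL F' K T y
  map_zero' := rfl
  map_add' _ _ := rfl

@[simp] lemma evalAdd_apply (y : K) (T : Ew F' K) : evalAdd F' K y T = toL F' K T y := rfl

lemma toL_sum {ι : Type} (s : Finset ι) (f : ι → Ew F' K) (y : K) :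
    toL F' K (∑ i ∈ s, f i) y = ∑ i ∈ s, toL F' K (f i) y :=
  map_sum (evalAdd F' K y) f s

lemma frob_add (j : ℕ) (x y : K) :
    (x + y) ^ (Fintype.card F') ^ j
      = x ^ (Fintype.card F') ^ j + y ^ (Fintype.card F') ^ j := by
  haveI := ringChar.charP F'
  obtain ⟨e, hp, hcard⟩ := FiniteField.card F' (ringChar F')
  haveI : CharP K (ringChar F') :=
    charP_of_injective_algebraMap (algebraMap F' K).injective _
  haveI : Fact (Nat.Prime (ringChar F')) := ⟨hp⟩
  rw [hcard, ← pow_mul]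
  exact add_pow_char_pow x y (p := ringChar F') (n := e * j)

/-- The `j`-th power of the `q'`-Frobenius, as an `F'`-linear map on `K`. -/
noncomputable def phL (j : ℕ) : K →ₗ[F'] K where
  toFun x := x ^ (Fintype.card F') ^ j
  map_add' x y := frob_add F' K j x y
  map_smul' a x := by
    simp only [RingHom.id_apply, Algebra.smul_def, mul_pow, ← map_pow,
      FiniteField.pow_card_pow]

@[simp] lemma phL_apply (j : ℕ) (x : K) : phL F' K j x = x ^ (Fintype.card F') ^ j := rfl

lemma phL_mul (j : ℕ) (x y : K) : phL F' K j (x * y) = phL F' K j x * phL F' K j y :=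
  mul_pow x y _

lemma phL_phL (i j : ℕ) (x : K) : phL F' K j (phL F' K i x) = phL F' K (i + j) x := by
  simp only [phL_apply, ← pow_mul, ← pow_add]

lemma phL_cancel {a b : ℕ} (h : ∃ m : ℕ, a + b = finrank F' K * m) (x : K) :
    phL F' K b (phL F' K a x) = x := by
  obtain ⟨m, hm⟩ := h
  rw [phL_phL, hm]
  simp only [phL_apply]
  rw [pow_mul, ← card_eq_pow_finrank (K := F') (V := K)]
  exact FiniteField.pow_card_pow m x

lemma dK_pos : 1 ≤ finrank F' K := finrank_pos

lemma inv_exp_spec (l : ℕ) : ∃ m : ℕ, l + l * (finrank F' K - 1) = finrank F' K * m := by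
  refine ⟨l, ?_⟩
  have h1 : 1 ≤ finrank F' K := dK_pos F' K
  cases' Nat.exists_eq_add_of_le h1 with d hd
  rw [hd, Nat.add_sub_cancel_left]
  ring

/-- `phInv l` is the inverse of `phL l`. -/
noncomputable def phInv (l : ℕ) : K →ₗ[F'] K := phL F' K (l * (finrank F' K - 1))

lemma phL_phInv (l : ℕ) (x : K) : phInv F' K l (phL F' K l x) = x :=
  phL_cancel F' K (inv_exp_spec F' K l) x

lemma phInv_phL (l : ℕ) (x : K) : phL F' K l (phInv F' K l x) = x := by
  have := phL_cancel F' K (a := l * (finrank F' K - 1)) (b := l) ?_ x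
  · exact this
  · obtain ⟨m, hm⟩ := inv_exp_spec F' K l
    exact ⟨m, by omega⟩

lemma phInv_mul (l : ℕ) (x y : K) :
    phInv F' K l (x * y) = phInv F' K l x * phInv F' K l y := phL_mul F' K _ x y

end BRK

section Part2

open Module Polynomial

namespace BRK

variable (F' F K : Type) [Field F'] [Field F] [Field K]
  [Algebra F' F] [Algebra F K] [Algebra F' K] [IsScalarTower F' F K]
  [Fintype F'] [Fintype F] [Fintype K] [DecidableEq F]

/-- `T` is `φ^l`-semilinear over `F`. -/
def IsSemi (l : ℕ) (T : K →ₗ[F'] K) : Prop :=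
  ∀ (a : F) (y : K),
    T (algebraMap F K a * y) = (algebraMap F K a) ^ (Fintype.card F') ^ l * T y

variable {F' F K}

lemma cardF_eq : Fintype.card F = (Fintype.card F') ^ (finrank F' F) :=
  card_eq_pow_finrank

lemma pow_qpow_mod (a : F) (i : ℕ) :
    a ^ (Fintype.card F') ^ i = a ^ (Fintype.card F') ^ (i % finrank F' F) := by
  have h1 : (Fintype.card F') ^ i
      = (Fintype.card F ^ (i / finrank F' F)) * (Fintype.card F') ^ (i % finrank F' F) := by
    rw [cardF_eq (F' := F') (F := F), ← pow_mul, ← pow_add]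
    congr 1
    exact (Nat.div_add_mod i (finrank F' F)).symm
  rw [h1, pow_mul, FiniteField.pow_card_pow]

lemma qq_pow_ne_zero (l : ℕ) : (Fintype.card F') ^ l ≠ 0 :=
  pow_ne_zero _ Fintype.card_pos.ne'

/-- Sum of a nontrivial multiplicative twist over the units of `F` vanishes. -/
lemma sum_units_twist_eq_zero {d₁ d₂ : ℕ} (h : ∃ u : Fˣ, (u : F) ^ d₁ ≠ (u : F) ^ d₂) :
    ∑ c : Fˣ, ((c : F) ^ d₁ * (((c : F) ^ d₂)⁻¹)) = 0 := by
  obtain ⟨u, hu⟩ := h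
  set s := ∑ c : Fˣ, ((c : F) ^ d₁ * (((c : F) ^ d₂)⁻¹)) with hs
  set w : F := (u : F) ^ d₁ * (((u : F) ^ d₂)⁻¹) with hw
  have h2 : w * s = s := by
    rw [hs, Finset.mul_sum]
    refine Fintype.sum_equiv (Equiv.mulLeft u) _ _ (fun c => ?_)
    have h3 : ((Equiv.mulLeft u c : Fˣ) : F) = (u : F) * (c : F) := rfl
    rw [h3, hw, mul_pow, mul_pow, mul_inv]
    have hc2 : ((c : F) ^ d₂) ≠ 0 := pow_ne_zero _ (Units.ne_zero c)
    have hu2 : ((u : F) ^ d₂) ≠ 0 := pow_ne_zero _ (Units.ne_zero u)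
    field_simp
  have hw1 : w ≠ 1 := by
    intro h1
    apply hu
    have hu2 : ((u : F) ^ d₂) ≠ 0 := pow_ne_zero _ (Units.ne_zero u)
    rw [hw] at h1
    field_simp at h1
    exact h1
  have h4 : (w - 1) * s = 0 := by rw [sub_mul, one_mul, h2, sub_self]
  rcases mul_eq_zero.mp h4 with h5 | h5
  · exact absurd (by linear_combination h5 : w = 1) hw1
  · exact h5

/-- Distinct Frobenius powers are distinguished by some unit. -/
lemma exists_units_pow_ne {l l' : ℕ} (hne : l ≠ l') (hl : l < finrank F' F)
    (hl' : l' < finrank F' F) :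
    ∃ u : Fˣ, (u : F) ^ (Fintype.card F') ^ l' ≠ (u : F) ^ (Fintype.card F') ^ l := by
  obtain ⟨g, hg⟩ := IsCyclic.exists_generator (α := Fˣ)
  refine ⟨g, fun heq => ?_⟩
  have hgg : g ^ (Fintype.card F') ^ l' = g ^ (Fintype.card F') ^ l := by
    ext
    push_cast
    exact heq
  have horder : orderOf g = Fintype.card F - 1 := by
    rw [orderOf_eq_card_of_forall_mem_zpowers hg, Nat.card_eq_fintype_card, Fintype.card_units]
  have hmod := pow_eq_pow_iff_modEq.mp hgg
  rw [horder] at hmod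
  -- bounds
  have hq2 : 2 ≤ Fintype.card F' := Fintype.one_lt_card
  have ht2 : 2 ≤ finrank F' F := by
    rcases Nat.lt_or_ge (finrank F' F) 2 with h | h
    · interval_cases h2 : finrank F' F <;> omega
    · exact h
  have hbound : ∀ m : ℕ, m < finrank F' F →
      (Fintype.card F') ^ m < Fintype.card F - 1 := by
    intro m hm
    have h5 : (Fintype.card F') ^ m ≤ (Fintype.card F') ^ (finrank F' F - 1) :=
      Nat.pow_le_pow_right (by omega) (by omega)
    have h6 : (Fintype.card F') ^ (finrank F' F - 1) * 2
        ≤ (Fintype.card F') ^ (finrank F' F - 1) * Fintype.card F' :=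
      Nat.mul_le_mul_left _ hq2
    have h7 : (Fintype.card F') ^ (finrank F' F - 1) * Fintype.card F'
        = Fintype.card F := by
      rw [← pow_succ, cardF_eq (F' := F') (F := F)]
      congr 1
      omega
    have h8 : 2 ≤ (Fintype.card F') ^ (finrank F' F - 1) :=
      le_trans hq2 (Nat.le_self_pow (by omega) _)
    omega
  have heqd : (Fintype.card F') ^ l' = (Fintype.card F') ^ l := by
    have b1 := hbound l' hl'
    have b2 := hbound l hl
    have := hmod
    unfold Nat.ModEq at this
    rwa [Nat.mod_eq_of_lt b1, Nat.mod_eq_of_lt b2] at this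
  exact hne (Nat.pow_right_injective hq2 heqd).symm

variable (F' F K)

/-- Projection onto the `φ^l`-semilinear part. -/
noncomputable def Qop (l : ℕ) (T : K →ₗ[F'] K) : K →ₗ[F'] K :=
  - ∑ c : Fˣ, (mulL F' K (((algebraMap F K (c : F)) ^ (Fintype.card F') ^ l)⁻¹)) ∘ₗ
      (T ∘ₗ mulL F' K (algebraMap F K (c : F)))

variable {F' F K}

lemma Qop_apply (l : ℕ) (T : K →ₗ[F'] K) (y : K) :
    Qop F' F K l T y = - ∑ c : Fˣ,
      ((algebraMap F K (c : F)) ^ (Fintype.card F') ^ l)⁻¹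
        * T (algebraMap F K (c : F) * y) := by
  simp [Qop, LinearMap.sum_apply]

lemma Qop_add (l : ℕ) (T T' : K →ₗ[F'] K) :
    Qop F' F K l (T + T') = Qop F' F K l T + Qop F' F K l T' := by
  apply LinearMap.ext; intro y
  simp only [Qop_apply, LinearMap.add_apply, mul_add, Finset.sum_add_distrib, neg_add]

lemma Qop_zero (l : ℕ) : Qop F' F K l (0 : K →ₗ[F'] K) = 0 := by
  apply LinearMap.ext; intro y
  simp [Qop_apply]

lemma Qop_comp_mulL (l : ℕ) (T : K →ₗ[F'] K) (e : K) :
    Qop F' F K l (T ∘ₗ mulL F' K e) = (Qop F' F K l T) ∘ₗ mulL F' K e := by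
  apply LinearMap.ext; intro y
  simp only [Qop_apply, LinearMap.comp_apply, mulL_apply]
  congr 1
  apply Finset.sum_congr rfl
  intro c _
  rw [mul_left_comm]

lemma algebraMap_units_ne_zero (c : Fˣ) : algebraMap F K (c : F) ≠ 0 := by
  simp [Units.ne_zero c]

lemma isSemi_Qop (l : ℕ) (T : K →ₗ[F'] K) : IsSemi F' F K l (Qop F' F K l T) := by
  intro a y
  rcases eq_or_ne a 0 with rfl | ha
  · rw [map_zero, zero_mul, map_zero, zero_pow (qq_pow_ne_zero l), zero_mul]
  · set u : Fˣ := Units.mk0 a ha with hudef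
    set d := (Fintype.card F') ^ l with hd
    rw [Qop_apply, Qop_apply, mul_neg, Finset.mul_sum, neg_inj]
    refine (Fintype.sum_equiv (Equiv.mulRight u⁻¹)
      (fun c : Fˣ => (algebraMap F K a) ^ d
        * (((algebraMap F K (c : F)) ^ d)⁻¹ * T (algebraMap F K (c : F) * y)))
      (fun c : Fˣ => ((algebraMap F K (c : F)) ^ d)⁻¹
        * T (algebraMap F K (c : F) * (algebraMap F K a * y)))
      (fun c => ?_)).symm
    simp only [Equiv.coe_mulRight]
    have h3 : ((c * u⁻¹ : Fˣ) : F) = (c : F) * a⁻¹ := by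
      simp [hudef]
    rw [h3]
    have hAa : algebraMap F K a ≠ 0 := by simp [ha]
    have hAc : algebraMap F K (c : F) ≠ 0 := algebraMap_units_ne_zero c
    have harg : algebraMap F K ((c : F) * a⁻¹) * (algebraMap F K a * y)
        = algebraMap F K (c : F) * y := by
      rw [map_mul, map_inv₀]
      field_simp
    rw [harg]
    have h4 : algebraMap F K ((c : F) * a⁻¹)
        = algebraMap F K (c : F) * (algebraMap F K a)⁻¹ := by
      rw [map_mul (algebraMap F K), map_inv₀]
    rw [h4, mul_pow, mul_inv]
    have h5 : (((algebraMap F K a)⁻¹) ^ d)⁻¹ = (algebraMap F K a) ^ d := by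
      rw [inv_pow, inv_inv]
    rw [h5]
    ring

lemma Qop_of_isSemi {l : ℕ} {T : K →ₗ[F'] K} (h : IsSemi F' F K l T) :
    Qop F' F K l T = T := by
  apply LinearMap.ext; intro y
  rw [Qop_apply]
  have hterm : ∀ c ∈ (Finset.univ : Finset Fˣ),
      ((algebraMap F K (c : F)) ^ (Fintype.card F') ^ l)⁻¹
        * T (algebraMap F K (c : F) * y) = T y := by
    intro c _
    rw [h, ← mul_assoc, inv_mul_cancel₀, one_mul]
    exact pow_ne_zero _ (algebraMap_units_ne_zero c)
  rw [Finset.sum_congr rfl hterm, Finset.sum_const, Finset.card_univ, Fintype.card_units,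
    nsmul_eq_mul]
  have hc0 : ((Fintype.card F : ℕ) : K) = 0 := by
    rw [← map_natCast (algebraMap F K), FiniteField.cast_card_eq_zero, map_zero]
  have h1 : (1 : ℕ) ≤ Fintype.card F := Fintype.card_pos
  rw [Nat.cast_sub h1, hc0, Nat.cast_one]
  ring

lemma Qop_of_isSemi_ne {l l' : ℕ} {T : K →ₗ[F'] K} (h : IsSemi F' F K l' T)
    (hne : l ≠ l') (hl : l < finrank F' F) (hl' : l' < finrank F' F) :
    Qop F' F K l T = 0 := by
  apply LinearMap.ext; intro y
  rw [Qop_apply, LinearMap.zero_apply]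
  have hterm : ∀ c ∈ (Finset.univ : Finset Fˣ),
      ((algebraMap F K (c : F)) ^ (Fintype.card F') ^ l)⁻¹
        * T (algebraMap F K (c : F) * y)
      = algebraMap F K ((c : F) ^ (Fintype.card F') ^ l'
          * (((c : F) ^ (Fintype.card F') ^ l)⁻¹)) * T y := by
    intro c _
    rw [h, map_mul, map_inv₀, map_pow, map_pow]
    ring
  rw [Finset.sum_congr rfl hterm, ← Finset.sum_mul, ← map_sum,
    sum_units_twist_eq_zero (exists_units_pow_ne hne hl hl'), map_zero, zero_mul, neg_zero]

end BRK

end Part2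

section Part3

open Module Polynomial

namespace BRK

variable {F' F K : Type} [Field F'] [Field F] [Field K]
  [Algebra F' F] [Algebra F K] [Algebra F' K] [IsScalarTower F' F K]
  [Fintype F'] [Fintype F] [Fintype K] [DecidableEq F]

lemma qpoly_coeff_zero {c : Fin (finrank F' K) → K}
    (h : ∀ y : K, ∑ i, c i * y ^ (Fintype.card F') ^ (i : ℕ) = 0) : c = 0 := by
  classical
  set P : K[X] := ∑ i : Fin (finrank F' K), C (c i) * X ^ ((Fintype.card F') ^ (i : ℕ))
    with hP
  have hq2 : 2 ≤ Fintype.card F' := Fintype.one_lt_card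
  have hdK : 1 ≤ finrank F' K := finrank_pos
  have hP0 : P = 0 := by
    apply eq_zero_of_natDegree_lt_card_of_eval_eq_zero' P Finset.univ
    · intro y _
      rw [hP, eval_finset_sum]
      simpa using h y
    · have hdeg : P.natDegree ≤ (Fintype.card F') ^ (finrank F' K - 1) := by
        rw [hP]
        refine le_trans (natDegree_sum_le _ _) ?_
        rw [Finset.fold_max_le]
        constructor
        · positivity
        · intro i _
          refine le_trans (natDegree_C_mul_X_pow_le _ _) ?_
          exact Nat.pow_le_pow_right (by omega) (by omega)
      have hlt : (Fintype.card F') ^ (finrank F' K - 1) < Fintype.card K := by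
        rw [card_eq_pow_finrank (K := F') (V := K)]
        exact Nat.pow_lt_pow_right (by omega) (by omega)
      calc P.natDegree ≤ (Fintype.card F') ^ (finrank F' K - 1) := hdeg
        _ < Fintype.card K := hlt
        _ = Finset.univ.card := (Finset.card_univ).symm
  funext i
  have hco : P.coeff ((Fintype.card F') ^ (i : ℕ)) = c i := by
    rw [hP, finset_sum_coeff]
    rw [Finset.sum_eq_single i]
    · rw [coeff_C_mul, coeff_X_pow, if_pos rfl, mul_one]
    · intro j _ hji
      rw [coeff_C_mul, coeff_X_pow, if_neg, mul_zero]
      intro hexp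
      exact hji (Fin.ext (Nat.pow_right_injective hq2 hexp.symm))
    · intro hi
      exact absurd (Finset.mem_univ i) hi
  rw [hP0, coeff_zero] at hco
  simp [← hco]

lemma exists_qpoly (T : K →ₗ[F'] K) :
    ∃ c : Fin (finrank F' K) → K,
      T = ∑ i, mulL F' K (c i) ∘ₗ phL F' K (i : ℕ) := by
  classical
  set f : (Fin (finrank F' K) → K) → (K →ₗ[F'] K) :=
    fun c => ∑ i, mulL F' K (c i) ∘ₗ phL F' K (i : ℕ) with hf
  have hfapp : ∀ c y, f c y = ∑ i : Fin (finrank F' K),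
      c i * y ^ (Fintype.card F') ^ (i : ℕ) := by
    intro c y
    rw [hf]
    simp [LinearMap.sum_apply]
  have hinj : Function.Injective f := by
    intro c c' hcc
    have hz : ∀ y : K, ∑ i : Fin (finrank F' K),
        (c i - c' i) * y ^ (Fintype.card F') ^ (i : ℕ) = 0 := by
      intro y
      have := congrArg (fun (T : K →ₗ[F'] K) => T y) hcc
      simp only [hfapp] at this
      rw [← sub_eq_zero] at this
      rw [← this, ← Finset.sum_sub_distrib]
      congr 1
      funext i
      ring
    have := qpoly_coeff_zero hz
    funext i
    have hi := congrFun this i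
    simp only [Pi.zero_apply, sub_eq_zero] at hi
    exact hi
  have hcard : Nonempty ((Fin (finrank F' K) → K) ≃ (K →ₗ[F'] K)) := by
    refine ⟨(LinearEquiv.ofFinrankEq (R := F') _ _ ?_).toEquiv⟩
    rw [Module.finrank_pi_fintype, Module.finrank_linearMap]
    simp [Finset.sum_const]
  obtain ⟨e⟩ := hcard
  have hsurj : Function.Surjective f :=
    (Finite.injective_iff_surjective_of_equiv e).mp hinj
  obtain ⟨c, hc⟩ := hsurj T
  exact ⟨c, hc.symm⟩

lemma isSemi_mulL_phL (c : K) (i : ℕ) :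
    IsSemi F' F K (i % finrank F' F) (mulL F' K c ∘ₗ phL F' K i) := by
  intro a y
  simp only [LinearMap.comp_apply, mulL_apply, phL_apply]
  rw [mul_pow, ← map_pow, ← map_pow, ← pow_qpow_mod]
  ring

lemma Qop_sum {ι : Type} (l : ℕ) (s : Finset ι) (f : ι → (K →ₗ[F'] K)) :
    Qop F' F K l (∑ i ∈ s, f i) = ∑ i ∈ s, Qop F' F K l (f i) := by
  classical
  induction s using Finset.induction with
  | empty => simp [Qop_zero]
  | insert _ _ hx ih =>
    rw [Finset.sum_insert hx, Finset.sum_insert hx, Qop_add, ih]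

/-- The key decomposition: every `F'`-linear map is the sum of its `F`-semilinear parts. -/
lemma sum_Qop_eq (T : K →ₗ[F'] K) :
    ∑ l ∈ Finset.range (finrank F' F), Qop F' F K l T = T := by
  obtain ⟨c, rfl⟩ := exists_qpoly T
  have ht' : 1 ≤ finrank F' F := finrank_pos
  rw [Finset.sum_congr rfl (fun l _ => Qop_sum l Finset.univ _), Finset.sum_comm]
  apply Finset.sum_congr rfl
  intro i _
  rw [Finset.sum_eq_single_of_mem ((i : ℕ) % finrank F' F)
    (Finset.mem_range.mpr (Nat.mod_lt _ (by omega)))]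
  · exact Qop_of_isSemi (isSemi_mulL_phL (c i) (i : ℕ))
  · intro l hl hlne
    exact Qop_of_isSemi_ne (isSemi_mulL_phL (c i) (i : ℕ)) hlne
      (Finset.mem_range.mp hl) (Nat.mod_lt _ (by omega))

/-- Composition with an `F`-linear map on the left and a multiplication on the right
preserves semilinearity type. -/
lemma isSemi_comp (R : K →ₗ[F] K) {l : ℕ} {T : K →ₗ[F'] K}
    (hT : IsSemi F' F K l T) (e : K) :
    IsSemi F' F K l ((R.restrictScalars F') ∘ₗ T ∘ₗ mulL F' K e) := by
  intro a y
  simp only [LinearMap.comp_apply, mulL_apply, LinearMap.coe_restrictScalars]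
  have h1 : e * (algebraMap F K a * y) = algebraMap F K a * (e * y) := by ring
  rw [h1, hT]
  have h2 : (algebraMap F K a) ^ (Fintype.card F') ^ l
      = algebraMap F K (a ^ (Fintype.card F') ^ l) := by rw [map_pow]
  rw [h2, ← Algebra.smul_def, map_smul, Algebra.smul_def]

/-- Twisting a `φ^l`-semilinear map by `φ^{-l}` yields an `F`-linear map. -/
lemma isSemi_phInv_comp {l : ℕ} {T : K →ₗ[F'] K} (hT : IsSemi F' F K l T) :
    IsSemi F' F K 0 (T ∘ₗ phInv F' K l) := by
  intro a y
  simp only [LinearMap.comp_apply]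
  rw [phInv_mul]
  have h1 : phInv F' K l (algebraMap F K a)
      = algebraMap F K (a ^ (Fintype.card F') ^ (l * (finrank F' K - 1))) := by
    simp only [phInv, phL_apply, map_pow]
  rw [h1, hT]
  congr 1
  rw [map_pow, ← pow_mul, ← pow_add]
  have harr : l * (finrank F' K - 1) + l = finrank F' K * l := by
    cases' Nat.exists_eq_add_of_le (dK_pos F' K) with d hd
    rw [hd, Nat.add_sub_cancel_left]
    ring
  rw [harr, pow_mul, ← card_eq_pow_finrank (K := F') (V := K),
    FiniteField.pow_card_pow, pow_zero, pow_one]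

lemma isSemi_zero_def {T : K →ₗ[F'] K} (h : IsSemi F' F K 0 T) :
    ∀ (a : F) (y : K), T (algebraMap F K a * y) = algebraMap F K a * T y := by
  intro a y
  have := h a y
  rwa [pow_zero, pow_one] at this

/-- Bundle an `IsSemi 0` map as an `F`-linear map. -/
def ofSemi0 (T : K →ₗ[F'] K) (h : IsSemi F' F K 0 T) : K →ₗ[F] K where
  toFun := T
  map_add' := T.map_add
  map_smul' a z := by
    simp only [RingHom.id_apply, Algebra.smul_def]
    have := h a z
    rwa [pow_zero, pow_one] at this

@[simp] lemma ofSemi0_apply (T : K →ₗ[F'] K) (h : IsSemi F' F K 0 T) (y : K) :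
    ofSemi0 T h y = T y := rfl

end BRK

end Part3

section Part4

open Module

namespace BRK

variable {F' K : Type} [Field F'] [Field K] [Algebra F' K] [Fintype F'] [Fintype K]

/-- Counting argument: if the joint map is surjective, some choice of scalars gives an
injective combination. -/
lemma exists_good_scalars {t : ℕ} (C : Fin t → (K →ₗ[F'] K))
    (hsurj : Function.Surjective (fun z : Fin t → K => ∑ l, C l (z l))) :
    ∃ c : Fin t → K, ∀ x : K, x ≠ 0 → ∑ l, C l (c l * x) ≠ 0 := by
  classical
  have ht : 1 ≤ t := by
    by_contra h
    have ht0 : t = 0 := by omega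
    subst ht0
    obtain ⟨z, hz⟩ := hsurj 1
    simp at hz
  set q := Fintype.card K with hq
  have hq2 : 2 ≤ q := Fintype.one_lt_card
  set ψ : K → ((Fin t → K) →ₗ[F'] K) := fun x =>
    { toFun := fun c => ∑ l, C l (c l * x)
      map_add' := by
        intro c c'
        rw [← Finset.sum_add_distrib]
        congr 1
        funext l
        rw [Pi.add_apply, add_mul, map_add]
      map_smul' := by
        intro a c
        rw [RingHom.id_apply, Finset.smul_sum]
        congr 1
        funext l
        rw [Pi.smul_apply, smul_mul_assoc, map_smul] } with hψ
  have hψapp : ∀ x c, ψ x c = ∑ l, C l (c l * x) := fun x c => rfl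
  have hψsurj : ∀ x : K, x ≠ 0 → Function.Surjective (ψ x) := by
    intro x hx y
    obtain ⟨z, hz⟩ := hsurj y
    refine ⟨fun l => z l * x⁻¹, ?_⟩
    rw [hψapp, ← hz]
    congr 1
    funext l
    congr 1
    field_simp
  have hcardfun : Nat.card (Fin t → K) = q ^ t := by
    rw [Nat.card_eq_fintype_card, Fintype.card_fun]
    simp [hq]
  have hker : ∀ x : K, x ≠ 0 →
      (Finset.univ.filter (fun c : Fin t → K => c ∈ LinearMap.ker (ψ x))).card = q ^ (t - 1) := by
    intro x hx
    have h1 := Submodule.card_eq_card_quotient_mul_card (LinearMap.ker (ψ x))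
    have h2 : Nat.card ((Fin t → K) ⧸ LinearMap.ker (ψ x)) = q := by
      rw [Nat.card_congr ((ψ x).quotKerEquivOfSurjective (hψsurj x hx)).toEquiv,
        Nat.card_eq_fintype_card]
    rw [h2, hcardfun] at h1
    have h3 : Nat.card (LinearMap.ker (ψ x))
        = (Finset.univ.filter (fun c : Fin t → K => c ∈ LinearMap.ker (ψ x))).card := by
      rw [Nat.card_eq_fintype_card, Fintype.card_subtype]
    rw [h3] at h1
    have h5 : q ^ t = q * q ^ (t - 1) := by
      rw [← pow_succ']
      congr 1
      omega
    rw [h5] at h1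
    have h6 : (Finset.univ.filter (fun c : Fin t → K => c ∈ LinearMap.ker (ψ x))).card * q
        = q ^ (t - 1) * q := by
      rw [← h1]
      ring
    exact Nat.eq_of_mul_eq_mul_right (show 0 < q by omega) h6
  set Bad : Finset (Fin t → K) :=
    (Finset.univ.filter (fun x : K => x ≠ 0)).biUnion
      (fun x => Finset.univ.filter (fun c : Fin t → K => c ∈ LinearMap.ker (ψ x))) with hBad
  have hcard0 : (Finset.univ.filter (fun x : K => x ≠ 0)).card = q - 1 := by
    rw [Finset.filter_ne', Finset.card_erase_of_mem (Finset.mem_univ 0), Finset.card_univ]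
  have hBadcard : Bad.card ≤ (q - 1) * q ^ (t - 1) := by
    refine le_trans Finset.card_biUnion_le ?_
    rw [Finset.sum_congr rfl (fun x hx => hker x (by simpa using hx)),
      Finset.sum_const, smul_eq_mul, hcard0]
  have hlt : Bad.card < Fintype.card (Fin t → K) := by
    have hc2 : Fintype.card (Fin t → K) = q ^ t := by
      rw [Fintype.card_fun]
      simp [hq]
    rw [hc2]
    calc Bad.card ≤ (q - 1) * q ^ (t - 1) := hBadcard
      _ < q * q ^ (t - 1) := by
          have hp : 0 < q ^ (t - 1) := pow_pos (by omega) _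
          exact (Nat.mul_lt_mul_right hp).mpr (by omega)
      _ = q ^ t := by
          rw [← pow_succ']
          congr 1
          omega
  obtain ⟨c, hcmem⟩ : ∃ c : Fin t → K, c ∉ Bad := by
    by_contra h
    push_neg at h
    have heq : Bad = Finset.univ := Finset.eq_univ_iff_forall.mpr h
    rw [heq, Finset.card_univ] at hlt
    exact lt_irrefl _ hlt
  refine ⟨c, fun x hx hzero => hcmem ?_⟩
  rw [hBad]
  apply Finset.mem_biUnion.mpr
  refine ⟨x, by simp [hx], by simp [LinearMap.mem_ker, hψapp, hzero]⟩

end BRK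

end Part4

section Part5

open Module

namespace BRK

variable {F' F K : Type} [Field F'] [Field F] [Field K]
  [Algebra F' F] [Algebra F K] [Algebra F' K] [IsScalarTower F' F K]
  [Fintype F'] [Fintype F] [Fintype K]

set_option maxHeartbeats 2000000 in
theorem hard (S : K →ₗ[F] K →ₗ[F] K) (r : ℕ)
    (h : r ∈ brkSet F' K (fun x y => S x y)) :
    r ∈ brkSet F K (fun x y => S x y) := by
  classical
  obtain ⟨S', f, g, ⟨Fm, Gm, Hm, hiso⟩, hrep⟩ := h
  set t' := finrank F' F with ht'
  have ht'1 : 1 ≤ t' := finrank_pos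
  set Sres : K → (K →ₗ[F'] K) := fun x => (S x).restrictScalars F' with hSres
  set Btil : K →ₗ[F'] K := Gm.symm.toLinearMap with hBtil
  set RB : K → (K →ₗ[F'] K) := fun x => Sres x ∘ₗ Btil with hRB
  set Gop : Fin r → (K →ₗ[F'] K) := fun i => Hm.symm.toLinearMap ∘ₗ (g i).restrictScalars F'
    with hGop
  set m : Fin r → K → K := fun i x => f i (Fm x) with hm
  have hsm : ∀ (a : F) (z : K), a • z = algebraMap F K a * z := fun a z => Algebra.smul_def a z
  have hSmul : ∀ (a : F) (x z : K), algebraMap F K a * S x z = S (a • x) z := by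
    intro a x z
    rw [← hsm, ← LinearMap.smul_apply, ← map_smul]
  have hSmul2 : ∀ (a : F) (x z : K), S x (algebraMap F K a * z) = algebraMap F K a * S x z := by
    intro a x z
    rw [← hsm, map_smul, hsm]
  -- Key identity
  have KI : ∀ x z : K, RB x z = ∑ i, Gop i (m i x * z) := by
    intro x z
    have h1 := hiso x (Gm.symm z)
    rw [LinearEquiv.apply_symm_apply, hrep] at h1
    have h2 : S x (Gm.symm z) = Hm.symm (∑ i, g i (f i (Fm x) * z)) := by
      rw [h1, LinearEquiv.symm_apply_apply]
    have h3 : RB x z = S x (Gm.symm z) := rfl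
    rw [h3, h2, map_sum]
    rfl
  -- the module M
  set M : Submodule K (Ew F' K) := Submodule.span K (Set.range fun x : K => ofL F' K (RB x))
    with hM
  have hgen : ∀ x : K, ofL F' K (RB x) ∈ M := fun x => Submodule.subset_span ⟨x, rfl⟩
  -- closure of M under S-left-Qop compositions
  have hRQM : ∀ (x : K) (l : ℕ) (e : K),
      ofL F' K (Sres x ∘ₗ (Qop F' F K l Btil) ∘ₗ mulL F' K e) ∈ M := by
    intro x l e
    have hexp : ofL F' K (Sres x ∘ₗ (Qop F' F K l Btil) ∘ₗ mulL F' K e)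
        = - ∑ c : Fˣ, (algebraMap F K (c : F) * e) •
            ofL F' K (RB ((((c : F) ^ (Fintype.card F') ^ l)⁻¹) • x)) := by
      apply ewExt
      intro y
      simp only [toL_ofL, toL_neg, toL_sum, toL_smul, LinearMap.comp_apply, mulL_apply,
        Qop_apply, map_neg, map_sum]
      congr 1
      apply Finset.sum_congr rfl
      intro c _
      have h1 : ((algebraMap F K (c : F)) ^ (Fintype.card F') ^ l)⁻¹
          = algebraMap F K ((((c : F)) ^ (Fintype.card F') ^ l)⁻¹) := by
        rw [map_inv₀, map_pow]
      have h2 : algebraMap F K (c : F) * (e * y) = algebraMap F K (c : F) * e * y := by ring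
      show S x (((algebraMap F K (c : F)) ^ (Fintype.card F') ^ l)⁻¹
          * Btil (algebraMap F K (c : F) * (e * y)))
        = S ((((c : F)) ^ (Fintype.card F') ^ l)⁻¹ • x)
            (Btil (algebraMap F K (c : F) * e * y))
      rw [h2, h1, hSmul2, hSmul]
    rw [hexp]
    exact Submodule.neg_mem _ (Submodule.sum_mem _ (fun c _ =>
      Submodule.smul_mem _ _ (hgen _)))
  -- closure of M under Qop
  have hQM : ∀ (T : Ew F' K), T ∈ M → ∀ l : ℕ, ofL F' K (Qop F' F K l (toL F' K T)) ∈ M := by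
    intro T hT l
    induction hT using Submodule.span_induction with
    | mem T hTmem =>
      obtain ⟨x, rfl⟩ := hTmem
      have hexp : ofL F' K (Qop F' F K l (toL F' K (ofL F' K (RB x))))
          = - ∑ c : Fˣ, (algebraMap F K (c : F)) •
              ofL F' K (RB ((((c : F) ^ (Fintype.card F') ^ l)⁻¹) • x)) := by
        apply ewExt
        intro y
        simp only [toL_ofL, toL_neg, toL_sum, toL_smul, Qop_apply]
        congr 1
        apply Finset.sum_congr rfl
        intro c _
        have h1 : ((algebraMap F K (c : F)) ^ (Fintype.card F') ^ l)⁻¹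
            = algebraMap F K ((((c : F)) ^ (Fintype.card F') ^ l)⁻¹) := by
          rw [map_inv₀, map_pow]
        show ((algebraMap F K (c : F)) ^ (Fintype.card F') ^ l)⁻¹
            * S x (Btil (algebraMap F K (c : F) * y))
          = S ((((c : F)) ^ (Fintype.card F') ^ l)⁻¹ • x)
              (Btil (algebraMap F K (c : F) * y))
        rw [h1, hSmul]
      rw [hexp]
      exact Submodule.neg_mem _ (Submodule.sum_mem _ (fun c _ =>
        Submodule.smul_mem _ _ (hgen _)))
    | zero =>
      have : toL F' K (0 : Ew F' K) = 0 := rfl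
      rw [this, Qop_zero]
      exact M.zero_mem
    | add T1 T2 h1 h2 ih1 ih2 =>
      have : toL F' K (T1 + T2) = toL F' K T1 + toL F' K T2 := rfl
      rw [this, Qop_add]
      exact M.add_mem ih1 ih2
    | smul c T1 h1 ih1 =>
      have : toL F' K (c • T1) = toL F' K T1 ∘ₗ mulL F' K c := rfl
      rw [this, Qop_comp_mulL]
      exact M.smul_mem c ih1
  -- the semilinear components of Btil and their F-linear twists
  set Bl : ℕ → (K →ₗ[F'] K) := fun l => Qop F' F K l Btil with hBl
  have hBsum : ∑ l ∈ Finset.range t', Bl l = Btil := sum_Qop_eq Btil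
  set CL : ℕ → (K →ₗ[F'] K) := fun l => Bl l ∘ₗ phInv F' K l with hCL
  have hCsurj : Function.Surjective
      (fun z : Fin t' → K => ∑ l : Fin t', (CL (l : ℕ)) (z l)) := by
    intro y
    refine ⟨fun l => phL F' K (l : ℕ) (Gm y), ?_⟩
    have hterm : ∀ l : Fin t', CL (l : ℕ) (phL F' K (l : ℕ) (Gm y)) = Bl (l : ℕ) (Gm y) := by
      intro l
      rw [hCL]
      simp only [LinearMap.comp_apply]
      rw [phL_phInv]
    show ∑ l : Fin t', (CL (l : ℕ)) (phL F' K (l : ℕ) (Gm y)) = y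
    rw [Finset.sum_congr rfl (fun l _ => hterm l),
      Fin.sum_univ_eq_sum_range (fun l => Bl l (Gm y)) t']
    have h2 : ∑ l ∈ Finset.range t', Bl l (Gm y) = Btil (Gm y) := by
      rw [← hBsum, LinearMap.sum_apply]
    rw [h2, hBtil]
    exact Gm.symm_apply_apply y
  obtain ⟨cc0, hcc0⟩ := exists_good_scalars (fun l : Fin t' => CL (l : ℕ)) hCsurj
  set cc : ℕ → K := fun l => if h : l < t' then cc0 ⟨l, h⟩ else 0 with hcc
  have hccag : ∀ l : Fin t', cc (l : ℕ) = cc0 l := by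
    intro l
    rw [hcc]
    simp [l.isLt]
  -- B'' as F'-linear map
  set B2 : K →ₗ[F'] K := ∑ l ∈ Finset.range t', CL l ∘ₗ mulL F' K (cc l) with hB2
  have hB2app : ∀ y, B2 y = ∑ l ∈ Finset.range t', CL l (cc l * y) := by
    intro y
    rw [hB2, LinearMap.sum_apply]
    rfl
  have hB2inj : ∀ y, y ≠ 0 → B2 y ≠ 0 := by
    intro y hy
    rw [hB2app]
    have := hcc0 y hy
    rw [← Fin.sum_univ_eq_sum_range (fun l => CL l (cc l * y)) t']
    rw [Finset.sum_congr rfl (fun l (_ : l ∈ Finset.univ) => by rw [hccag l])]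
    exact this
  have hCLsemi : ∀ l : ℕ, IsSemi F' F K 0 (CL l) := fun l =>
    isSemi_phInv_comp (isSemi_Qop l Btil)
  have hB2semi : IsSemi F' F K 0 B2 := by
    intro a y
    rw [hB2app, hB2app, pow_zero, pow_one, Finset.mul_sum]
    apply Finset.sum_congr rfl
    intro l _
    have h1 : cc l * (algebraMap F K a * y) = algebraMap F K a * (cc l * y) := by ring
    rw [h1]
    exact isSemi_zero_def (hCLsemi l) a (cc l * y)
  set B2F : K →ₗ[F] K := ofSemi0 B2 hB2semi with hB2F
  have hB2Fbij : Function.Bijective B2F := by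
    have hinj : Function.Injective B2F := by
      intro y y' hyy
      by_contra hne
      have h1 : B2F (y - y') = 0 := by rw [map_sub, hyy, sub_self]
      have h2 : B2 (y - y') = 0 := h1
      exact hB2inj (y - y') (sub_ne_zero_of_ne hne) h2
    exact ⟨hinj, LinearMap.injective_iff_surjective.mp hinj⟩
  -- the submodule N
  set θ : Ew F' K → Ew F' K := fun T =>
    ∑ l ∈ Finset.range t', ofL F' K ((Qop F' F K l (toL F' K T)) ∘ₗ phInv F' K l) with hθ
  have hθ0 : θ 0 = 0 := by
    rw [hθ]
    simp only
    rw [Finset.sum_eq_zero]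
    intro l _
    have : toL F' K (0 : Ew F' K) = 0 := rfl
    rw [this, Qop_zero, LinearMap.zero_comp]
    rfl
  have hθadd : ∀ T T', θ (T + T') = θ T + θ T' := by
    intro T T'
    rw [hθ]
    simp only
    rw [← Finset.sum_add_distrib]
    apply Finset.sum_congr rfl
    intro l _
    have : toL F' K (T + T') = toL F' K T + toL F' K T' := rfl
    rw [this, Qop_add, LinearMap.add_comp]
    rfl
  -- Qop of theta-friendly sums
  have hQQ : ∀ (l l' : ℕ), l ∈ Finset.range t' → l' ∈ Finset.range t' →
      ∀ (X : K →ₗ[F'] K), IsSemi F' F K l' X →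
      Qop F' F K l X = if l = l' then X else 0 := by
    intro l l' hl hl' X hX
    by_cases hll : l = l'
    · subst hll
      rw [if_pos rfl]
      exact Qop_of_isSemi hX
    · rw [if_neg hll]
      exact Qop_of_isSemi_ne hX hll (Finset.mem_range.mp hl) (Finset.mem_range.mp hl')
  have hθsmul : ∀ (c : K) (T : Ew F' K), T ∈ M → ∃ T' ∈ M, θ T' = c • θ T := by
    intro c T hT
    refine ⟨∑ l' ∈ Finset.range t',
      (phInv F' K l' c) • ofL F' K (Qop F' F K l' (toL F' K T)), ?_, ?_⟩
    · exact Submodule.sum_mem _ (fun l' _ => Submodule.smul_mem _ _ (hQM T hT l'))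
    · rw [hθ]
      simp only
      rw [Finset.smul_sum]
      apply Finset.sum_congr rfl
      intro l hl
      have htoL : toL F' K (∑ l' ∈ Finset.range t',
          (phInv F' K l' c) • ofL F' K (Qop F' F K l' (toL F' K T)))
        = ∑ l' ∈ Finset.range t',
            (Qop F' F K l' (toL F' K T)) ∘ₗ mulL F' K (phInv F' K l' c) := by
        apply LinearMap.ext
        intro y
        rw [toL_sum, LinearMap.sum_apply]
        rfl
      rw [htoL, Qop_sum]
      have hterm : ∀ l' ∈ Finset.range t',
          Qop F' F K l ((Qop F' F K l' (toL F' K T)) ∘ₗ mulL F' K (phInv F' K l' c))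
          = if l = l' then (Qop F' F K l (toL F' K T)) ∘ₗ mulL F' K (phInv F' K l c)
            else 0 := by
        intro l' hl'
        rw [Qop_comp_mulL]
        rw [hQQ l l' hl hl' _ (isSemi_Qop l' (toL F' K T))]
        by_cases hll : l = l'
        · subst hll
          simp
        · simp [hll]
      rw [Finset.sum_congr rfl hterm, Finset.sum_ite_eq, if_pos hl]
      apply ewExt
      intro y
      show Qop F' F K l (toL F' K T) (phInv F' K l c * phInv F' K l y)
        = Qop F' F K l (toL F' K T) (phInv F' K l (c * y))
      rw [phInv_mul]
  set N : Submodule K (Ew F' K) :=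
    { carrier := θ '' (M : Set (Ew F' K)),
      add_mem' := by
        rintro a b ⟨T1, h1, rfl⟩ ⟨T2, h2, rfl⟩
        exact ⟨T1 + T2, M.add_mem h1 h2, hθadd T1 T2⟩
      zero_mem' := ⟨0, M.zero_mem, hθ0⟩
      smul_mem' := by
        rintro c a ⟨T, hT, rfl⟩
        obtain ⟨T', hT', hTeq⟩ := hθsmul c T hT
        exact ⟨T', hT', hTeq⟩ } with hN
  -- membership of the final operators in N
  have memN : ∀ x : K, ofL F' K (Sres x ∘ₗ B2) ∈ N := by
    intro x
    refine ⟨∑ l ∈ Finset.range t',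
      ofL F' K (Sres x ∘ₗ Bl l ∘ₗ mulL F' K (phInv F' K l (cc l))), ?_, ?_⟩
    · exact Submodule.sum_mem _ (fun l _ => hRQM x l _)
    · rw [hθ]
      simp only
      have htoL2 : toL F' K (∑ l' ∈ Finset.range t',
          ofL F' K (Sres x ∘ₗ Bl l' ∘ₗ mulL F' K (phInv F' K l' (cc l'))))
        = ∑ l' ∈ Finset.range t',
            (Sres x ∘ₗ Bl l' ∘ₗ mulL F' K (phInv F' K l' (cc l'))) := by
        apply LinearMap.ext
        intro y
        rw [toL_sum, LinearMap.sum_apply]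
        rfl
      have hsemi : ∀ l' : ℕ, IsSemi F' F K l'
          (Sres x ∘ₗ Bl l' ∘ₗ mulL F' K (phInv F' K l' (cc l'))) := by
        intro l'
        rw [hSres, hBl]
        exact isSemi_comp (S x) (isSemi_Qop l' Btil) _
      have hcomp : ∀ l ∈ Finset.range t',
          ofL F' K ((Qop F' F K l (toL F' K (∑ l' ∈ Finset.range t',
            ofL F' K (Sres x ∘ₗ Bl l' ∘ₗ mulL F' K (phInv F' K l' (cc l')))))) ∘ₗ
              phInv F' K l)
          = ofL F' K ((Sres x ∘ₗ Bl l ∘ₗ mulL F' K (phInv F' K l (cc l))) ∘ₗ phInv F' K l) := by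
        intro l hl
        rw [htoL2, Qop_sum]
        have hterm2 : ∀ l' ∈ Finset.range t',
            Qop F' F K l (Sres x ∘ₗ Bl l' ∘ₗ mulL F' K (phInv F' K l' (cc l')))
            = if l = l' then Sres x ∘ₗ Bl l ∘ₗ mulL F' K (phInv F' K l (cc l)) else 0 := by
          intro l' hl'
          rw [hQQ l l' hl hl' _ (hsemi l')]
          by_cases hll : l = l'
          · subst hll
            simp
          · simp [hll]
        rw [Finset.sum_congr rfl hterm2, Finset.sum_ite_eq, if_pos hl]
      rw [Finset.sum_congr rfl hcomp]
      apply ewExt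
      intro y
      rw [toL_sum, toL_ofL]
      have hRHS : ∀ l ∈ Finset.range t',
          toL F' K (ofL F' K ((Sres x ∘ₗ Bl l ∘ₗ mulL F' K (phInv F' K l (cc l))) ∘ₗ
            phInv F' K l)) y
          = Sres x (Bl l (phInv F' K l (cc l * y))) := by
        intro l _
        rw [toL_ofL]
        show Sres x (Bl l (phInv F' K l (cc l) * phInv F' K l y)) = _
        rw [← phInv_mul]
      rw [Finset.sum_congr rfl hRHS]
      show ∑ l ∈ Finset.range t', Sres x (Bl l (phInv F' K l (cc l * y)))
        = Sres x (B2 y)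
      rw [hB2app, map_sum]
      apply Finset.sum_congr rfl
      intro l _
      congr 1
  -- cardinality bounds
  haveI : Finite (Ew F' K) := by
    have h1 : Finite (K → K) := by infer_instance
    exact Finite.of_injective (fun T : Ew F' K => (toL F' K T : K → K))
      (fun T T' hTT => ewExt F' K (fun y => congrFun hTT y))
  have hMM0 : M ≤ Submodule.span K (Set.range fun i : Fin r => ofL F' K (Gop i)) := by
    rw [hM, Submodule.span_le]
    rintro a ⟨x, rfl⟩
    show ofL F' K (RB x) ∈ _
    have hx : ofL F' K (RB x) = ∑ i, (m i x) • ofL F' K (Gop i) := by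
      apply ewExt
      intro y
      rw [toL_sum]
      simp only [toL_smul, toL_ofL]
      exact KI x y
    rw [hx]
    exact Submodule.sum_mem _ (fun i _ => Submodule.smul_mem _ _
      (Submodule.subset_span ⟨i, rfl⟩))
  have hcardM0 : Nat.card (Submodule.span K (Set.range fun i : Fin r => ofL F' K (Gop i)))
      ≤ Fintype.card K ^ r := by
    have hsurj2 : Function.Surjective (fun a : Fin r → K =>
        (⟨∑ i, a i • ofL F' K (Gop i), Submodule.sum_mem _ (fun i _ =>
          Submodule.smul_mem _ _ (Submodule.subset_span ⟨i, rfl⟩))⟩ :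
          Submodule.span K (Set.range fun i : Fin r => ofL F' K (Gop i)))) := by
      rintro ⟨v, hv⟩
      obtain ⟨a, ha⟩ := (Submodule.mem_span_range_iff_exists_fun K).mp hv
      exact ⟨a, Subtype.ext ha⟩
    have h3 := Nat.card_le_card_of_surjective _ hsurj2
    have h4 : Nat.card (Fin r → K) = Fintype.card K ^ r := by
      rw [Nat.card_eq_fintype_card, Fintype.card_fun]
      simp
    omega
  have hcardN : Nat.card N ≤ Fintype.card K ^ r := by
    have h1 : Nat.card N = Nat.card (θ '' (M : Set (Ew F' K))) := rfl
    have h2 : Nat.card (θ '' (M : Set (Ew F' K))) ≤ Nat.card (M : Set (Ew F' K)) :=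
      Nat.card_image_le (Set.toFinite _)
    have h3 : Nat.card (M : Set (Ew F' K)) ≤
        Nat.card (Submodule.span K (Set.range fun i : Fin r => ofL F' K (Gop i))) := by
      apply Nat.card_mono (Set.toFinite _)
      exact hMM0
    omega
  -- all elements of N are F-linear
  have hNsemi : ∀ T : Ew F' K, T ∈ N → IsSemi F' F K 0 (toL F' K T) := by
    rintro a ⟨T, hT, rfl⟩
    intro b y
    rw [hθ]
    simp only
    rw [toL_sum, toL_sum, Finset.mul_sum]
    apply Finset.sum_congr rfl
    intro l _
    rw [toL_ofL]
    exact isSemi_phInv_comp (isSemi_Qop l (toL F' K T)) b y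
  -- basis of N
  set ρ := finrank K N with hρ
  have hρr : ρ ≤ r := by
    letI : Fintype N := Fintype.ofFinite _
    have h1 : Fintype.card N = Fintype.card K ^ ρ := card_eq_pow_finrank
    have h2 : Nat.card N = Fintype.card K ^ ρ := by
      rw [Nat.card_eq_fintype_card, h1]
    rw [h2] at hcardN
    exact (Nat.pow_le_pow_iff_right Fintype.one_lt_card).mp hcardN
  set bN := Module.finBasis K N with hbN
  set elt : K → N := fun x => ⟨ofL F' K (Sres x ∘ₗ B2), memN x⟩ with helt
  set w : Fin ρ → K → K := fun k x => bN.repr (elt x) k with hw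
  set v : Fin ρ → Ew F' K := fun k => (bN k : Ew F' K) with hv
  have hvN : ∀ k, v k ∈ N := fun k => (bN k).2
  have hrepr : ∀ x : K, ofL F' K (Sres x ∘ₗ B2) = ∑ k : Fin ρ, (w k x) • v k := by
    intro x
    have h1 := bN.sum_repr (elt x)
    show (((elt x) : N) : Ew F' K) = ∑ k : Fin ρ, (w k x) • v k
    rw [← h1, Submodule.coe_sum]
    exact Finset.sum_congr rfl (fun k _ => rfl)
  -- linearity of coordinates
  have heltadd : ∀ x x' : K, elt (x + x') = elt x + elt x' := by
    intro x x'
    apply Subtype.ext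
    show ofL F' K (Sres (x + x') ∘ₗ B2) = _
    have h1 : (Sres (x + x') ∘ₗ B2) = (Sres x ∘ₗ B2) + (Sres x' ∘ₗ B2) := by
      apply LinearMap.ext
      intro y
      show S (x + x') (B2 y) = S x (B2 y) + S x' (B2 y)
      rw [map_add, LinearMap.add_apply]
    rw [h1]
    rfl
  have heltsmul : ∀ (a : F) (x : K), elt (a • x) = (algebraMap F K a) • elt x := by
    intro a x
    apply Subtype.ext
    show ofL F' K (Sres (a • x) ∘ₗ B2) = _
    have h1 : ((algebraMap F K a) • elt x : N) = ⟨(algebraMap F K a) • (elt x : Ew F' K),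
        N.smul_mem _ (elt x).2⟩ := rfl
    rw [h1]
    apply ewExt
    intro y
    show S (a • x) (B2 y) = S x (B2 (algebraMap F K a * y))
    rw [isSemi_zero_def hB2semi a y, hSmul2, hSmul]
  -- final maps
  have hwadd : ∀ (k : Fin ρ) (x x' : K), w k (x + x') = w k x + w k x' := by
    intro k x x'
    rw [hw]
    simp only
    rw [heltadd, bN.repr.map_add]
    rfl
  have hwsmul : ∀ (k : Fin ρ) (a : F) (x : K), w k (a • x) = a • w k x := by
    intro k a x
    rw [hw]
    simp only
    rw [heltsmul, bN.repr.map_smul, hsm]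
    rfl
  set fF : Fin r → (K →ₗ[F] K) := fun k =>
    if hk : (k : ℕ) < ρ then
      { toFun := fun x => w ⟨(k : ℕ), hk⟩ x,
        map_add' := hwadd ⟨(k : ℕ), hk⟩,
        map_smul' := fun a x => hwsmul ⟨(k : ℕ), hk⟩ a x }
    else 0 with hfF
  set gF : Fin r → (K →ₗ[F] K) := fun k =>
    if hk : (k : ℕ) < ρ then ofSemi0 (toL F' K (v ⟨(k : ℕ), hk⟩)) (hNsemi _ (hvN _))
    else 0 with hgF
  -- conclusion
  refine ⟨fun x y => S x (B2 y), fF, gF,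
    ⟨LinearEquiv.refl F K, (LinearEquiv.ofBijective B2F hB2Fbij).symm, LinearEquiv.refl F K,
      ?_⟩, ?_⟩
  · intro x y
    show S x (B2 ((LinearEquiv.ofBijective B2F hB2Fbij).symm y)) = S x y
    have h1 : B2 ((LinearEquiv.ofBijective B2F hB2Fbij).symm y)
        = B2F ((LinearEquiv.ofBijective B2F hB2Fbij).symm y) := rfl
    rw [h1]
    have h2 : B2F ((LinearEquiv.ofBijective B2F hB2Fbij).symm y)
        = (LinearEquiv.ofBijective B2F hB2Fbij) ((LinearEquiv.ofBijective B2F hB2Fbij).symm y) :=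
      rfl
    rw [h2, LinearEquiv.apply_symm_apply]
  · intro x y
    show S x (B2 y) = ∑ k : Fin r, gF k (fF k x * y)
    set H : ℕ → K := fun k =>
      if hk : k < ρ then toL F' K (v ⟨k, hk⟩) (w ⟨k, hk⟩ x * y) else 0 with hH
    have hterm3 : ∀ k : Fin r, gF k (fF k x * y) = H (k : ℕ) := by
      intro k
      by_cases hk : (k : ℕ) < ρ
      · rw [hfF, hgF, hH]
        simp only [dif_pos hk]
        rfl
      · rw [hfF, hgF, hH]
        simp only [dif_neg hk]
        rfl
    rw [Finset.sum_congr rfl (fun k _ => hterm3 k),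
      Fin.sum_univ_eq_sum_range H r]
    have hsubs : ∑ k ∈ Finset.range r, H k = ∑ k ∈ Finset.range ρ, H k := by
      symm
      apply Finset.sum_subset (Finset.range_subset_range.mpr hρr)
      intro k _ hk
      rw [hH]
      simp only
      rw [dif_neg (Finset.mem_range.not.mp hk)]
    rw [hsubs, ← Fin.sum_univ_eq_sum_range H ρ]
    have hterm4 : ∀ k : Fin ρ, H (k : ℕ) = toL F' K (v k) (w k x * y) := by
      intro k
      rw [hH]
      simp only
      rw [dif_pos k.isLt]
    rw [Finset.sum_congr rfl (fun k _ => hterm4 k)]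
    have h5 : S x (B2 y) = toL F' K (ofL F' K (Sres x ∘ₗ B2)) y := rfl
    rw [h5, hrepr x, toL_sum]
    apply Finset.sum_congr rfl
    intro k _
    rw [toL_smul]

end BRK

end Part5

section Part6

namespace BRK

variable {F' F K : Type} [Field F'] [Field F] [Field K]
  [Algebra F' F] [Algebra F K] [Algebra F' K] [IsScalarTower F' F K]

theorem easy (S : K → K → K) (r : ℕ) (h : r ∈ brkSet F K S) : r ∈ brkSet F' K S := by
  obtain ⟨S', f, g, ⟨Fm, Gm, Hm, hiso⟩, hrep⟩ := h
  refine ⟨S', fun i => (f i).restrictScalars F', fun i => (g i).restrictScalars F',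
    ⟨Fm.restrictScalars F', Gm.restrictScalars F', Hm.restrictScalars F',
      fun x y => hiso x y⟩, fun x y => hrep x y⟩

end BRK

end Part6

/-- the BEL-rank of a presemifield over `F_q` equals its BEL-rank computed
over any subfield `F_{q'}` of `F_q`. -/
theorem stmt12 (q' t q n : ℕ) (hq' : IsPrimePow q') (ht : 1 ≤ t) (hqt : q = q' ^ t)
    (hn : 1 ≤ n)
    (F' F K : Type) [Field F'] [Field F] [Field K]
    [Algebra F' F] [Algebra F K] [Algebra F' K] [IsScalarTower F' F K]
    [Fintype F'] [Fintype F] [Fintype K]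
    (hcF' : Fintype.card F' = q') (hcF : Fintype.card F = q)
    (hcK : Fintype.card K = q ^ n)
    (S : K →ₗ[F] K →ₗ[F] K)
    (hpre : ∀ x y : K, S x y = 0 → x = 0 ∨ y = 0) :
    sInf (brkSet F K (fun x y => S x y)) = sInf (brkSet F' K (fun x y => S x y)) := by
  have hset : brkSet F K (fun x y => S x y) = brkSet F' K (fun x y => S x y) := by
    apply Set.Subset.antisymm
    · exact fun r hr => BRK.easy (F := F) _ r hr
    · exact fun r hr => BRK.hard (F' := F') S r hr
  rw [hset]
end
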